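/- arXiv:2005.14365 — 8 statements merged into one kernel-verified Lean document; each statement's English description precedes it below -/
import Mathlib

section
/- Every convenient order is Gorenstein. That is, if K is a CM field and R is an order in K such that (1) R is stable under complex conjugation, (2) the real subring R⁺ = R ∩ K⁺ is a Gorenstein order of K⁺, and (3) the trace dual R† of R is generated as an R-module by its pure imaginary elements, then the trace dual R† is an invertible fractional R-ideal. -/
set_option linter.unusedSectionVars false


open NumberField Polynomial

noncomputable section

/-- The trace dual `R† = {x ∈ F : Tr_{F/ℚ}(x·r) ∈ ℤ for all r ∈ R}` of a subring `R`
of a number field `F`, as an `R`-submodule of `F`. -/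
def traceDual (F : Type*) [Field F] [NumberField F] (R : Subring F) : Submodule R F where
  carrier := {x : F | ∀ r ∈ R, ∃ n : ℤ, Algebra.trace ℚ F (x * r) = (n : ℚ)}
  add_mem' := by
    intro a b ha hb r hr
    obtain ⟨m, hm⟩ := ha r hr
    obtain ⟨k, hk⟩ := hb r hr
    exact ⟨m + k, by rw [add_mul, map_add, hm, hk]; push_cast; ring⟩
  zero_mem' := by
    intro r hr
    exact ⟨0, by simp⟩
  smul_mem' := by
    intro c x hx r hr
    obtain ⟨k, hk⟩ := hx ((c : F) * r) (R.mul_mem c.2 hr)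
    refine ⟨k, ?_⟩
    rw [← hk]
    congr 1
    rw [Subring.smul_def, smul_eq_mul]
    ring

/-- A fractional ideal of an order: a nonzero finitely generated `R`-submodule of `F`. -/
def IsFracIdeal (F : Type*) [Field F] (R : Subring F) (I : Submodule R F) : Prop :=
  I ≠ ⊥ ∧ I.FG

/-- Invertibility of an `R`-submodule of `F`: there is another submodule `J` with `I·J = R`. -/
def IsInvertibleIdeal (F : Type*) [Field F] (R : Subring F) (I : Submodule R F) : Prop :=
  ∃ J : Submodule R F, I * J = 1

/-- An order of a number field `F`: a subring that is finitely generated as a `ℤ`-module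
and contains a `ℚ`-basis of `F`. -/
def IsOrder (F : Type*) [Field F] [NumberField F] (R : Subring F) : Prop :=
  Module.Finite ℤ R ∧ Submodule.span ℚ (R : Set F) = ⊤

/-- A Gorenstein order: the trace dual is an invertible fractional ideal. -/
def IsGorenstein (F : Type*) [Field F] [NumberField F] (R : Subring F) : Prop :=
  IsInvertibleIdeal F R (traceDual F R)

end

noncomputable section LatticeAux

open Submodule

variable {F : Type*} [Field F] [NumberField F]

/-- trace-dual of a `ℤ`-lattice in a number field. -/
abbrev dL (L : Submodule ℤ F) : Submodule ℤ F :=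
  (Algebra.traceForm ℚ F).dualSubmodule L

lemma traceForm_flip' : (Algebra.traceForm ℚ F).flip = Algebra.traceForm ℚ F := by
  ext x y
  simp [Algebra.traceForm_apply, mul_comm]

lemma mem_dL {L : Submodule ℤ F} {x : F} :
    x ∈ dL L ↔ ∀ y ∈ L, ∃ n : ℤ, Algebra.trace ℚ F (x * y) = (n : ℚ) := by
  simp only [LinearMap.BilinForm.mem_dualSubmodule, Submodule.mem_one,
    Algebra.traceForm_apply, eq_comm, algebraMap_int_eq, eq_intCast]

lemma lattice_basis (L : Submodule ℤ F) (hfg : L.FG) (hfull : span ℚ (L : Set F) = ⊤) :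
    ∃ (n : ℕ) (b : Module.Basis (Fin n) ℚ F), L = span ℤ (Set.range b) := by
  haveI : Module.Finite ℤ L := Module.Finite.iff_fg.mpr hfg
  haveI : Module.Free ℤ L := Module.free_of_finite_type_torsion_free'
  let b0 := Module.Free.chooseBasis ℤ L
  let v : _ → F := fun i => (b0 i : F)
  have hrange : Set.range v = L.subtype '' (Set.range b0) := by
    ext x; simp [v]
  have hspan : span ℤ (Set.range v) = L := by
    rw [hrange, ← Submodule.map_span, b0.span_eq, Submodule.map_top, Submodule.range_subtype]
  have hliZ : LinearIndependent ℤ v :=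
    b0.linearIndependent.map' L.subtype (Submodule.ker_subtype L)
  have hli : LinearIndependent ℚ v := (LinearIndependent.iff_fractionRing ℤ ℚ).mp hliZ
  have hsp : ⊤ ≤ span ℚ (Set.range v) := by
    rw [← hfull, Submodule.span_le]
    intro x hx
    rw [← hspan] at hx
    exact Submodule.span_le_restrictScalars ℤ ℚ (Set.range v) hx
  let b1 : Module.Basis _ ℚ F := Module.Basis.mk hli hsp
  refine ⟨Fintype.card _, b1.reindex (Fintype.equivFin _), ?_⟩
  rw [b1.range_reindex]
  rw [show Set.range b1 = Set.range v from congrArg Set.range (Module.Basis.coe_mk hli hsp)]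
  exact hspan.symm

lemma dL_dL (L : Submodule ℤ F) (hfg : L.FG) (hfull : span ℚ (L : Set F) = ⊤) :
    dL (dL L) = L := by
  obtain ⟨n, b, rfl⟩ := lattice_basis L hfg hfull
  have := (Algebra.traceForm ℚ F).dualSubmodule_dualSubmodule_flip_of_basis
    (R := ℤ) (traceForm_nondegenerate ℚ F) b
  rwa [traceForm_flip'] at this

lemma dL_fg (L : Submodule ℤ F) (hfg : L.FG) (hfull : span ℚ (L : Set F) = ⊤) :
    (dL L).FG ∧ span ℚ ((dL L : Submodule ℤ F) : Set F) = ⊤ := by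
  classical
  obtain ⟨n, b, rfl⟩ := lattice_basis L hfg hfull
  have h : dL (span ℤ (Set.range ⇑b)) =
      span ℤ (Set.range <| (Algebra.traceForm ℚ F).dualBasis (traceForm_nondegenerate ℚ F) b) :=
    (Algebra.traceForm ℚ F).dualSubmodule_span_of_basis (R := ℤ) (traceForm_nondegenerate ℚ F) b
  rw [h]
  constructor
  · exact Submodule.fg_span (Set.finite_range _)
  · rw [Submodule.span_span_of_tower]
    exact Module.Basis.span_eq _

end LatticeAux

noncomputable section ColonAux

open Submodule

variable {F : Type*} [Field F] [NumberField F]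

/-- The colon (quotient) of two `ℤ`-submodules of `F`. -/
def myColon (A B : Submodule ℤ F) : Submodule ℤ F where
  carrier := {x | ∀ y ∈ B, x * y ∈ A}
  add_mem' := by
    intro a b ha hb y hy
    rw [add_mul]
    exact A.add_mem (ha y hy) (hb y hy)
  zero_mem' := by
    intro y hy
    rw [zero_mul]
    exact A.zero_mem
  smul_mem' := by
    intro n x hx y hy
    rw [smul_mul_assoc]
    exact A.smul_mem n (hx y hy)

lemma mem_myColon {A B : Submodule ℤ F} {x : F} :
    x ∈ myColon A B ↔ ∀ y ∈ B, x * y ∈ A := Iff.rfl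

lemma myColon_mul_le {A B : Submodule ℤ F} : myColon A B * B ≤ A :=
  Submodule.mul_le.mpr fun _ hm _ hn => hm _ hn

lemma mem_span_singleton_mul' {x y : F} {A : Submodule ℤ F} :
    y ∈ (span ℤ {x} : Submodule ℤ F) * A ↔ ∃ a ∈ A, y = x * a := by
  constructor
  · intro hy
    refine Submodule.mul_induction_on hy ?_ ?_
    · intro m hm n hn
      obtain ⟨k, rfl⟩ := Submodule.mem_span_singleton.mp hm
      exact ⟨k • n, A.smul_mem k hn, by rw [smul_mul_assoc, mul_smul_comm]⟩
    · rintro u v ⟨a, ha, rfl⟩ ⟨b, hb, rfl⟩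
      exact ⟨a + b, A.add_mem ha hb, by ring⟩
  · rintro ⟨a, ha, rfl⟩
    exact Submodule.mul_mem_mul (Submodule.mem_span_singleton_self x) ha

lemma span_singleton_mul_le {x : F} {A B : Submodule ℤ F}
    (h : ∀ a ∈ A, x * a ∈ B) : (span ℤ {x} : Submodule ℤ F) * A ≤ B := by
  intro y hy
  obtain ⟨a, ha, rfl⟩ := mem_span_singleton_mul'.mp hy
  exact h a ha

/-- dual of a product is a colon. -/
lemma dL_mul (A B : Submodule ℤ F) : dL (A * B) = myColon (dL A) B := by
  ext x
  rw [mem_myColon]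
  constructor
  · intro hx b hb
    rw [mem_dL]
    intro a ha
    have := mem_dL.mp hx (a * b) (Submodule.mul_mem_mul ha hb)
    obtain ⟨n, hn⟩ := this
    exact ⟨n, by rw [← hn]; ring_nf⟩
  · intro hx
    rw [mem_dL]
    intro y hy
    refine Submodule.mul_induction_on hy ?_ ?_
    · intro a ha b hb
      obtain ⟨n, hn⟩ := mem_dL.mp (hx b hb) a ha
      exact ⟨n, by rw [← hn]; ring_nf⟩
    · rintro u v ⟨n, hn⟩ ⟨m, hm⟩
      exact ⟨n + m, by rw [mul_add, map_add, hn, hm]; push_cast; ring⟩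

lemma fg_of_le' {C D : Submodule ℤ F} (hD : D.FG) (h : C ≤ D) : C.FG := by
  haveI : IsNoetherian ℤ D := isNoetherian_of_fg_of_noetherian D hD
  have h1 : (C.comap D.subtype).FG := IsNoetherian.noetherian _
  have h2 : (C.comap D.subtype).map D.subtype = C := by
    rw [Submodule.map_comap_subtype]
    exact inf_eq_right.mpr h
  rw [← h2]
  exact Submodule.FG.map _ h1

/-- existence of denominators for elements. -/
lemma exists_denom {L : Submodule ℤ F} (hfull : span ℚ (L : Set F) = ⊤) (x : F) :
    ∃ n : ℤ, n ≠ 0 ∧ (n : F) * x ∈ L := by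
  have hx : x ∈ span ℚ (L : Set F) := hfull ▸ Submodule.mem_top
  induction hx using Submodule.span_induction with
  | mem y hy => exact ⟨1, one_ne_zero, by rw [Int.cast_one, one_mul]; exact hy⟩
  | zero => exact ⟨1, one_ne_zero, by rw [mul_zero]; exact L.zero_mem⟩
  | add y z _ _ hy hz =>
    obtain ⟨n, hn0, hn⟩ := hy
    obtain ⟨m, hm0, hm⟩ := hz
    refine ⟨n * m, mul_ne_zero hn0 hm0, ?_⟩
    have : ((n * m : ℤ) : F) * (y + z) = m • ((n : F) * y) + n • ((m : F) * z) := by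
      push_cast
      simp only [zsmul_eq_mul]
      push_cast
      ring
    rw [this]
    exact L.add_mem (L.smul_mem m hn) (L.smul_mem n hm)
  | smul q y _ hy =>
    obtain ⟨n, hn0, hn⟩ := hy
    refine ⟨(q.den : ℤ) * n, mul_ne_zero (Int.natCast_ne_zero.mpr q.den_nz) hn0, ?_⟩
    have h2 : (q.den : F) * (q : F) = (q.num : F) := by
      rw [Rat.cast_def]
      have hd : (q.den : F) ≠ 0 := Nat.cast_ne_zero.mpr q.den_nz
      field_simp
    have key : (((q.den : ℤ) * n : ℤ) : F) * (q • y) = q.num • ((n : F) * y) := by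
      rw [Rat.smul_def, zsmul_eq_mul]
      push_cast
      linear_combination ((n : F) * y) * h2
    rw [key]
    exact L.smul_mem _ hn

/-- common denominator for a finitely generated submodule. -/
lemma exists_denom_fg {L A : Submodule ℤ F} (hfull : span ℚ (L : Set F) = ⊤)
    (hA : A.FG) : ∃ n : ℤ, n ≠ 0 ∧ ∀ a ∈ A, (n : F) * a ∈ L := by
  classical
  obtain ⟨s, rfl⟩ := hA
  choose f hf0 hf using fun x : F => exists_denom hfull x
  refine ⟨∏ x ∈ s, f x, Finset.prod_ne_zero_iff.mpr fun x _ => hf0 x, ?_⟩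
  intro a ha
  set n : ℤ := ∏ x ∈ s, f x with hn
  have : a ∈ span ℤ (s : Set F) := ha
  have hsub : (s : Set F) ⊆ (myColon L (span ℤ {(n : F)}) : Set F) := by
    intro x hxs
    rw [SetLike.mem_coe, mem_myColon]
    intro y hy
    obtain ⟨k, rfl⟩ := Submodule.mem_span_singleton.mp hy
    rw [mul_smul_comm]
    refine L.smul_mem k ?_
    have hdvd : n = f x * ∏ z ∈ s.erase x, f z := (Finset.mul_prod_erase s f hxs).symm
    have hx2 : x * (n : F) = (∏ z ∈ s.erase x, f z) • ((f x : F) * x) := by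
      rw [zsmul_eq_mul, hdvd]
      push_cast
      ring
    rw [hx2]
    exact L.smul_mem _ (hf x)
  have hle := Submodule.span_le.mpr hsub
  have := hle this
  rw [mem_myColon] at this
  have := this (n : F) (Submodule.mem_span_singleton_self _)
  rwa [mul_comm] at this

end ColonAux

noncomputable section GorAux

open Submodule

variable {F : Type*} [Field F] [NumberField F]

/-- A subring of `F` as a `ℤ`-submodule. -/
def rl (O : Subring F) : Submodule ℤ F where
  carrier := O
  add_mem' := fun h1 h2 => O.add_mem h1 h2
  zero_mem' := O.zero_mem
  smul_mem' := fun n x hx => zsmul_mem hx n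

lemma mem_rl {O : Subring F} {x : F} : x ∈ rl O ↔ x ∈ O := Iff.rfl

variable {O : Subring F}

lemma rl_mul_rl : rl O * rl O = rl O := by
  apply le_antisymm
  · exact Submodule.mul_le.mpr fun a ha b hb => O.mul_mem ha hb
  · intro x hx
    rw [← mul_one x]
    exact Submodule.mul_mem_mul hx O.one_mem

lemma dL_rl_stable : rl O * dL (rl O) ≤ dL (rl O) := by
  refine Submodule.mul_le.mpr fun r hr x hx => ?_
  rw [mem_dL]
  intro y hy
  obtain ⟨n, hn⟩ := mem_dL.mp hx (r * y) (O.mul_mem hr hy)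
  exact ⟨n, by rw [← hn]; ring_nf⟩

lemma full_of_le {L L' : Submodule ℤ F} (h : L ≤ L')
    (hfull : span ℚ (L : Set F) = ⊤) : span ℚ (L' : Set F) = ⊤ :=
  eq_top_iff.mpr (hfull ▸ Submodule.span_mono h)

lemma full_smul {x : F} (hx : x ≠ 0) {L : Submodule ℤ F}
    (hfull : span ℚ (L : Set F) = ⊤) :
    span ℚ (((span ℤ {x} : Submodule ℤ F) * L : Submodule ℤ F) : Set F) = ⊤ := by
  rw [eq_top_iff]
  intro y _
  have h1 : x⁻¹ * y ∈ span ℚ (L : Set F) := hfull ▸ Submodule.mem_top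
  have h2 : x * (x⁻¹ * y) = y := by field_simp
  set W : Submodule ℚ F := span ℚ (((span ℤ {x} : Submodule ℤ F) * L : Submodule ℤ F) : Set F)
  have h3 : span ℚ (L : Set F) ≤ W.comap (LinearMap.mulLeft ℚ x) := by
    rw [Submodule.span_le]
    intro l hl
    simp only [SetLike.mem_coe, Submodule.mem_comap, LinearMap.mulLeft_apply]
    exact Submodule.subset_span (Submodule.mul_mem_mul (Submodule.mem_span_singleton_self x) hl)
  have := h3 h1
  simp only [Submodule.mem_comap, LinearMap.mulLeft_apply] at this
  rwa [h2] at this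

lemma dual_eq_colon {A : Submodule ℤ F} (hA : rl O * A ≤ A) :
    dL A = myColon (dL (rl O)) A := by
  ext x
  rw [mem_myColon]
  constructor
  · intro hx a ha
    rw [mem_dL]
    intro r hr
    obtain ⟨n, hn⟩ := mem_dL.mp hx (r * a) (hA (Submodule.mul_mem_mul hr ha))
    exact ⟨n, by rw [← hn]; ring_nf⟩
  · intro hx
    rw [mem_dL]
    intro a ha
    obtain ⟨n, hn⟩ := mem_dL.mp (hx a ha) 1 O.one_mem
    exact ⟨n, by rw [← hn]; ring_nf⟩

lemma colon_eq_mul {A U : Submodule ℤ F} (hA : rl O * A ≤ A)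
    (hU : dL (rl O) * U = rl O) :
    myColon (dL (rl O)) A = dL (rl O) * myColon (rl O) A := by
  apply le_antisymm
  · intro x hx
    have h1 : x ∈ (span ℤ {x} : Submodule ℤ F) * (dL (rl O) * U) := by
      rw [hU]
      exact mem_span_singleton_mul'.mpr ⟨1, O.one_mem, (mul_one x).symm⟩
    have h2 : (span ℤ {x} : Submodule ℤ F) * (dL (rl O) * U) =
        dL (rl O) * ((span ℤ {x} : Submodule ℤ F) * U) := by ring
    rw [h2] at h1
    refine SetLike.le_def.mp (mul_le_mul' le_rfl ?_) h1
    refine span_singleton_mul_le fun u hu => ?_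
    intro a ha
    have h3 : (x * u) * a = u * (x * a) := by ring
    rw [h3, ← hU, Submodule.mul_comm]
    exact Submodule.mul_mem_mul hu (hx a ha)
  · refine Submodule.mul_le.mpr fun t ht y hy => ?_
    intro a ha
    have h3 : (t * y) * a = t * (y * a) := by ring
    rw [h3]
    have h4 : t * (y * a) ∈ dL (rl O) * rl O := Submodule.mul_mem_mul ht (hy a ha)
    rw [Submodule.mul_comm] at h4
    exact dL_rl_stable h4

lemma divisorial (hfg : (rl O).FG) (hfull : span ℚ ((rl O : Submodule ℤ F) : Set F) = ⊤)
    {U : Submodule ℤ F} (hU : dL (rl O) * U = rl O)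
    {A : Submodule ℤ F} (hA : rl O * A ≤ A) (hAfg : A.FG)
    (hAfull : span ℚ (A : Set F) = ⊤) :
    myColon (rl O) (myColon (rl O) A) = A := by
  have h1 : dL (dL A) = A := dL_dL A hAfg hAfull
  rw [dual_eq_colon hA, colon_eq_mul hA hU, dL_mul, dL_dL (rl O) hfg hfull] at h1
  exact h1

lemma colon_rl_rl : myColon (rl O) (rl O) = rl O := by
  apply le_antisymm
  · intro x hx
    simpa using hx 1 O.one_mem
  · intro r hr y hy
    exact O.mul_mem hr hy

lemma invert (hfg : (rl O).FG) (hfull : span ℚ ((rl O : Submodule ℤ F) : Set F) = ⊤)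
    {U : Submodule ℤ F} (hU : dL (rl O) * U = rl O)
    {A : Submodule ℤ F} (hA : rl O * A ≤ A) (hAfg : A.FG)
    (hAfull : span ℚ (A : Set F) = ⊤)
    (hAA : myColon A A ≤ rl O) : A * myColon (rl O) A = rl O := by
  classical
  set C := myColon (rl O) A with hCdef
  have hI_le : A * C ≤ rl O :=
    Submodule.mul_le.mpr fun a ha c hc => by rw [mul_comm]; exact hc a ha
  obtain ⟨n, hn0, hn⟩ := exists_denom_fg hfull hAfg
  -- a₀ ∈ A nonzero
  have hAne : ∃ a₀ : F, a₀ ∈ A ∧ a₀ ≠ 0 := by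
    by_contra h
    push_neg at h
    have h1 : span ℚ (A : Set F) ≤ ⊥ :=
      Submodule.span_le.mpr fun x hx => by simp [h x hx]
    rw [hAfull] at h1
    simpa using h1 (Submodule.mem_top (x := (1 : F)))
  obtain ⟨a₀, ha₀, ha₀0⟩ := hAne
  have hCfg : C.FG := by
    refine fg_of_le' (D := (span ℤ {a₀⁻¹} : Submodule ℤ F) * rl O)
      (Submodule.FG.mul (Submodule.fg_span_singleton _) hfg) ?_
    intro x hx
    have hxa : x = a₀⁻¹ * (x * a₀) := by field_simp
    exact mem_span_singleton_mul'.mpr ⟨x * a₀, hx a₀ ha₀, hxa⟩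
  have hCfull : span ℚ (C : Set F) = ⊤ := by
    refine full_of_le ?_ (full_smul (Int.cast_ne_zero.mpr hn0) hfull)
    refine span_singleton_mul_le fun r hr => ?_
    intro a ha
    have h3 : ((n : F) * r) * a = r * ((n : F) * a) := by ring
    rw [h3]
    exact O.mul_mem hr (hn a ha)
  have hIfg : (A * C).FG := Submodule.FG.mul hAfg hCfg
  have hIfull : span ℚ ((A * C : Submodule ℤ F) : Set F) = ⊤ := by
    refine full_of_le ?_ (full_smul ha₀0 hCfull)
    refine mul_le_mul' ?_ le_rfl
    rw [Submodule.span_le]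
    simpa using ha₀
  have hIstable : rl O * (A * C) ≤ A * C := by
    rw [← mul_assoc]
    exact mul_le_mul' hA le_rfl
  have hdiv : myColon (rl O) C = A := divisorial hfg hfull hU hA hAfg hAfull
  have hIcolon : myColon (rl O) (A * C) = rl O := by
    apply le_antisymm
    · intro x hx
      have hxC : ∀ c ∈ C, x * c ∈ C := by
        intro c hc a ha
        have h3 : (x * c) * a = x * (a * c) := by ring
        rw [h3]
        exact hx (a * c) (Submodule.mul_mem_mul ha hc)
      have hxA : ∀ y ∈ A, x * y ∈ A := by
        intro y hy
        rw [← hdiv] at hy ⊢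
        intro c hc
        have h3 : (x * y) * c = y * (x * c) := by ring
        rw [h3]
        exact hy (x * c) (hxC c hc)
      exact hAA hxA
    · intro r hr y hy
      exact O.mul_mem hr (hI_le hy)
  have h2 := divisorial hfg hfull hU hIstable hIfg hIfull
  rw [hIcolon, colon_rl_rl] at h2
  exact h2.symm

end GorAux

noncomputable section

open Submodule

/-- Every convenient order is Gorenstein: if `K` is a CM field with maximal
totally real subfield `Kp`, and `R` is an order of `K` that is stable under complex
conjugation, whose real subring `R⁺ = R ∩ K⁺` is Gorenstein, and whose trace dual is
generated as an `R`-module by its pure imaginary elements, then the trace dual of `R` is an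
invertible fractional `R`-ideal. -/
theorem convenient_order_is_Gorenstein
    (Kp K : Type*) [Field Kp] [NumberField Kp] [Field K] [NumberField K] [Algebra Kp K]
    -- `K/Kp` is a CM extension: `Kp` is totally real, `K` is totally imaginary,
    -- `[K : Kp] = 2`, and `conj` is the nontrivial (involutive) automorphism of `K/Kp`,
    -- whose fixed field is exactly `Kp`.
    (htotreal : ∀ (phi : Kp →+* ℂ) (x : Kp), (phi x).im = 0)
    (htotimag : ∀ phi : K →+* ℂ, ∃ x : K, (phi x).im ≠ 0)
    (hdeg : Module.finrank Kp K = 2)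
    (conj : K ≃ₐ[Kp] K)
    (hconj_ne : conj ≠ AlgEquiv.refl)
    (hconj_inv : ∀ x, conj (conj x) = x)
    (hfix : ∀ x : K, conj x = x ↔ x ∈ (algebraMap Kp K).range)
    -- `R` is an order of `K` ...
    (R : Subring K) (hR : IsOrder K R)
    -- ... stable under complex conjugation ...
    (hstable : ∀ x ∈ R, conj x ∈ R)
    -- ... whose real subring `R⁺ = R ∩ K⁺` is Gorenstein ...
    (hGorplus : IsGorenstein Kp (R.comap (algebraMap Kp K)))
    -- ... and whose trace dual is generated as an `R`-module by its pure imaginary elements.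
    (hpure : Submodule.span R {x : K | x ∈ traceDual K R ∧ conj x = -x} = traceDual K R) :
    -- Then the trace dual of `R` is an invertible fractional `R`-ideal.
    IsInvertibleIdeal K R (traceDual K R) := by
  classical
  obtain ⟨hRfin, hRfull'⟩ := hR
  set Rp : Subring Kp := R.comap (algebraMap Kp K) with hRp
  -- basic lattice facts for R
  have hRfull : span ℚ ((rl R : Submodule ℤ K) : Set K) = ⊤ := hRfull'
  have hRfg : (rl R).FG := by
    rw [← Module.Finite.iff_fg]
    exact Module.Finite.equiv
      { toFun := fun x => (⟨x.1, x.2⟩ : rl R)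
        map_add' := fun x y => rfl
        map_smul' := fun n x => rfl
        invFun := fun x => (⟨x.1, x.2⟩ : R)
        left_inv := fun x => rfl
        right_inv := fun x => rfl }
  -- trace dual of R as a ℤ-lattice
  have hTres : (traceDual K R).restrictScalars ℤ = dL (rl R) := by
    ext x
    rw [Submodule.restrictScalars_mem, mem_dL]
    exact Iff.rfl
  have hone : (1 : Submodule R K).restrictScalars ℤ = rl R := by
    ext x
    rw [Submodule.restrictScalars_mem, Submodule.mem_one, mem_rl]
    constructor
    · rintro ⟨y, rfl⟩
      exact y.2
    · intro hx
      exact ⟨⟨x, hx⟩, rfl⟩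
  -- the same for Rp
  have hTresp : (traceDual Kp Rp).restrictScalars ℤ = dL (rl Rp) := by
    ext x
    rw [Submodule.restrictScalars_mem, mem_dL]
    exact Iff.rfl
  have honep : (1 : Submodule Rp Kp).restrictScalars ℤ = rl Rp := by
    ext x
    rw [Submodule.restrictScalars_mem, Submodule.mem_one, mem_rl]
    constructor
    · rintro ⟨y, rfl⟩
      exact y.2
    · intro hx
      exact ⟨⟨x, hx⟩, rfl⟩
  -- the embedding ι as a ℤ-algebra map
  set ιa : Kp →ₐ[ℤ] K := (algebraMap Kp K).toIntAlgHom with hιa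
  set ιl : Kp →ₗ[ℤ] K := ιa.toLinearMap with hιl
  have hιinj : Function.Injective ιl := (algebraMap Kp K).injective
  have hιapp : ∀ u : Kp, ιl u = algebraMap Kp K u := fun u => rfl
  -- Rp is an order of Kp
  have hRpfull : span ℚ ((rl Rp : Submodule ℤ Kp) : Set Kp) = ⊤ := by
    rw [eq_top_iff]
    intro u _
    obtain ⟨m, hm0, hm⟩ := exists_denom (L := rl R) hRfull (algebraMap Kp K u)
    have hmem : (m : Kp) * u ∈ rl Rp := by
      rw [mem_rl]
      show algebraMap Kp K ((m : Kp) * u) ∈ R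
      rw [map_mul, map_intCast]
      exact hm
    have hu : u = ((m : ℚ)⁻¹) • ((m : Kp) * u) := by
      rw [Rat.smul_def]
      have hmK : (m : Kp) ≠ 0 := Int.cast_ne_zero.mpr hm0
      push_cast
      field_simp
    rw [hu]
    exact Submodule.smul_mem _ _ (Submodule.subset_span hmem)
  have hRpfg : (rl Rp).FG := by
    apply Submodule.fg_of_fg_map_injective ιl hιinj
    refine fg_of_le' hRfg ?_
    rintro x ⟨u, hu, rfl⟩
    exact hu
  -- the invertibility datum for Rp
  obtain ⟨Jp, hJp⟩ := hGorplus
  have hJpZ : dL (rl Rp) * (Jp.restrictScalars ℤ) = rl Rp := by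
    have h := congrArg (Submodule.restrictScalars ℤ) hJp
    have h1 : (traceDual Kp Rp * Jp).restrictScalars ℤ =
        (traceDual Kp Rp).restrictScalars ℤ * Jp.restrictScalars ℤ := rfl
    rw [h1, hTresp, honep] at h
    exact h
  -- a nonzero pure imaginary element z
  have hw : ∃ w : K, conj w ≠ w := by
    by_contra h
    push_neg at h
    exact hconj_ne (AlgEquiv.ext fun x => (h x).trans rfl)
  obtain ⟨w, hw⟩ := hw
  set z : K := w - conj w with hzdef
  have hz0 : z ≠ 0 := sub_ne_zero.mpr (Ne.symm hw)
  have hzconj : conj z = -z := by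
    rw [hzdef, map_sub, hconj_inv]
    ring
  -- the pure imaginary part of the trace dual
  set imagSub : Submodule ℤ K :=
    { carrier := {x | conj x = -x}
      add_mem' := by
        intro a b ha hb
        simp only [Set.mem_setOf_eq] at *
        rw [map_add, ha, hb]
        ring
      zero_mem' := by simp
      smul_mem' := by
        intro n x hx
        simp only [Set.mem_setOf_eq] at *
        rw [map_zsmul, hx, smul_neg] } with himagSub
  set S : Submodule ℤ K := dL (rl R) ⊓ imagSub with hSdef
  have hmemS : ∀ x : K, x ∈ S ↔ x ∈ dL (rl R) ∧ conj x = -x := by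
    intro x
    rw [hSdef, Submodule.mem_inf]
    exact Iff.rfl
  -- restrict hpure to ℤ
  have hTS : rl R * S = dL (rl R) := by
    apply le_antisymm
    · refine Submodule.mul_le.mpr fun r hr s hs => ?_
      have hsT : s ∈ traceDual K R := by
        rw [← Submodule.restrictScalars_mem ℤ, hTres]
        exact ((hmemS s).mp hs).1
      have h2 : r * s = (⟨r, hr⟩ : R) • s := rfl
      have h3 : (⟨r, hr⟩ : R) • s ∈ traceDual K R := Submodule.smul_mem _ _ hsT
      rw [← hTres]
      rw [Submodule.restrictScalars_mem]
      rw [h2]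
      exact h3
    · intro x hx
      have hx' : x ∈ traceDual K R := by
        rw [← Submodule.restrictScalars_mem ℤ, hTres]
        exact hx
      clear hx
      rw [← hpure] at hx'
      induction hx' using Submodule.span_induction with
      | mem y hy =>
        have hyS : y ∈ S := by
          rw [hmemS]
          refine ⟨?_, hy.2⟩
          rw [← hTres]
          exact hy.1
        rw [← one_mul y]
        exact Submodule.mul_mem_mul R.one_mem hyS
      | zero => exact Submodule.zero_mem _
      | add a b _ _ ha hb => exact Submodule.add_mem _ ha hb
      | smul c y _ hy =>
        have h1 : (c : K) * y ∈ rl R * (rl R * S) := Submodule.mul_mem_mul c.2 hy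
        rw [← mul_assoc, rl_mul_rl] at h1
        exact h1
  -- the module M of pure imaginary coefficients
  set M : Submodule ℤ Kp :=
    { carrier := {u | z * algebraMap Kp K u ∈ S}
      add_mem' := by
        intro a b ha hb
        simp only [Set.mem_setOf_eq] at *
        rw [map_add, mul_add]
        exact S.add_mem ha hb
      zero_mem' := by
        simp only [Set.mem_setOf_eq, map_zero, mul_zero]
        exact S.zero_mem
      smul_mem' := by
        intro n u hu
        simp only [Set.mem_setOf_eq] at *
        rw [map_zsmul, mul_smul_comm]
        exact S.smul_mem n hu } with hMdef
  have hmemM : ∀ u : Kp, u ∈ M ↔ z * algebraMap Kp K u ∈ S := fun u => Iff.rfl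
  -- S = z · ι(M)
  have hS_eq : S = (span ℤ {z} : Submodule ℤ K) * Submodule.map ιl M := by
    apply le_antisymm
    · intro s hs
      obtain ⟨hsT, hsI⟩ := (hmemS s).mp hs
      have hconjdiv : conj (z⁻¹ * s) = z⁻¹ * s := by
        rw [map_mul, map_inv₀, hzconj, hsI, inv_neg]
        ring
      obtain ⟨u, hu⟩ := (hfix _).mp hconjdiv
      have hzu : z * algebraMap Kp K u = s := by
        rw [hu]
        field_simp
      have huM : u ∈ M := by
        rw [hmemM, hzu]
        exact hs
      exact mem_span_singleton_mul'.mpr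
        ⟨algebraMap Kp K u, Submodule.mem_map_of_mem huM, hzu.symm⟩
    · refine span_singleton_mul_le fun v hv => ?_
      obtain ⟨u, hu, rfl⟩ := hv
      exact hu
  -- T = z · (R · ι(M))
  have hT_eq : dL (rl R) =
      (span ℤ {z} : Submodule ℤ K) * (rl R * Submodule.map ιl M) := by
    rw [← hTS, hS_eq]
    ring
  -- M is an Rp-module
  have h_MRp : rl Rp * M ≤ M := by
    refine Submodule.mul_le.mpr fun r hr u hu => ?_
    rw [hmemM] at hu ⊢
    rw [map_mul]
    have h1 : z * (algebraMap Kp K r * algebraMap Kp K u) =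
        algebraMap Kp K r * (z * algebraMap Kp K u) := by ring
    rw [h1, hmemS]
    obtain ⟨hu1, hu2⟩ := (hmemS _).mp hu
    constructor
    · exact dL_rl_stable (Submodule.mul_mem_mul hr hu1)
    · rw [map_mul, AlgEquiv.commutes, hu2]
      ring
  -- M is finitely generated
  have hTfgfull := dL_fg (rl R) hRfg hRfull
  have hSfg : S.FG := fg_of_le' hTfgfull.1 inf_le_left
  have hMfg : M.FG := by
    have hinj : Function.Injective ((LinearMap.mulLeft ℤ z).comp ιl) := by
      intro a b h
      simp only [LinearMap.comp_apply, LinearMap.mulLeft_apply] at h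
      exact hιinj (mul_left_cancel₀ hz0 h)
    apply Submodule.fg_of_fg_map_injective _ hinj
    refine fg_of_le' hSfg ?_
    rintro x ⟨u, hu, rfl⟩
    exact hu
  -- M is nonzero
  have hTne : dL (rl R) ≠ ⊥ := by
    intro h
    have h2 := hTfgfull.2
    rw [h, Submodule.bot_coe, Submodule.span_zero_singleton] at h2
    have h3 : (1 : K) ∈ (⊥ : Submodule ℚ K) := h2.symm ▸ (Submodule.mem_top : (1:K) ∈ ⊤)
    simpa using h3
  have hM0 : ∃ m₀ : Kp, m₀ ∈ M ∧ m₀ ≠ 0 := by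
    by_contra h
    push_neg at h
    have hSbot : S = ⊥ := by
      rw [hS_eq, eq_bot_iff]
      refine span_singleton_mul_le fun v hv => ?_
      obtain ⟨u, hu, rfl⟩ := hv
      by_cases hu0 : u = 0
      · simp [hu0]
      · exact absurd (h u hu) hu0
    have : dL (rl R) = ⊥ := by
      rw [← hTS, hSbot, Submodule.mul_bot]
    exact hTne this
  obtain ⟨m₀, hm₀, hm₀0⟩ := hM0
  -- M is a full lattice in Kp
  have hMfull : span ℚ (M : Set Kp) = ⊤ := by
    rw [eq_top_iff]
    intro u _
    have h1 : u * m₀⁻¹ ∈ span ℚ ((rl Rp : Submodule ℤ Kp) : Set Kp) := hRpfull ▸ Submodule.mem_top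
    set W : Submodule ℚ Kp := span ℚ (M : Set Kp) with hW
    have h3 : span ℚ ((rl Rp : Submodule ℤ Kp) : Set Kp) ≤
        W.comap (LinearMap.mulRight ℚ m₀) := by
      rw [Submodule.span_le]
      intro r hr
      simp only [SetLike.mem_coe, Submodule.mem_comap, LinearMap.mulRight_apply]
      exact Submodule.subset_span (h_MRp (Submodule.mul_mem_mul hr hm₀))
    have h4 := h3 h1
    simp only [Submodule.mem_comap, LinearMap.mulRight_apply] at h4
    have h5 : u * m₀⁻¹ * m₀ = u := by field_simp
    rwa [h5] at h4
  -- multipliers of M lie in Rp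
  have hMM : myColon M M ≤ rl Rp := by
    intro u hu
    have hstab2 : ∀ t ∈ dL (rl R), algebraMap Kp K u * t ∈ dL (rl R) := by
      intro t ht
      rw [hT_eq] at ht ⊢
      obtain ⟨a, ha, rfl⟩ := mem_span_singleton_mul'.mp ht
      have hgoal : algebraMap Kp K u * (z * a) = z * (algebraMap Kp K u * a) := by ring
      rw [hgoal]
      refine mem_span_singleton_mul'.mpr ⟨_, ?_, rfl⟩
      refine Submodule.mul_induction_on ha ?_ ?_
      · intro r hr v hv
        obtain ⟨m, hm, rfl⟩ := hv
        have h1 : algebraMap Kp K u * (r * ιl m) = r * ιl (u * m) := by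
          rw [hιl]
          show algebraMap Kp K u * (r * algebraMap Kp K m) = r * algebraMap Kp K (u * m)
          rw [map_mul]
          ring
        rw [h1]
        exact Submodule.mul_mem_mul hr (Submodule.mem_map_of_mem (hu m hm))
      · intro x y hx hy
        rw [mul_add]
        exact Submodule.add_mem _ hx hy
    have hdd : dL (dL (rl R)) = rl R := dL_dL (rl R) hRfg hRfull
    have hmem2 : algebraMap Kp K u ∈ dL (dL (rl R)) := by
      rw [mem_dL]
      intro t ht
      obtain ⟨n, hn⟩ := mem_dL.mp (hstab2 t ht) 1 R.one_mem
      exact ⟨n, by rw [← hn, mul_one]⟩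
    rw [hdd] at hmem2
    exact hmem2
  -- M is invertible over Rp
  have hMain : M * myColon (rl Rp) M = rl Rp :=
    invert hRpfg hRpfull hJpZ h_MRp hMfg hMfull hMM
  set N : Submodule ℤ Kp := myColon (rl Rp) M with hN
  -- transport to K
  have hιMN : Submodule.map ιl M * Submodule.map ιl N = Submodule.map ιl (rl Rp) := by
    rw [hιl, ← Submodule.map_mul, hMain]
  have hιRp_le : Submodule.map ιl (rl Rp) ≤ rl R := by
    rintro x ⟨u, hu, rfl⟩
    exact hu
  have h1ι : (1 : K) ∈ Submodule.map ιl (rl Rp) := ⟨1, Rp.one_mem, by rw [hιapp]; exact map_one (algebraMap Kp K)⟩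
  have hRιRp : rl R * Submodule.map ιl (rl Rp) = rl R := by
    apply le_antisymm
    · exact Submodule.mul_le.mpr fun r hr x hx => R.mul_mem hr (hιRp_le hx)
    · intro x hx
      rw [← mul_one x]
      exact Submodule.mul_mem_mul hx h1ι
  -- the inverse lattice
  set J0 : Submodule ℤ K :=
    (span ℤ {z⁻¹} : Submodule ℤ K) * (rl R * Submodule.map ιl N) with hJ0
  have hzz : (span ℤ {z} : Submodule ℤ K) * span ℤ {z⁻¹} = 1 := by
    rw [Submodule.span_mul_span, Set.singleton_mul_singleton, mul_inv_cancel₀ hz0]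
    exact Submodule.one_eq_span.symm
  have hTJ0 : dL (rl R) * J0 = rl R := by
    rw [hT_eq, hJ0]
    calc ((span ℤ {z} : Submodule ℤ K) * (rl R * Submodule.map ιl M)) *
          ((span ℤ {z⁻¹} : Submodule ℤ K) * (rl R * Submodule.map ιl N))
        = ((span ℤ {z} : Submodule ℤ K) * span ℤ {z⁻¹}) *
          ((rl R * rl R) * (Submodule.map ιl M * Submodule.map ιl N)) := by ring
      _ = 1 * (rl R * Submodule.map ιl (rl Rp)) := by rw [hzz, rl_mul_rl, hιMN]
      _ = rl R := by rw [one_mul, hRιRp]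
  have hJ0stab : rl R * J0 ≤ J0 := by
    have h1 : rl R * J0 =
        (span ℤ {z⁻¹} : Submodule ℤ K) * ((rl R * rl R) * Submodule.map ιl N) := by
      rw [hJ0]; ring
    rw [h1, rl_mul_rl, hJ0]
  -- the inverse as an R-submodule
  set J : Submodule R K :=
    { carrier := J0
      add_mem' := fun h1 h2 => J0.add_mem h1 h2
      zero_mem' := J0.zero_mem
      smul_mem' := by
        intro c x hx
        show (c : K) * x ∈ J0
        exact hJ0stab (Submodule.mul_mem_mul c.2 hx) } with hJ
  refine ⟨J, ?_⟩
  apply Submodule.restrictScalars_injective ℤ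
  show (traceDual K R * J).restrictScalars ℤ = (1 : Submodule R K).restrictScalars ℤ
  rw [hone]
  have h1 : (traceDual K R * J).restrictScalars ℤ =
      (traceDual K R).restrictScalars ℤ * J.restrictScalars ℤ := rfl
  have h2 : J.restrictScalars ℤ = J0 := SetLike.coe_injective rfl
  rw [h1, h2, hTres, hTJ0]

end
end

section
/- Let K be a CM field and let R be an order in K that is stable under complex conjugation and whose real subring R⁺ = R ∩ K⁺ is Gorenstein. If there exist elements α, β ∈ K and invertible fractional R⁺-ideals 𝔄, 𝔅 such that R = 𝔄α ⊕ 𝔅β (an internal direct sum of R⁺-submodules of K), then R is convenient; that is, the trace dual R† of R is generated as an R-module by its pure imaginary elements. -/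
open NumberField Polynomial

noncomputable section

noncomputable section MyHelpers

variable {Kp K : Type*} [Field Kp] [NumberField Kp] [Field K] [NumberField K] [Algebra Kp K]

lemma my_tower' : IsScalarTower ℚ Kp K :=
  IsScalarTower.of_algebraMap_eq' (Subsingleton.elim _ _)

lemma my_exists_not_mem (hdeg : Module.finrank Kp K = 2)
    (h : ∀ y : K, ∃ c : Kp, algebraMap Kp K c = y) : False := by
  have : (⊥ : Subalgebra Kp K) = ⊤ := by
    ext y
    simp only [Algebra.mem_bot, Algebra.mem_top, iff_true, Set.mem_range]
    exact h y
  have h1 := Subalgebra.bot_eq_top_iff_finrank_eq_one.mp this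
  rw [hdeg] at h1
  omega

lemma my_algebraMap_trace (hdeg : Module.finrank Kp K = 2) (conj : K ≃ₐ[Kp] K)
    (hconj_inv : ∀ x, conj (conj x) = x)
    (hfix : ∀ x : K, conj x = x ↔ x ∈ (algebraMap Kp K).range) (y : K) :
    algebraMap Kp K (Algebra.trace Kp K y) = y + conj y := by
  obtain ⟨γ, hγ⟩ : ∃ γ : K, ∀ c : Kp, algebraMap Kp K c ≠ γ := by
    by_contra h
    push_neg at h
    exact my_exists_not_mem hdeg h
  have li : LinearIndependent Kp ![γ, (1 : K)] := by
    rw [linearIndependent_fin2]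
    refine ⟨by simp, fun a ha => hγ a ?_⟩
    simp only [Matrix.cons_val_one, Matrix.head_cons, Matrix.cons_val_zero] at ha
    rw [← ha, Algebra.smul_def, mul_one]
  let b : Module.Basis (Fin 2) Kp K := basisOfLinearIndependentOfCardEqFinrank li (by simp [hdeg])
  have hb : ⇑b = ![γ, (1 : K)] := coe_basisOfLinearIndependentOfCardEqFinrank li _
  have hb0 : b 0 = γ := by rw [hb]; rfl
  have hb1 : b 1 = (1 : K) := by rw [hb]; rfl
  obtain ⟨s, hs⟩ := (hfix (γ + conj γ)).mp (by rw [map_add, hconj_inv]; ring)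
  obtain ⟨c, hc⟩ := (hfix (γ * conj γ)).mp (by rw [map_mul, hconj_inv]; ring)
  have hγsq : γ * γ = s • γ - c • (1 : K) := by
    rw [Algebra.smul_def, Algebra.smul_def, hs, hc]; ring
  have key : (Algebra.linearMap Kp K).comp (Algebra.trace Kp K)
      = (LinearMap.id : K →ₗ[Kp] K) + conj.toLinearMap := by
    apply b.ext
    intro i
    fin_cases i
    · simp only [LinearMap.comp_apply, LinearMap.add_apply, LinearMap.id_apply,
        AlgEquiv.toLinearMap_apply, Algebra.linearMap_apply]
      rw [show b ⟨0, by omega⟩ = γ from hb0]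
      have htr : Algebra.trace Kp K γ = s := by
        rw [Algebra.trace_eq_matrix_trace b γ, Matrix.trace_fin_two]
        have h00 : Algebra.leftMulMatrix b γ 0 0 = s := by
          rw [Algebra.leftMulMatrix_eq_repr_mul, hb0, hγsq, sub_eq_add_neg, ← neg_smul]
          rw [show γ = b 0 from hb0.symm, show (1 : K) = b 1 from hb1.symm]
          simp [Finsupp.single_apply]
        have h11 : Algebra.leftMulMatrix b γ 1 1 = 0 := by
          rw [Algebra.leftMulMatrix_eq_repr_mul, hb1, mul_one]
          rw [show γ = b 0 from hb0.symm]
          simp [Finsupp.single_apply]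
        rw [h00, h11, add_zero]
      rw [htr, hs]
    · simp only [LinearMap.comp_apply, LinearMap.add_apply, LinearMap.id_apply,
        AlgEquiv.toLinearMap_apply, Algebra.linearMap_apply]
      rw [show b ⟨1, by omega⟩ = (1 : K) from hb1]
      have htr : Algebra.trace Kp K (1 : K) = 2 := by
        have := Algebra.trace_algebraMap (S := K) (1 : Kp)
        rw [map_one] at this
        rw [this, hdeg]
        simp
      rw [htr, map_one]
      rw [map_ofNat]
      norm_num
  have := congrArg (fun f : K →ₗ[Kp] K => f y) key
  simpa using this

end MyHelpers

/-- Let `K` be a CM field and `R` an order of `K` stable under complex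
conjugation whose real subring `R⁺ = R ∩ Kp` is Gorenstein. If `R = 𝔄α ⊕ 𝔅β` for elements
`α, β ∈ K` and invertible fractional `R⁺`-ideals `𝔄, 𝔅`, then `R` is convenient: its trace
dual is generated as an `R`-module by its pure imaginary elements. -/
theorem order_with_free_real_decomposition_is_convenient
    (Kp K : Type*) [Field Kp] [NumberField Kp] [Field K] [NumberField K] [Algebra Kp K]
    (htotreal : ∀ (phi : Kp →+* ℂ) (x : Kp), (phi x).im = 0)
    (htotimag : ∀ phi : K →+* ℂ, ∃ x : K, (phi x).im ≠ 0)
    (hdeg : Module.finrank Kp K = 2)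
    (conj : K ≃ₐ[Kp] K)
    (hconj_ne : conj ≠ AlgEquiv.refl)
    (hconj_inv : ∀ x, conj (conj x) = x)
    (hfix : ∀ x : K, conj x = x ↔ x ∈ (algebraMap Kp K).range)
    (R : Subring K) (hR : IsOrder K R)
    (hstable : ∀ x ∈ R, conj x ∈ R)
    -- the real subring `R⁺ = R ∩ Kp` is Gorenstein
    (hGorplus : IsGorenstein Kp (R.comap (algebraMap Kp K)))
    -- `𝔄` and `𝔅` are invertible fractional ideals of `R⁺ = R ∩ Kp`
    (α β : K) (A B : Submodule (R.comap (algebraMap Kp K)) Kp)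
    (hAfrac : IsFracIdeal Kp (R.comap (algebraMap Kp K)) A)
    (hAinv : IsInvertibleIdeal Kp (R.comap (algebraMap Kp K)) A)
    (hBfrac : IsFracIdeal Kp (R.comap (algebraMap Kp K)) B)
    (hBinv : IsInvertibleIdeal Kp (R.comap (algebraMap Kp K)) B)
    -- `R = 𝔄α ⊕ 𝔅β`, an internal direct sum of `R⁺`-submodules of `K`:
    (hsum : ∀ x : K, x ∈ R ↔
      ∃ a ∈ A, ∃ b ∈ B, x = algebraMap Kp K a * α + algebraMap Kp K b * β)
    (hdirect : ∀ a ∈ A, ∀ b ∈ B,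
      algebraMap Kp K a * α + algebraMap Kp K b * β = 0 → a = 0 ∧ b = 0) :
    -- Then `R` is convenient: its trace dual is generated by its pure imaginary elements.
    Submodule.span R {x : K | x ∈ traceDual K R ∧ conj x = -x} = traceDual K R := by
  classical
  haveI := my_tower' (Kp := Kp) (K := K)
  haveI : FiniteDimensional Kp K := FiniteDimensional.right ℚ Kp K
  have hmt : ∀ y : K, algebraMap Kp K (Algebra.trace Kp K y) = y + conj y :=
    my_algebraMap_trace hdeg conj hconj_inv hfix
  have htr : ∀ (y : K) (t : Kp), algebraMap Kp K t = y + conj y →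
      Algebra.trace ℚ K y = Algebra.trace ℚ Kp t := by
    intro y t ht
    have h1 : Algebra.trace Kp K y = t := (algebraMap Kp K).injective (by rw [hmt y, ht])
    rw [← Algebra.trace_trace (S := Kp) (x := y), h1]
  obtain ⟨JA, hJA⟩ := hAinv
  obtain ⟨JB, hJB⟩ := hBinv
  have hmulRp : ∀ {X Y : Submodule (R.comap (algebraMap Kp K)) Kp}, X * Y = 1 →
      ∀ {x}, x ∈ X → ∀ {y}, y ∈ Y → x * y ∈ R.comap (algebraMap Kp K) := by
    intro X Y hXY x hx y hy
    have hmem : x * y ∈ X * Y := Submodule.mul_mem_mul hx hy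
    rw [hXY] at hmem
    obtain ⟨z, hz⟩ := Submodule.mem_one.mp hmem
    exact hz ▸ z.2
  have hscale : ∀ {X : Submodule (R.comap (algebraMap Kp K)) Kp} {x}, x ∈ X →
      ∀ {ρ}, ρ ∈ R.comap (algebraMap Kp K) → x * ρ ∈ X := by
    intro X x hx ρ hρ
    have := X.smul_mem ⟨ρ, hρ⟩ hx
    rwa [Subring.smul_def, smul_eq_mul, mul_comm] at this
  have hcm : ∀ c : Kp, conj (algebraMap Kp K c) = algebraMap Kp K c := fun c => conj.commutes c
  obtain ⟨a₀, ha₀, b₀, hb₀, h1eq⟩ := (hsum 1).mp R.one_mem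
  have h1c : (1 : K) = algebraMap Kp K a₀ * conj α + algebraMap Kp K b₀ * conj β := by
    have := congrArg conj h1eq
    rwa [map_one, map_add, map_mul, map_mul, hcm, hcm] at this
  set d : K := α * conj β - conj α * β with hd
  have hdconj : conj d = -d := by
    rw [hd, map_sub, map_mul, map_mul, hconj_inv, hconj_inv]; ring
  have hwd : α - conj α = algebraMap Kp K b₀ * d := by
    rw [hd]; linear_combination α * h1c - conj α * h1eq
  have hzd : β - conj β = -(algebraMap Kp K a₀ * d) := by
    rw [hd]; linear_combination β * h1c - conj β * h1eq
  have hd0 : d ≠ 0 := by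
    intro h0
    apply my_exists_not_mem hdeg
    intro y
    obtain ⟨cα, hcα⟩ := RingHom.mem_range.mp ((hfix α).mp (by
      have h : α - conj α = 0 := by rw [hwd, h0, mul_zero]
      exact (sub_eq_zero.mp h).symm))
    obtain ⟨cβ, hcβ⟩ := RingHom.mem_range.mp ((hfix β).mp (by
      have h : β - conj β = 0 := by rw [hzd, h0, mul_zero, neg_zero]
      exact (sub_eq_zero.mp h).symm))
    have hRV : (R : Set K) ⊆
        (LinearMap.range ((Algebra.linearMap Kp K).restrictScalars ℚ) : Submodule ℚ K) := by
      intro r hr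
      obtain ⟨a, ha, b, hb, hre⟩ := (hsum r).mp hr
      refine ⟨a * cα + b * cβ, ?_⟩
      simp only [LinearMap.coe_restrictScalars, Algebra.linearMap_apply, map_add, map_mul,
        hcα, hcβ]
      rw [hre]
    have htop : (⊤ : Submodule ℚ K) ≤
        LinearMap.range ((Algebra.linearMap Kp K).restrictScalars ℚ) := by
      rw [← hR.2]
      exact Submodule.span_le.mpr hRV
    obtain ⟨c, hc⟩ := htop (Submodule.mem_top (x := y))
    exact ⟨c, hc⟩
  set S : Set K := {x : K | x ∈ traceDual K R ∧ conj x = -x} with hS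
  -- the generators
  have hgen : ∀ μ ∈ traceDual Kp (R.comap (algebraMap Kp K)), ∀ j ∈ JA, ∀ k ∈ JB,
      algebraMap Kp K (μ * j * k) * d⁻¹ ∈ Submodule.span R S := by
    intro μ hμ j hj k hk
    set g : K := algebraMap Kp K (μ * j * k) * d⁻¹ with hg
    have hconjg : conj g = -g := by
      rw [hg, map_mul, hcm, map_inv₀, hdconj, inv_neg]; ring
    have hgd : g * d = algebraMap Kp K (μ * j * k) := by
      rw [hg]; field_simp
    have hmemTD : g ∈ traceDual K R := by
      intro r hr
      obtain ⟨a, ha, b, hb, hre⟩ := (hsum r).mp hr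
      have hrc : r - conj r = (algebraMap Kp K a * algebraMap Kp K b₀
          - algebraMap Kp K b * algebraMap Kp K a₀) * d := by
        rw [hre, map_add, map_mul, map_mul, hcm, hcm]
        linear_combination algebraMap Kp K a * hwd + algebraMap Kp K b * hzd
      have hρmem : (a * j) * (b₀ * k) - (a₀ * j) * (b * k) ∈ R.comap (algebraMap Kp K) :=
        Subring.sub_mem _ (Subring.mul_mem _ (hmulRp hJA ha hj) (hmulRp hJB hb₀ hk))
          (Subring.mul_mem _ (hmulRp hJA ha₀ hj) (hmulRp hJB hb hk))
      have hkey : algebraMap Kp K (μ * ((a * j) * (b₀ * k) - (a₀ * j) * (b * k)))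
          = g * r + conj (g * r) := by
        rw [map_mul conj, hconjg]
        have h3 : g * r + -g * conj r = g * d * (algebraMap Kp K a * algebraMap Kp K b₀
            - algebraMap Kp K b * algebraMap Kp K a₀) := by
          linear_combination g * hrc
        rw [h3, hgd]
        simp only [map_mul, map_sub]
        ring
      obtain ⟨n, hn⟩ := hμ _ hρmem
      exact ⟨n, by rw [htr (g * r) _ hkey]; exact hn⟩
    exact Submodule.subset_span ⟨hmemTD, hconjg⟩
  have h1A : (1 : Kp) ∈ A * JA := by rw [hJA]; exact Submodule.mem_one.mpr ⟨1, map_one _⟩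
  have h1B : (1 : Kp) ∈ B * JB := by rw [hJB]; exact Submodule.mem_one.mpr ⟨1, map_one _⟩
  have hsmulspan : ∀ (r : K), r ∈ R → ∀ x ∈ Submodule.span R S, r * x ∈ Submodule.span R S := by
    intro r hr x hx
    have := Submodule.smul_mem (Submodule.span R S) ⟨r, hr⟩ hx
    rwa [Subring.smul_def, smul_eq_mul] at this
  have hterm1 : ∀ u' : Kp, (∀ a ∈ A, u' * a ∈ traceDual Kp (R.comap (algebraMap Kp K))) →
      algebraMap Kp K u' * conj β * d⁻¹ ∈ Submodule.span R S := by
    intro u' hu'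
    have main : ∀ t ∈ A * JA, algebraMap Kp K (u' * t) * conj β * d⁻¹ ∈ Submodule.span R S := by
      intro t ht
      refine Submodule.mul_induction_on ht ?_ ?_
      · intro a ha j hj
        have hμ : u' * a ∈ traceDual Kp (R.comap (algebraMap Kp K)) := hu' a ha
        have inner : ∀ t₂ ∈ B * JB,
            algebraMap Kp K (u' * (a * j) * t₂) * conj β * d⁻¹ ∈ Submodule.span R S := by
          intro t₂ ht₂
          refine Submodule.mul_induction_on ht₂ ?_ ?_
          · intro b hb k hk
            have hgen' := hgen (u' * a) hμ j hj k hk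
            have hbR : conj (algebraMap Kp K b * β) ∈ R :=
              hstable _ ((hsum _).mpr ⟨0, A.zero_mem, b, hb, by simp⟩)
            have h4 := hsmulspan _ hbR _ hgen'
            have h5 : conj (algebraMap Kp K b * β) * (algebraMap Kp K (u' * a * j * k) * d⁻¹)
                = algebraMap Kp K (u' * (a * j) * (b * k)) * conj β * d⁻¹ := by
              rw [map_mul conj, hcm]
              simp only [map_mul]
              ring
            rwa [h5] at h4
          · intro x y hx hy
            have : algebraMap Kp K (u' * (a * j) * (x + y)) * conj β * d⁻¹
                = algebraMap Kp K (u' * (a * j) * x) * conj β * d⁻¹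
                  + algebraMap Kp K (u' * (a * j) * y) * conj β * d⁻¹ := by
              rw [mul_add, map_add]; ring
            rw [this]
            exact Submodule.add_mem _ hx hy
        have := inner 1 h1B
        rwa [mul_one] at this
      · intro x y hx hy
        have : algebraMap Kp K (u' * (x + y)) * conj β * d⁻¹
            = algebraMap Kp K (u' * x) * conj β * d⁻¹
              + algebraMap Kp K (u' * y) * conj β * d⁻¹ := by
          rw [mul_add, map_add]; ring
        rw [this]
        exact Submodule.add_mem _ hx hy
    have := main 1 h1A
    rwa [mul_one] at this
  have hterm2 : ∀ v' : Kp, (∀ b ∈ B, v' * b ∈ traceDual Kp (R.comap (algebraMap Kp K))) →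
      algebraMap Kp K v' * conj α * d⁻¹ ∈ Submodule.span R S := by
    intro v' hv'
    have main : ∀ t ∈ B * JB, algebraMap Kp K (v' * t) * conj α * d⁻¹ ∈ Submodule.span R S := by
      intro t ht
      refine Submodule.mul_induction_on ht ?_ ?_
      · intro b hb k hk
        have hμ : v' * b ∈ traceDual Kp (R.comap (algebraMap Kp K)) := hv' b hb
        have inner : ∀ t₂ ∈ A * JA,
            algebraMap Kp K (v' * (b * k) * t₂) * conj α * d⁻¹ ∈ Submodule.span R S := by
          intro t₂ ht₂
          refine Submodule.mul_induction_on ht₂ ?_ ?_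
          · intro a ha j hj
            have hgen' := hgen (v' * b) hμ j hj k hk
            have haR : conj (algebraMap Kp K a * α) ∈ R :=
              hstable _ ((hsum _).mpr ⟨a, ha, 0, B.zero_mem, by simp⟩)
            have h4 := hsmulspan _ haR _ hgen'
            have h5 : conj (algebraMap Kp K a * α) * (algebraMap Kp K (v' * b * j * k) * d⁻¹)
                = algebraMap Kp K (v' * (b * k) * (a * j)) * conj α * d⁻¹ := by
              rw [map_mul conj, hcm]
              simp only [map_mul]
              ring
            rwa [h5] at h4
          · intro x y hx hy
            have : algebraMap Kp K (v' * (b * k) * (x + y)) * conj α * d⁻¹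
                = algebraMap Kp K (v' * (b * k) * x) * conj α * d⁻¹
                  + algebraMap Kp K (v' * (b * k) * y) * conj α * d⁻¹ := by
              rw [mul_add, map_add]; ring
            rw [this]
            exact Submodule.add_mem _ hx hy
        have := inner 1 h1A
        rwa [mul_one] at this
      · intro x y hx hy
        have : algebraMap Kp K (v' * (x + y)) * conj α * d⁻¹
            = algebraMap Kp K (v' * x) * conj α * d⁻¹
              + algebraMap Kp K (v' * y) * conj α * d⁻¹ := by
          rw [mul_add, map_add]; ring
        rw [this]
        exact Submodule.add_mem _ hx hy
    have := main 1 h1B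
    rwa [mul_one] at this
  -- final assembly
  apply le_antisymm
  · exact Submodule.span_le.mpr (fun x hx => hx.1)
  · intro x hx
    have hconju : conj (x * α + conj x * conj α) = x * α + conj x * conj α := by
      rw [map_add, map_mul, map_mul, hconj_inv, hconj_inv]; ring
    have hconjv : conj (x * β + conj x * conj β) = x * β + conj x * conj β := by
      rw [map_add, map_mul, map_mul, hconj_inv, hconj_inv]; ring
    obtain ⟨u', hu'⟩ := RingHom.mem_range.mp ((hfix _).mp hconju)
    obtain ⟨v', hv'⟩ := RingHom.mem_range.mp ((hfix _).mp hconjv)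
    have hu'A : ∀ a ∈ A, u' * a ∈ traceDual Kp (R.comap (algebraMap Kp K)) := by
      intro a ha ρ hρ
      have hrR : algebraMap Kp K (a * ρ) * α ∈ R :=
        (hsum _).mpr ⟨a * ρ, hscale ha hρ, 0, B.zero_mem, by simp⟩
      obtain ⟨n, hn⟩ := hx _ hrR
      refine ⟨n, ?_⟩
      rw [← htr (x * (algebraMap Kp K (a * ρ) * α)) (u' * a * ρ) ?_]
      · exact hn
      · rw [map_mul, map_mul, hu', map_mul conj, map_mul conj, hcm]
        simp only [map_mul]
        ring
    have hv'B : ∀ b ∈ B, v' * b ∈ traceDual Kp (R.comap (algebraMap Kp K)) := by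
      intro b hb ρ hρ
      have hrR : algebraMap Kp K (b * ρ) * β ∈ R :=
        (hsum _).mpr ⟨0, A.zero_mem, b * ρ, hscale hb hρ, by simp⟩
      obtain ⟨n, hn⟩ := hx _ hrR
      refine ⟨n, ?_⟩
      rw [← htr (x * (algebraMap Kp K (b * ρ) * β)) (v' * b * ρ) ?_]
      · exact hn
      · rw [map_mul, map_mul, hv', map_mul conj, map_mul conj, hcm]
        simp only [map_mul]
        ring
    have hxd : x = algebraMap Kp K u' * conj β * d⁻¹ - algebraMap Kp K v' * conj α * d⁻¹ := by
      have hid : x * d = algebraMap Kp K u' * conj β - algebraMap Kp K v' * conj α := by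
        rw [hu', hv', hd]; ring
      field_simp
      linear_combination hid
    rw [hxd]
    exact Submodule.sub_mem _ (hterm1 u' hu'A) (hterm2 v' hv'B)


end
end

section
/- Let L/K be a quadratic extension of number fields with nontrivial automorphism σ, let S be an order of L with σ(S) = S, and let R = S ∩ K. Then for every invertible fractional S-ideal 𝔅 there is a unique invertible fractional R-ideal 𝔄 such that the S-submodule of L generated by 𝔄 equals 𝔅·σ(𝔅). -/
open NumberField Polynomial

noncomputable section
open Submodule Finset

section Aux

lemma span_image_span' {A B : Type*} [CommRing A] [CommRing B] (R : Subring A) (T : Subring B)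
    {F : Type*} [FunLike F A B] [RingHomClass F A B] (f : F) (hf : ∀ r ∈ R, f r ∈ T)
    (X : Set A) :
    Submodule.span T (f '' ↑(Submodule.span R X)) = Submodule.span T (f '' X) := by
  apply le_antisymm
  · rw [span_le]
    rintro y ⟨x, hx, rfl⟩
    induction hx using Submodule.span_induction with
    | mem x hx => exact subset_span ⟨x, hx, rfl⟩
    | zero => simp
    | add a b _ _ ha hb => rw [map_add]; exact add_mem ha hb
    | smul r a _ ha =>
        have : f (r • a) = (⟨f r, hf r r.2⟩ : T) • f a := by
          simp [Subring.smul_def, map_mul]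
        rw [this]
        exact smul_mem _ _ ha
  · exact span_mono (Set.image_mono subset_span)

lemma exists_rep' {R A : Type*} [CommSemiring R] [CommSemiring A] [Algebra R A]
    (M N : Submodule R A) {x : A} (h : x ∈ M * N) :
    ∃ (n : ℕ) (f g : Fin n → A), (∀ i, f i ∈ M) ∧ (∀ i, g i ∈ N) ∧ x = ∑ i, f i * g i := by
  refine Submodule.mul_induction_on h (fun m hm n hn => ⟨1, fun _ => m, fun _ => n,
    fun _ => hm, fun _ => hn, by simp⟩) ?_
  rintro a b ⟨n₁, f₁, g₁, hf₁, hg₁, rfl⟩ ⟨n₂, f₂, g₂, hf₂, hg₂, rfl⟩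
  refine ⟨n₁ + n₂, Fin.append f₁ f₂, Fin.append g₁ g₂, ?_, ?_, ?_⟩
  · intro i; induction i using Fin.addCases with
    | left i => simpa [Fin.append_left] using hf₁ i
    | right i => simpa [Fin.append_right] using hf₂ i
  · intro i; induction i using Fin.addCases with
    | left i => simpa [Fin.append_left] using hg₁ i
    | right i => simpa [Fin.append_right] using hg₂ i
  · rw [Fin.sum_univ_add]
    simp [Fin.append_left, Fin.append_right]

lemma fg_of_mul_eq_one {R A : Type*} [CommRing R] [CommRing A] [Algebra R A]
    {M N : Submodule R A} (h : M * N = 1) : M.FG := by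
  have h1 : (1 : A) ∈ M * N := by rw [h]; exact Submodule.one_le.mp le_rfl
  obtain ⟨n, f, g, hf, hg, h1⟩ := exists_rep' M N h1
  refine Submodule.fg_def.2 ⟨Set.range f, Set.finite_range f, le_antisymm ?_ ?_⟩
  · rw [span_le]; rintro x ⟨i, rfl⟩; exact hf i
  · intro a ha
    have hr : ∀ i, ∃ r : R, algebraMap R A r = a * g i := by
      intro i
      have : a * g i ∈ M * N := Submodule.mul_mem_mul ha (hg i)
      rw [h] at this
      exact Submodule.mem_one.1 this
    choose r hr using hr
    have : a = ∑ i, r i • f i := by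
      calc a = a * 1 := (mul_one a).symm
      _ = ∑ i, a * (f i * g i) := by rw [h1, Finset.mul_sum]
      _ = ∑ i, r i • f i := by
          apply Finset.sum_congr rfl
          intro i _
          rw [Algebra.smul_def, hr i]
          ring
    rw [this]
    exact Submodule.sum_mem _ fun i _ => Submodule.smul_mem _ _ (subset_span ⟨i, rfl⟩)

lemma pair_sum_split {β : Type*} [AddCommMonoid β] (n : ℕ) (x : Fin n → Fin n → β) :
    ∑ i, ∑ j, x i j =
      (∑ i, x i i) +
      ∑ p ∈ Finset.univ.filter (fun p : Fin n × Fin n => p.1 < p.2), (x p.1 p.2 + x p.2 p.1) := by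
  have huniv : ∑ i, ∑ j, x i j = ∑ p ∈ (univ : Finset (Fin n × Fin n)), x p.1 p.2 := by
    rw [← Finset.sum_product']
    rfl
  rw [huniv, ← Finset.sum_filter_add_sum_filter_not univ (fun p : Fin n × Fin n => p.1 = p.2)]
  congr 1
  · apply Finset.sum_nbij' (fun p => p.1) (fun i => (i, i)) <;> simp +contextual [eq_comm]
  · rw [← Finset.sum_filter_add_sum_filter_not _ (fun p : Fin n × Fin n => p.1 < p.2),
      Finset.filter_filter, Finset.filter_filter, Finset.sum_add_distrib]
    congr 1
    · apply Finset.sum_congr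
      · apply Finset.filter_congr; intro p _; constructor
        · rintro ⟨h1, h2⟩; exact h2
        · intro h; exact ⟨Fin.ne_of_lt h, h⟩
      · intros; rfl
    · apply Finset.sum_nbij' Prod.swap Prod.swap
      · rintro ⟨a, b⟩ hp
        simp only [mem_filter, mem_univ, true_and, Prod.swap_prod_mk] at hp ⊢
        omega
      · rintro ⟨a, b⟩ hp
        simp only [mem_filter, mem_univ, true_and, Prod.swap_prod_mk] at hp ⊢
        omega
      · simp
      · simp
      · simp

end Aux
open Submodule Finset Pointwise

section Quad
variable {Kf L : Type*} [Field Kf] [Field L] [Algebra Kf L]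

lemma E_mul (S : Subring L) (A A' : Submodule (S.comap (algebraMap Kf L)) Kf) :
    Submodule.span S (algebraMap Kf L '' ↑(A * A')) =
      Submodule.span S (algebraMap Kf L '' (A : Set Kf)) *
        Submodule.span S (algebraMap Kf L '' (A' : Set Kf)) := by
  have hf : ∀ r ∈ S.comap (algebraMap Kf L), algebraMap Kf L r ∈ S := fun r hr => hr
  have h1 : A * A' = Submodule.span (S.comap (algebraMap Kf L))
      ((A : Set Kf) * (A' : Set Kf)) := by
    rw [← Submodule.span_mul_span, Submodule.span_eq, Submodule.span_eq]
  rw [h1, span_image_span' _ S _ hf, Set.image_mul, Submodule.span_mul_span]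

lemma E_one (S : Subring L) :
    Submodule.span S (algebraMap Kf L ''
      ((1 : Submodule (S.comap (algebraMap Kf L)) Kf) : Set Kf)) = 1 := by
  have hf : ∀ r ∈ S.comap (algebraMap Kf L), algebraMap Kf L r ∈ S := fun r hr => hr
  rw [show (1 : Submodule (S.comap (algebraMap Kf L)) Kf)
      = Submodule.span _ {1} from Submodule.one_eq_span,
    span_image_span' _ S _ hf, Set.image_singleton, map_one]
  exact Submodule.one_eq_span.symm

lemma sm_mul (σ : L ≃ₐ[Kf] L) (S : Subring L) (hσS : ∀ r ∈ S, σ r ∈ S)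
    (M N : Submodule S L) :
    Submodule.span S (⇑σ '' ↑(M * N)) =
      Submodule.span S (⇑σ '' (M : Set L)) * Submodule.span S (⇑σ '' (N : Set L)) := by
  have h1 : M * N = Submodule.span S ((M : Set L) * (N : Set L)) := by
    rw [← Submodule.span_mul_span, Submodule.span_eq, Submodule.span_eq]
  rw [h1, span_image_span' S S σ hσS, Set.image_mul, Submodule.span_mul_span]

lemma sm_one (σ : L ≃ₐ[Kf] L) (S : Subring L) (hσS : ∀ r ∈ S, σ r ∈ S) :
    Submodule.span S (⇑σ '' ((1 : Submodule S L) : Set L)) = 1 := by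
  rw [show (1 : Submodule S L) = Submodule.span S {1} from Submodule.one_eq_span,
    span_image_span' S S σ hσS, Set.image_singleton, map_one]

lemma mem_oneS (S : Subring L) (x : L) : x ∈ (1 : Submodule S L) ↔ x ∈ S := by
  rw [Submodule.mem_one]
  exact ⟨fun ⟨y, hy⟩ => hy ▸ y.2, fun hx => ⟨⟨x, hx⟩, rfl⟩⟩

lemma ext_le (S : Subring L) (A A' : Submodule (S.comap (algebraMap Kf L)) Kf)
    (hA : ∃ J, A * J = 1)
    (hE : Submodule.span S (algebraMap Kf L '' (A' : Set Kf)) ≤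
      Submodule.span S (algebraMap Kf L '' (A : Set Kf))) : A' ≤ A := by
  obtain ⟨J, hJ⟩ := hA
  intro a' ha'
  have key : ∀ x ∈ A * J, a' * x ∈ A := by
    intro x hx
    refine Submodule.mul_induction_on hx ?_ ?_
    · intro m hm n hn
      have hr : algebraMap Kf L (a' * n) ∈ S := by
        have h1 : algebraMap Kf L a' ∈ Submodule.span S (algebraMap Kf L '' (A : Set Kf)) :=
          hE (subset_span ⟨a', ha', rfl⟩)
        have h2 : algebraMap Kf L n ∈ Submodule.span S (algebraMap Kf L '' (J : Set Kf)) :=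
          subset_span ⟨n, hn, rfl⟩
        have h3 := Submodule.mul_mem_mul h1 h2
        rw [← E_mul, hJ, E_one] at h3
        rw [map_mul]
        exact (mem_oneS S _).1 h3
      have hmem : (⟨a' * n, hr⟩ : S.comap (algebraMap Kf L)) • m ∈ A := A.smul_mem _ hm
      convert hmem using 1
      show a' * (m * n) = a' * n * m
      ring
    · intro x y hx hy
      rw [mul_add]
      exact add_mem hx hy
  have h1AJ : (1 : Kf) ∈ A * J := by rw [hJ]; exact Submodule.one_le.mp le_rfl
  simpa using key 1 h1AJ

end Quad
open Submodule

section
variable {Kf L : Type*} [Field Kf] [NumberField Kf] [Field L] [NumberField L] [Algebra Kf L]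

lemma span_pair_top (hdeg : Module.finrank Kf L = 2) (x : L)
    (hx : ¬ ∃ k : Kf, algebraMap Kf L k = x) :
    Submodule.span Kf ({1, x} : Set L) = ⊤ := by
  have hinj := (algebraMap Kf L).injective
  have hli : LinearIndependent Kf ![(1 : L), x] := by
    rw [LinearIndependent.pair_iff]
    intro s t hst
    rw [Algebra.smul_def, Algebra.smul_def, mul_one] at hst
    by_cases ht : t = 0
    · subst ht
      simp only [map_zero, zero_mul, add_zero] at hst
      exact ⟨hinj (by rw [hst, map_zero]), rfl⟩
    · exfalso
      apply hx
      refine ⟨-s/t, ?_⟩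
      have htL : algebraMap Kf L t ≠ 0 := fun h => ht (hinj (by rw [h, map_zero]))
      rw [map_div₀, map_neg]
      field_simp
      linear_combination -hst
  have hcard : Fintype.card (Fin 2) = Module.finrank Kf L := by simp [hdeg]
  have htop := hli.span_eq_top_of_card_eq_finrank hcard
  have hset : ({1, x} : Set L) = Set.range ![(1:L), x] := by
    ext y; simp [Fin.exists_fin_two]; tauto
  rw [hset]
  exact htop
end

section
variable {Kf L : Type*} [Field Kf] [NumberField Kf] [Field L] [NumberField L] [Algebra Kf L]

lemma sigma_fixed (hdeg : Module.finrank Kf L = 2) (σ : L ≃ₐ[Kf] L)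
    (hσ : σ ≠ AlgEquiv.refl) (x : L) (hx : σ x = x) : ∃ k, algebraMap Kf L k = x := by
  by_contra h
  have htop := span_pair_top hdeg x h
  apply hσ
  have hlin : σ.toLinearMap = (AlgEquiv.refl : L ≃ₐ[Kf] L).toLinearMap := by
    apply LinearMap.ext_on htop
    rintro y (rfl | rfl)
    · simp
    · simpa using hx
  exact AlgEquiv.ext fun y => LinearMap.congr_fun hlin y

lemma sigma_sq (hdeg : Module.finrank Kf L = 2) (σ : L ≃ₐ[Kf] L)
    (hσ : σ ≠ AlgEquiv.refl) (x : L) : σ (σ x) = x := by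
  obtain ⟨θ, hθ⟩ : ∃ θ : L, σ θ ≠ θ := by
    by_contra h
    push_neg at h
    exact hσ (AlgEquiv.ext fun y => h y)
  have hθK : ¬ ∃ k : Kf, algebraMap Kf L k = θ := by
    rintro ⟨k, rfl⟩
    exact hθ (σ.commutes k)
  have htop := span_pair_top hdeg θ hθK
  have hmem : θ * θ ∈ Submodule.span Kf ({1, θ} : Set L) := htop ▸ Submodule.mem_top
  obtain ⟨a, b, hab⟩ := Submodule.mem_span_pair.1 hmem
  rw [Algebra.smul_def, Algebra.smul_def, mul_one] at hab
  have h2 : algebraMap Kf L a + algebraMap Kf L b * σ θ = σ θ * σ θ := by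
    have h := congrArg σ hab
    rw [map_add, map_mul, map_mul] at h
    simpa [σ.commutes] using h
  have hsub : (θ + σ θ - algebraMap Kf L b) * (θ - σ θ) = 0 := by
    linear_combination h2 - hab
  have hne : θ - σ θ ≠ 0 := fun h => hθ (by linear_combination -h)
  have htr : θ + σ θ = algebraMap Kf L b := by
    rcases mul_eq_zero.1 hsub with h | h
    · linear_combination h
    · exact absurd h hne
  have hσσθ : σ (σ θ) = θ := by
    have h := congrArg σ htr
    rw [map_add, σ.commutes] at h
    linear_combination h - htr
  have hlin : (σ.trans σ).toLinearMap = (AlgEquiv.refl : L ≃ₐ[Kf] L).toLinearMap := by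
    apply LinearMap.ext_on htop
    rintro y (rfl | rfl)
    · simp
    · simpa using hσσθ
  exact LinearMap.congr_fun hlin x
end


open Submodule Finset

set_option maxHeartbeats 1000000 in
set_option synthInstance.maxHeartbeats 400000 in
/-- Let `L/Kf` be a quadratic extension of number fields with nontrivial
automorphism `σ`, let `S` be an order of `L` with `σ(S) = S`, and let `R = S ∩ Kf`. Then for
every invertible fractional `S`-ideal `B` there is a unique invertible fractional `R`-ideal
`A` such that the `S`-submodule of `L` generated by `A` equals `B·σ(B)`. -/
theorem norm_of_invertible_ideal_exists_unique
    (Kf L : Type*) [Field Kf] [NumberField Kf] [Field L] [NumberField L] [Algebra Kf L]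
    (hdeg : Module.finrank Kf L = 2)
    (σ : L ≃ₐ[Kf] L) (hσ : σ ≠ AlgEquiv.refl)
    (S : Subring L) (hS : IsOrder L S)
    (hσS : ∀ x : L, x ∈ S ↔ σ x ∈ S)
    (B : Submodule S L)
    (hBfrac : IsFracIdeal L S B) (hBinv : IsInvertibleIdeal L S B) :
    ∃! A : Submodule (S.comap (algebraMap Kf L)) Kf,
      (IsFracIdeal Kf (S.comap (algebraMap Kf L)) A ∧
        IsInvertibleIdeal Kf (S.comap (algebraMap Kf L)) A) ∧
      Submodule.span S (algebraMap Kf L '' (A : Set Kf))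
        = B * Submodule.span S ((⇑σ) '' (B : Set L)) := by
  classical
  obtain ⟨C, hC⟩ := hBinv
  have hinj : Function.Injective (algebraMap Kf L) := (algebraMap Kf L).injective
  have hσσ : ∀ x : L, σ (σ x) = x := sigma_sq hdeg σ hσ
  have hfix : ∀ x : L, σ x = x → ∃ k, algebraMap Kf L k = x := sigma_fixed hdeg σ hσ
  have hσS' : ∀ r ∈ S, σ r ∈ S := fun r hr => (hσS r).1 hr
  have hκ' : ∀ b : L, ∃ k : Kf, algebraMap Kf L k = b * σ b := by
    intro b; apply hfix; rw [map_mul, hσσ b]; ring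
  choose κ hκ using hκ'
  have hf : ∀ r ∈ S.comap (algebraMap Kf L), algebraMap Kf L r ∈ S := fun r hr => hr
  -- the candidate ideal and its partner
  set A0 : Submodule (S.comap (algebraMap Kf L)) Kf :=
    Submodule.span _ {k : Kf | ∃ b ∈ B, algebraMap Kf L k = b * σ b} with hA0
  set A0' : Submodule (S.comap (algebraMap Kf L)) Kf :=
    Submodule.span _ {k : Kf | ∃ c ∈ C, algebraMap Kf L k = c * σ c} with hA0'
  have hκB : ∀ b ∈ B, κ b ∈ A0 := fun b hb => hA0 ▸ subset_span ⟨b, hb, hκ b⟩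
  have hκC : ∀ c ∈ C, κ c ∈ A0' := fun c hc => hA0' ▸ subset_span ⟨c, hc, hκ c⟩
  -- identification of the S-span of A0
  have hEA0 : Submodule.span S (algebraMap Kf L '' (A0 : Set Kf)) =
      Submodule.span S ((fun b => b * σ b) '' (B : Set L)) := by
    rw [hA0, span_image_span' _ S _ hf]
    congr 1
    ext x
    constructor
    · rintro ⟨k, ⟨b, hb, hk⟩, rfl⟩; exact ⟨b, hb, hk.symm⟩
    · rintro ⟨b, hb, rfl⟩; exact ⟨κ b, ⟨b, hb, hκ b⟩, hκ b⟩
  have hEA0' : Submodule.span S (algebraMap Kf L '' (A0' : Set Kf)) =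
      Submodule.span S ((fun c => c * σ c) '' (C : Set L)) := by
    rw [hA0', span_image_span' _ S _ hf]
    congr 1
    ext x
    constructor
    · rintro ⟨k, ⟨c, hc, hk⟩, rfl⟩; exact ⟨c, hc, hk.symm⟩
    · rintro ⟨c, hc, rfl⟩; exact ⟨κ c, ⟨c, hc, hκ c⟩, hκ c⟩
  -- M and M' sit inside the obvious products
  have hMle : Submodule.span S ((fun b => b * σ b) '' (B : Set L)) ≤
      B * Submodule.span S (⇑σ '' (B : Set L)) := by
    rw [Submodule.span_le]
    rintro x ⟨b, hb, rfl⟩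
    exact Submodule.mul_mem_mul hb (subset_span ⟨b, hb, rfl⟩)
  have hM'le : Submodule.span S ((fun c => c * σ c) '' (C : Set L)) ≤
      C * Submodule.span S (⇑σ '' (C : Set L)) := by
    rw [Submodule.span_le]
    rintro x ⟨c, hc, rfl⟩
    exact Submodule.mul_mem_mul hc (subset_span ⟨c, hc, rfl⟩)
  -- the σ-conjugates multiply to 1
  have hprod : (B * Submodule.span S (⇑σ '' (B : Set L))) *
      (C * Submodule.span S (⇑σ '' (C : Set L))) = 1 := by
    rw [mul_mul_mul_comm, ← sm_mul σ S hσS', hC, sm_one σ S hσS', one_mul]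
  -- members of B*C are in S
  have hbcS : ∀ x ∈ B, ∀ y ∈ C, x * y ∈ S := by
    intro x hx y hy
    have : x * y ∈ B * C := Submodule.mul_mem_mul hx hy
    rw [hC] at this
    exact (mem_oneS S _).1 this
  -- A0 * A0' is contained in 1
  have hI_le : A0 * A0' ≤ 1 := by
    rw [hA0, hA0', Submodule.span_mul_span, Submodule.span_le]
    rintro x ⟨k, ⟨b, hb, hkb⟩, k', ⟨c, hc, hkc⟩, rfl⟩
    rw [SetLike.mem_coe, Submodule.mem_one]
    have hbc := hbcS b hb c hc
    have hS2 : algebraMap Kf L (k * k') ∈ S := by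
      rw [map_mul, hkb, hkc, show b * σ b * (c * σ c) = b * c * σ (b * c) by
        rw [map_mul]; ring]
      exact S.mul_mem hbc (hσS' _ hbc)
    exact ⟨⟨k * k', hS2⟩, rfl⟩
  -- the key point: 1 ∈ A0 * A0'
  have hone : (1 : Kf) ∈ A0 * A0' := by
    have h1BC : (1 : L) ∈ B * C := by rw [hC]; exact Submodule.one_le.mp le_rfl
    obtain ⟨n, b, c, hb, hc, h1⟩ := exists_rep' B C h1BC
    have hbc : ∀ i, b i * c i ∈ S := fun i => hbcS _ (hb i) _ (hc i)
    have hαex : ∀ i j : Fin n, ∃ k : Kf,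
        algebraMap Kf L k = (b i * c i) * σ (b j * c j) + (b j * c j) * σ (b i * c i) := by
      intro i j
      apply hfix
      simp only [map_add, map_mul, hσσ]
      ring
    choose α hα using hαex
    have hαS : ∀ i j, α i j ∈ S.comap (algebraMap Kf L) := by
      intro i j
      show algebraMap Kf L (α i j) ∈ S
      rw [hα]
      exact S.add_mem (S.mul_mem (hbc i) (hσS' _ (hbc j))) (S.mul_mem (hbc j) (hσS' _ (hbc i)))
    have hT : ∀ i j : Fin n, algebraMap Kf L (κ (b i + b j) - κ (b i) - κ (b j))
        = b i * σ (b j) + b j * σ (b i) := by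
      intro i j
      rw [map_sub, map_sub, hκ, hκ, hκ, map_add]
      ring
    have hT' : ∀ i j : Fin n, algebraMap Kf L (κ (c i + c j) - κ (c i) - κ (c j))
        = c i * σ (c j) + c j * σ (c i) := by
      intro i j
      rw [map_sub, map_sub, hκ, hκ, hκ, map_add]
      ring
    have hTA : ∀ i j, κ (b i + b j) - κ (b i) - κ (b j) ∈ A0 :=
      fun i j => sub_mem (sub_mem (hκB _ (add_mem (hb i) (hb j))) (hκB _ (hb i))) (hκB _ (hb j))
    have hTA' : ∀ i j, κ (c i + c j) - κ (c i) - κ (c j) ∈ A0' :=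
      fun i j => sub_mem (sub_mem (hκC _ (add_mem (hc i) (hc j))) (hκC _ (hc i))) (hκC _ (hc j))
    have hImul : ∀ x ∈ A0 * A0', ∀ y ∈ A0 * A0', x * y ∈ A0 * A0' := by
      intro x hx y hy
      have hmm : x * y ∈ (A0 * A0') * (A0 * A0') := Submodule.mul_mem_mul hx hy
      have hle : (A0 * A0') * (A0 * A0') ≤ 1 * (A0 * A0') := mul_le_mul' hI_le le_rfl
      rw [one_mul] at hle
      exact hle hmm
    -- each α i j squares into A0 * A0'
    have hα2 : ∀ i j, α i j * α i j ∈ A0 * A0' := by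
      intro i j
      have hid : α i j * ((κ (b i + b j) - κ (b i) - κ (b j)) *
            (κ (c i + c j) - κ (c i) - κ (c j)) - α i j) =
          ((κ (b i + b j) - κ (b i) - κ (b j)) * κ (c i)) *
            ((κ (b i + b j) - κ (b i) - κ (b j)) * κ (c j)) +
          (κ (b i) * (κ (c i + c j) - κ (c i) - κ (c j))) *
            (κ (b j) * (κ (c i + c j) - κ (c i) - κ (c j))) -
          ((κ (b i) * κ (c i)) * (κ (b j) * κ (c j)) +
            (κ (b i) * κ (c i)) * (κ (b j) * κ (c j)) +
            ((κ (b i) * κ (c i)) * (κ (b j) * κ (c j)) +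
              (κ (b i) * κ (c i)) * (κ (b j) * κ (c j)))) := by
        apply hinj
        simp only [map_mul, map_add, map_sub, hα, hκ]
        ring
      have hmemβ : α i j * ((κ (b i + b j) - κ (b i) - κ (b j)) *
          (κ (c i + c j) - κ (c i) - κ (c j)) - α i j) ∈ A0 * A0' := by
        rw [hid]
        have hP : (κ (b i) * κ (c i)) * (κ (b j) * κ (c j)) ∈ A0 * A0' :=
          hImul _ (Submodule.mul_mem_mul (hκB _ (hb i)) (hκC _ (hc i)))
            _ (Submodule.mul_mem_mul (hκB _ (hb j)) (hκC _ (hc j)))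
        refine sub_mem (add_mem ?_ ?_) (add_mem (add_mem hP hP) (add_mem hP hP))
        · exact hImul _ (Submodule.mul_mem_mul (hTA i j) (hκC _ (hc i)))
            _ (Submodule.mul_mem_mul (hTA i j) (hκC _ (hc j)))
        · exact hImul _ (Submodule.mul_mem_mul (hκB _ (hb i)) (hTA' i j))
            _ (Submodule.mul_mem_mul (hκB _ (hb j)) (hTA' i j))
      have hTT : (κ (b i + b j) - κ (b i) - κ (b j)) *
          (κ (c i + c j) - κ (c i) - κ (c j)) ∈ A0 * A0' :=
        Submodule.mul_mem_mul (hTA i j) (hTA' i j)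
      have hsmul : α i j * ((κ (b i + b j) - κ (b i) - κ (b j)) *
          (κ (c i + c j) - κ (c i) - κ (c j))) ∈ A0 * A0' := by
        have := Submodule.smul_mem (A0 * A0') (⟨α i j, hαS i j⟩ : S.comap (algebraMap Kf L)) hTT
        simpa [Subring.smul_def] using this
      have : α i j * α i j = α i j * ((κ (b i + b j) - κ (b i) - κ (b j)) *
          (κ (c i + c j) - κ (c i) - κ (c j))) - α i j * ((κ (b i + b j) - κ (b i) - κ (b j)) *
          (κ (c i + c j) - κ (c i) - κ (c j)) - α i j) := by ring
      rw [this]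
      exact sub_mem hsmul hmemβ
    -- the decomposition of 1
    have hsum : (1 : Kf) = (∑ i, κ (b i) * κ (c i)) +
        ∑ p ∈ Finset.univ.filter (fun p : Fin n × Fin n => p.1 < p.2), α p.1 p.2 := by
      apply hinj
      rw [map_one, map_add, map_sum, map_sum]
      have eL : (∑ i, algebraMap Kf L (κ (b i) * κ (c i)))
          = ∑ i, (b i * c i) * σ (b i * c i) := by
        refine Finset.sum_congr rfl fun i _ => ?_
        rw [map_mul, hκ, hκ, map_mul]
        ring
      have eR : (∑ p ∈ Finset.univ.filter (fun p : Fin n × Fin n => p.1 < p.2),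
            algebraMap Kf L (α p.1 p.2))
          = ∑ p ∈ Finset.univ.filter (fun p : Fin n × Fin n => p.1 < p.2),
              ((b p.1 * c p.1) * σ (b p.2 * c p.2) + (b p.2 * c p.2) * σ (b p.1 * c p.1)) :=
        Finset.sum_congr rfl fun p _ => hα p.1 p.2
      rw [eL, eR, ← pair_sum_split n (fun i j => (b i * c i) * σ (b j * c j))]
      have e2 : ∑ i, ∑ j, (b i * c i) * σ (b j * c j)
          = (∑ i, b i * c i) * σ (∑ i, b i * c i) := by
        rw [map_sum, Finset.sum_mul_sum]
      rw [e2, ← h1, map_one, mul_one]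
    -- pass to the quotient of the subring
    set I0 : Ideal (S.comap (algebraMap Kf L)) :=
      Submodule.comap (Algebra.linearMap (S.comap (algebraMap Kf L)) Kf) (A0 * A0') with hI0
    have htS : ∀ i : Fin n, κ (b i) * κ (c i) ∈ S.comap (algebraMap Kf L) := by
      intro i
      have := hI_le (Submodule.mul_mem_mul (hκB _ (hb i)) (hκC _ (hc i)))
      exact (mem_oneS (S.comap (algebraMap Kf L)) _).1 this
    have hRsum : (1 : S.comap (algebraMap Kf L)) =
        (⟨∑ i, κ (b i) * κ (c i), Subring.sum_mem _ fun i _ => htS i⟩ :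
          S.comap (algebraMap Kf L)) +
        ∑ p ∈ Finset.univ.filter (fun p : Fin n × Fin n => p.1 < p.2),
          (⟨α p.1 p.2, hαS p.1 p.2⟩ : S.comap (algebraMap Kf L)) := by
      apply Subtype.ext
      push_cast
      exact hsum
    have htI0 : (⟨∑ i, κ (b i) * κ (c i), Subring.sum_mem _ fun i _ => htS i⟩ :
        S.comap (algebraMap Kf L)) ∈ I0 := by
      refine Submodule.mem_comap.2 ?_
      show (∑ i, κ (b i) * κ (c i)) ∈ A0 * A0'
      exact Submodule.sum_mem _ fun i _ =>
        Submodule.mul_mem_mul (hκB _ (hb i)) (hκC _ (hc i))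
    have hnil : IsNilpotent (Ideal.Quotient.mk I0 (1 : S.comap (algebraMap Kf L))) := by
      rw [hRsum, map_add, Ideal.Quotient.eq_zero_iff_mem.2 htI0, zero_add, map_sum]
      refine isNilpotent_sum fun p hp => ⟨2, ?_⟩
      rw [← map_pow]
      refine Ideal.Quotient.eq_zero_iff_mem.2 (Submodule.mem_comap.2 ?_)
      have hcoe : (((⟨α p.1 p.2, hαS p.1 p.2⟩ : S.comap (algebraMap Kf L)) ^ 2 :
          S.comap (algebraMap Kf L)) : Kf) = α p.1 p.2 * α p.1 p.2 := by
        push_cast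
        ring
      show (((⟨α p.1 p.2, hαS p.1 p.2⟩ : S.comap (algebraMap Kf L)) ^ 2 :
          S.comap (algebraMap Kf L)) : Kf) ∈ A0 * A0'
      rw [hcoe]
      exact hα2 p.1 p.2
    obtain ⟨m, hm⟩ := hnil
    rw [← map_pow, one_pow] at hm
    have h1I0 := Ideal.Quotient.eq_zero_iff_mem.1 hm
    simpa [hI0] using h1I0
  have hinv0 : A0 * A0' = 1 := le_antisymm hI_le (Submodule.one_le.2 hone)
  -- M * M' = 1
  have hMM' : Submodule.span S ((fun b => b * σ b) '' (B : Set L)) *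
      Submodule.span S ((fun c => c * σ c) '' (C : Set L)) = 1 := by
    rw [← hEA0, ← hEA0', ← E_mul, hinv0, E_one]
  -- main identity
  have hmain : B * Submodule.span S (⇑σ '' (B : Set L)) =
      Submodule.span S ((fun b => b * σ b) '' (B : Set L)) := by
    refine le_antisymm ?_ hMle
    have h1 : (B * Submodule.span S (⇑σ '' (B : Set L))) *
        Submodule.span S ((fun c => c * σ c) '' (C : Set L)) ≤ 1 := by
      calc (B * Submodule.span S (⇑σ '' (B : Set L))) *
            Submodule.span S ((fun c => c * σ c) '' (C : Set L))
          ≤ (B * Submodule.span S (⇑σ '' (B : Set L))) *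
            (C * Submodule.span S (⇑σ '' (C : Set L))) :=
            mul_le_mul' le_rfl hM'le
        _ = 1 := hprod
    have h2 : Submodule.span S ((fun c => c * σ c) '' (C : Set L)) *
        Submodule.span S ((fun b => b * σ b) '' (B : Set L)) = 1 := by
      rw [mul_comm]; exact hMM'
    calc B * Submodule.span S (⇑σ '' (B : Set L))
        = (B * Submodule.span S (⇑σ '' (B : Set L))) *
          (Submodule.span S ((fun c => c * σ c) '' (C : Set L)) *
            Submodule.span S ((fun b => b * σ b) '' (B : Set L))) := by rw [h2, mul_one]
      _ = ((B * Submodule.span S (⇑σ '' (B : Set L))) *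
          Submodule.span S ((fun c => c * σ c) '' (C : Set L))) *
            Submodule.span S ((fun b => b * σ b) '' (B : Set L)) :=
          (mul_assoc (B * Submodule.span S (⇑σ '' (B : Set L)))
            (Submodule.span S ((fun c => c * σ c) '' (C : Set L)))
            (Submodule.span S ((fun b => b * σ b) '' (B : Set L)))).symm
      _ ≤ 1 * Submodule.span S ((fun b => b * σ b) '' (B : Set L)) :=
          mul_le_mul' h1 le_rfl
      _ = Submodule.span S ((fun b => b * σ b) '' (B : Set L)) := one_mul _
  -- conclusion
  refine ⟨A0, ⟨⟨⟨?_, ?_⟩, ⟨A0', hinv0⟩⟩, hEA0.trans hmain.symm⟩, ?_⟩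
  · -- A0 ≠ ⊥
    obtain ⟨b0, hb0B, hb0⟩ := (Submodule.ne_bot_iff B).1 hBfrac.1
    refine (Submodule.ne_bot_iff A0).2 ⟨κ b0, hκB b0 hb0B, fun h => ?_⟩
    have h2 := hκ b0
    rw [h, map_zero] at h2
    have hσb0 : σ b0 ≠ 0 := fun hs => hb0 (by
      have := σ.injective (hs.trans (map_zero σ).symm)
      simpa using this)
    exact (mul_ne_zero hb0 hσb0) h2.symm
  · exact fg_of_mul_eq_one hinv0
  · -- uniqueness
    rintro A' ⟨⟨hfrac', hinv'⟩, heq'⟩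
    have hEeq : Submodule.span S (algebraMap Kf L '' (A' : Set Kf)) =
        Submodule.span S (algebraMap Kf L '' (A0 : Set Kf)) := by
      rw [heq', hEA0, hmain]
    exact le_antisymm (ext_le S A0 A' ⟨A0', hinv0⟩ hEeq.le)
      (ext_le S A' A0 hinv' hEeq.ge)



end
end

section
/- Let K be a CM field with maximal totally real subfield K⁺, let q be a positive integer, and let π be an algebraic integer with K = K⁺(π), π ∉ K⁺, and π·π̄ = q. Let B be a Gorenstein order in K⁺ that contains π + π̄. Then the ring R = B[π] is a convenient order in K with real subring R⁺ = R ∩ K⁺ = B; in particular R is stable under complex conjugation and its trace dual is generated as an R-module by its pure imaginary elements. -/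
open NumberField Polynomial

noncomputable section

/-- Let `K` be a CM field with maximal totally real subfield `Kp`, let `q`
be a positive integer, and let `π` be an algebraic integer with `K = Kp(π)`, `π ∉ Kp`, and
`π·π̄ = q`. If `B` is a Gorenstein order of `Kp` containing `π + π̄`, then `R = B[π]` is a
convenient order of `K` with real subring `R ∩ Kp = B`: it is an order, stable under complex
conjugation, its real subring is `B`, and its trace dual is generated as an `R`-module by
its pure imaginary elements. -/
theorem adjoin_pi_to_Gorenstein_real_order_is_convenient
    (Kp K : Type*) [Field Kp] [NumberField Kp] [Field K] [NumberField K] [Algebra Kp K]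
    (htotreal : ∀ (phi : Kp →+* ℂ) (x : Kp), (phi x).im = 0)
    (htotimag : ∀ phi : K →+* ℂ, ∃ x : K, (phi x).im ≠ 0)
    (hdeg : Module.finrank Kp K = 2)
    (conj : K ≃ₐ[Kp] K)
    (hconj_ne : conj ≠ AlgEquiv.refl)
    (hconj_inv : ∀ x, conj (conj x) = x)
    (hfix : ∀ x : K, conj x = x ↔ x ∈ (algebraMap Kp K).range)
    (q : ℕ) (hq : 0 < q)
    (π : K) (hπint : IsIntegral ℤ π)
    (hgen : Algebra.adjoin Kp ({π} : Set K) = ⊤)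
    (hπnotreal : π ∉ (algebraMap Kp K).range)
    (hπq : π * conj π = (q : K))
    -- `B` is a Gorenstein order of `Kp` containing `π + π̄`
    (B : Subring Kp) (hB : IsOrder Kp B) (hBGor : IsGorenstein Kp B)
    (htrace : π + conj π ∈ B.map (algebraMap Kp K)) :
    -- Then `R = B[π]` is a convenient order with real subring `B`:
    IsOrder K (Subring.closure ((algebraMap Kp K) '' (B : Set Kp) ∪ {π})) ∧
    (∀ x ∈ Subring.closure ((algebraMap Kp K) '' (B : Set Kp) ∪ {π}),
        conj x ∈ Subring.closure ((algebraMap Kp K) '' (B : Set Kp) ∪ {π})) ∧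
    (Subring.closure ((algebraMap Kp K) '' (B : Set Kp) ∪ {π})).comap (algebraMap Kp K)
        = B ∧
    Submodule.span (Subring.closure ((algebraMap Kp K) '' (B : Set Kp) ∪ {π}))
        {x : K | x ∈ traceDual K (Subring.closure ((algebraMap Kp K) '' (B : Set Kp) ∪ {π}))
          ∧ conj x = -x}
      = traceDual K (Subring.closure ((algebraMap Kp K) '' (B : Set Kp) ∪ {π})) := by
  classical
  set φ := algebraMap Kp K with hφdef
  have hinj : Function.Injective φ := φ.injective
  obtain ⟨t₀, ht₀B, ht₀⟩ := htrace
  set R := Subring.closure ((algebraMap Kp K) '' (B : Set Kp) ∪ {π}) with hRdef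
  have hconjφ : ∀ c : Kp, conj (φ c) = φ c := fun c => (hfix (φ c)).2 ⟨c, rfl⟩
  have hconjπ : conj π = φ t₀ - π := by rw [ht₀]; ring
  have hδ : π - conj π ≠ 0 := by
    intro h
    exact hπnotreal ((hfix π).1 (sub_eq_zero.mp h).symm)
  have hπsq : π ^ 2 = φ t₀ * π - (q:K) := by
    have h := hπq
    rw [hconjπ] at h
    linear_combination -h
  -- membership characterization of R
  have hπR : π ∈ R := Subring.subset_closure (Or.inr rfl)
  have hφB : ∀ a ∈ B, φ a ∈ R := fun a ha => Subring.subset_closure (Or.inl ⟨a, ha, rfl⟩)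
  have hmem : ∀ x : K, x ∈ R ↔ ∃ a ∈ B, ∃ b ∈ B, x = φ a + φ b * π := by
    intro x
    constructor
    · intro hx
      induction hx using Subring.closure_induction with
      | mem y hy =>
        rcases hy with ⟨a, ha, rfl⟩ | hy
        · exact ⟨a, ha, 0, B.zero_mem, by simp [hφdef]⟩
        · refine ⟨0, B.zero_mem, 1, B.one_mem, ?_⟩
          rw [Set.mem_singleton_iff.mp hy]; simp
      | zero => exact ⟨0, B.zero_mem, 0, B.zero_mem, by simp⟩
      | one => exact ⟨1, B.one_mem, 0, B.zero_mem, by simp⟩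
      | add x y hx hy ihx ihy =>
        obtain ⟨a1, h1, b1, h2, rfl⟩ := ihx
        obtain ⟨a2, h3, b2, h4, rfl⟩ := ihy
        exact ⟨a1 + a2, B.add_mem h1 h3, b1 + b2, B.add_mem h2 h4, by
          simp only [map_add]; ring⟩
      | neg x hx ihx =>
        obtain ⟨a1, h1, b1, h2, rfl⟩ := ihx
        exact ⟨-a1, B.neg_mem h1, -b1, B.neg_mem h2, by simp only [map_neg]; ring⟩
      | mul x y hx hy ihx ihy =>
        obtain ⟨a1, h1, b1, h2, rfl⟩ := ihx
        obtain ⟨a2, h3, b2, h4, rfl⟩ := ihy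
        refine ⟨a1 * a2 - b1 * b2 * q, B.sub_mem (B.mul_mem h1 h3)
            (B.mul_mem (B.mul_mem h2 h4) (natCast_mem B q)),
          a1 * b2 + b1 * a2 + b1 * b2 * t₀,
          B.add_mem (B.add_mem (B.mul_mem h1 h4) (B.mul_mem h2 h3))
            (B.mul_mem (B.mul_mem h2 h4) ht₀B), ?_⟩
        simp only [map_add, map_sub, map_mul, map_natCast]
        linear_combination φ b1 * φ b2 * hπsq
    · rintro ⟨a, ha, b, hb, rfl⟩
      exact Subring.add_mem _ (hφB a ha) (Subring.mul_mem _ (hφB b hb) hπR)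
  -- span of {1, π} over Kp
  have hspan : Submodule.span Kp ({1, π} : Set K) = ⊤ := by
    have hpow : ∀ n : ℕ, π ^ n ∈ Submodule.span Kp ({1, π} : Set K) := by
      intro n
      induction n using Nat.strong_induction_on with
      | _ n ih =>
        match n with
        | 0 => exact Submodule.subset_span (by simp)
        | 1 => simpa using Submodule.subset_span (by simp : π ∈ ({1, π} : Set K))
        | (k+2) =>
          have h0 := ih k (by omega)
          have h1 := ih (k+1) (by omega)
          have key : π ^ (k+2) = φ t₀ * π ^ (k+1) - (q:K) * π ^ k := by
            have h2 : π ^ (k+2) = π ^ k * π ^ 2 := by ring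
            rw [h2, hπsq]; ring
          rw [key]
          refine sub_mem ?_ ?_
          · rw [← Algebra.smul_def]
            exact Submodule.smul_mem _ _ h1
          · have h3 : (q:K) * π ^ k = (q:Kp) • π ^ k := by
              rw [Algebra.smul_def, map_natCast]
            rw [h3]
            exact Submodule.smul_mem _ _ h0
    rw [eq_top_iff]
    intro x _
    have hx : x ∈ Algebra.adjoin Kp ({π} : Set K) := hgen ▸ Algebra.mem_top
    rw [Algebra.adjoin_singleton_eq_range_aeval, AlgHom.mem_range] at hx
    obtain ⟨p, rfl⟩ := hx
    rw [Polynomial.aeval_eq_sum_range]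
    exact Submodule.sum_mem _ fun i _ => Submodule.smul_mem _ _ (hpow i)
  haveI hfinKpK : Module.Finite Kp K := by
    refine ⟨⟨{1, π}, ?_⟩⟩
    simpa using hspan
  haveI hST : IsScalarTower ℚ Kp K := by
    refine IsScalarTower.of_algebraMap_eq fun x => ?_
    rw [eq_ratCast (algebraMap ℚ K), eq_ratCast (algebraMap ℚ Kp), map_ratCast]
  -- trace lemma
  have htr : ∀ x : K, φ (Algebra.trace Kp K x) = x + conj x := by
    have htrπ : Algebra.trace Kp K π = t₀ := by
      have h1 : Algebra.trace Kp K (conj π) = Algebra.trace Kp K π :=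
        Algebra.trace_eq_of_algEquiv conj π
      have h2 : Algebra.trace Kp K (π + conj π) = 2 * t₀ := by
        rw [← ht₀, Algebra.trace_algebraMap, hdeg, nsmul_eq_mul]
        norm_num
      rw [map_add, h1] at h2
      have h3 : (2:Kp) * Algebra.trace Kp K π = 2 * t₀ := by linear_combination h2
      exact mul_left_cancel₀ two_ne_zero h3
    have key : (Algebra.linearMap Kp K ∘ₗ Algebra.trace Kp K)
        = (LinearMap.id + conj.toLinearMap : K →ₗ[Kp] K) := by
      apply LinearMap.ext_on hspan
      rintro x (rfl | rfl)
      · simp only [LinearMap.comp_apply, LinearMap.add_apply, LinearMap.id_apply,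
          AlgEquiv.toLinearMap_apply, map_one, Algebra.linearMap_apply]
        rw [show (1:K) = algebraMap Kp K 1 from (map_one _).symm, Algebra.trace_algebraMap, hdeg]
        rw [nsmul_eq_mul, mul_one, map_natCast]
        norm_num
      · simp only [LinearMap.comp_apply, LinearMap.add_apply, LinearMap.id_apply,
          AlgEquiv.toLinearMap_apply, Algebra.linearMap_apply, htrπ, ht₀]; exact ht₀
    intro x
    simpa using LinearMap.congr_fun key x
  have htrQ : ∀ y : K, Algebra.trace ℚ K y = Algebra.trace ℚ Kp (Algebra.trace Kp K y) :=
    fun y => (Algebra.trace_trace y).symm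
  -- nonzero denominators after rewriting conj π
  have hδ' : π - (φ t₀ - π) ≠ 0 := by rw [← hconjπ]; exact hδ
  have hδ'' : (φ t₀ - π) - π ≠ 0 := fun h => hδ' (by linear_combination -h)
  -- sublemma: pure imaginary elements of the trace dual from B-dual elements
  have hpure : ∀ w₀ : Kp, (∀ b ∈ B, ∃ n : ℤ, Algebra.trace ℚ Kp (w₀ * b) = (n:ℚ)) →
      φ w₀ * (π - conj π)⁻¹ ∈ traceDual K R ∧
        conj (φ w₀ * (π - conj π)⁻¹) = -(φ w₀ * (π - conj π)⁻¹) := by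
    intro w₀ hw₀
    constructor
    · intro r hr
      obtain ⟨a, ha, b, hb, rfl⟩ := (hmem r).1 hr
      have hkey : Algebra.trace Kp K (φ w₀ * (π - conj π)⁻¹ * (φ a + φ b * π)) = w₀ * b := by
        apply hinj
        rw [htr, map_mul]
        simp only [map_mul, map_add, map_inv₀, map_sub, hconjφ, hconj_inv, hconjπ]
        field_simp [hδ', hδ'']
        ring
      obtain ⟨n, hn⟩ := hw₀ b hb
      exact ⟨n, by rw [htrQ, hkey, hn]⟩
    · simp only [map_mul, map_inv₀, map_sub, hconjφ, hconj_inv, hconjπ]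
      field_simp [hδ', hδ'']
      ring
  -- Part 1a: finiteness over ℤ
  have hBfg : B.toAddSubgroup.FG :=
    (AddGroup.fg_iff_addSubgroup_fg B.toAddSubgroup).1 (Module.Finite.iff_addGroup_fg.1 hB.1)
  obtain ⟨s, hs⟩ := hBfg
  have hRA : R.toAddSubgroup
      = AddSubgroup.closure ((φ '' s) ∪ ((fun y : Kp => φ y * π) '' s)) := by
    apply le_antisymm
    · intro x hx
      obtain ⟨a, ha, b, hb, rfl⟩ := (hmem x).1 hx
      refine AddSubgroup.add_mem _ ?_ ?_
      · have ha' : a ∈ AddSubgroup.closure (s : Set Kp) := by rw [hs]; exact ha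
        have h2 : φ a ∈ AddSubgroup.map φ.toAddMonoidHom (AddSubgroup.closure (s : Set Kp)) :=
          AddSubgroup.mem_map_of_mem _ ha'
        rw [AddMonoidHom.map_closure] at h2
        exact AddSubgroup.closure_mono Set.subset_union_left h2
      · have hb' : b ∈ AddSubgroup.closure (s : Set Kp) := by rw [hs]; exact hb
        have h2 : φ b * π ∈ AddSubgroup.map ((AddMonoidHom.mulRight π).comp φ.toAddMonoidHom)
            (AddSubgroup.closure (s : Set Kp)) := AddSubgroup.mem_map_of_mem _ hb'
        rw [AddMonoidHom.map_closure] at h2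
        refine AddSubgroup.closure_mono ?_ h2
        refine Set.Subset.trans ?_ Set.subset_union_right
        rintro y ⟨z, hz, rfl⟩
        exact ⟨z, hz, rfl⟩
    · rw [AddSubgroup.closure_le]
      rintro x (⟨y, hy, rfl⟩ | ⟨y, hy, rfl⟩)
      · have h1 : y ∈ AddSubgroup.closure (s : Set Kp) := AddSubgroup.subset_closure hy
        rw [hs, Subring.mem_toAddSubgroup] at h1
        exact hφB y h1
      · have h1 : y ∈ AddSubgroup.closure (s : Set Kp) := AddSubgroup.subset_closure hy
        rw [hs, Subring.mem_toAddSubgroup] at h1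
        exact Subring.mul_mem _ (hφB y h1) hπR
  have hRfg : R.toAddSubgroup.FG := by
    refine ⟨(s.image φ) ∪ (s.image fun y : Kp => φ y * π), ?_⟩
    rw [Finset.coe_union, Finset.coe_image, Finset.coe_image, ← hRA]
  have hfinR : Module.Finite ℤ R :=
    Module.Finite.iff_addGroup_fg.2 ((AddGroup.fg_iff_addSubgroup_fg R.toAddSubgroup).2 hRfg)
  -- Part 1b: spans K over ℚ
  have hspanQ : Submodule.span ℚ ((R : Set K)) = ⊤ := by
    rw [eq_top_iff]
    rintro x -
    have hx : x ∈ Submodule.span Kp ({1, π} : Set K) := hspan ▸ Submodule.mem_top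
    obtain ⟨c, d, hcd⟩ := Submodule.mem_span_pair.1 hx
    have hL : ∀ e : Kp, φ e ∈ Submodule.span ℚ (R : Set K)
        ∧ φ e * π ∈ Submodule.span ℚ (R : Set K) := by
      intro e
      have he : e ∈ Submodule.span ℚ (B : Set Kp) := hB.2 ▸ Submodule.mem_top
      constructor
      · have h2 : φ e ∈ Submodule.span ℚ (φ '' (B : Set Kp)) := by
          have h3 := Submodule.mem_map_of_mem
            (f := (IsScalarTower.toAlgHom ℚ Kp K).toLinearMap) he
          rwa [Submodule.map_span] at h3
        refine Submodule.span_mono ?_ h2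
        rintro y ⟨b, hb, rfl⟩
        exact hφB b hb
      · have h2 : φ e * π ∈ Submodule.span ℚ ((fun y : Kp => φ y * π) '' (B : Set Kp)) := by
          have h3 := Submodule.mem_map_of_mem
            (f := (LinearMap.mulRight ℚ π) ∘ₗ (IsScalarTower.toAlgHom ℚ Kp K).toLinearMap) he
          rwa [Submodule.map_span] at h3
        refine Submodule.span_mono ?_ h2
        rintro y ⟨b, hb, rfl⟩
        exact Subring.mul_mem _ (hφB b hb) hπR
    rw [← hcd]
    have h1 : c • (1:K) = φ c := by rw [Algebra.smul_def, mul_one]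
    have h2 : d • π = φ d * π := by rw [Algebra.smul_def]
    rw [h1, h2]
    exact add_mem (hL c).1 (hL d).2
  -- Part 2: stability under conjugation
  have hconjstab : ∀ x ∈ R, conj x ∈ R := by
    intro x hx
    obtain ⟨a, ha, b, hb, rfl⟩ := (hmem x).1 hx
    refine (hmem _).2 ⟨a + b * t₀, B.add_mem ha (B.mul_mem hb ht₀B), -b, B.neg_mem hb, ?_⟩
    simp only [map_add, map_mul, hconjφ, hconjπ, map_neg]
    ring
  -- Part 3: the real subring is B
  have hcomap : R.comap φ = B := by
    ext x
    simp only [Subring.mem_comap]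
    constructor
    · intro hx
      obtain ⟨a, ha, b, hb, heq⟩ := (hmem _).1 hx
      by_cases hb0 : b = 0
      · subst hb0
        simp only [map_zero, zero_mul, add_zero] at heq
        rwa [hinj heq]
      · exfalso
        apply hπnotreal
        refine ⟨(x - a) / b, ?_⟩
        have hφb : φ b ≠ 0 := fun h => hb0 (hinj (h.trans (map_zero φ).symm))
        rw [map_div₀, map_sub]
        field_simp [hφb]
        linear_combination heq
    · intro hx
      exact (hmem _).2 ⟨x, hx, 0, B.zero_mem, by simp⟩
  -- Part 4: trace dual generated by pure imaginary elements
  have hdual : Submodule.span R {x : K | x ∈ traceDual K R ∧ conj x = -x} = traceDual K R := by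
    apply le_antisymm
    · rw [Submodule.span_le]; exact fun x hx => hx.1
    · intro x hx
      have hv : conj (x + conj x) = x + conj x := by rw [map_add, hconj_inv]; ring
      obtain ⟨v₀, hv₀⟩ := (hfix _).1 hv
      have hu : conj (-(x * conj π + conj x * π)) = -(x * conj π + conj x * π) := by
        simp only [map_neg, map_add, map_mul, hconj_inv]; ring
      obtain ⟨u₀, hu₀⟩ := (hfix _).1 hu
      have hv₀B : ∀ b ∈ B, ∃ n : ℤ, Algebra.trace ℚ Kp (v₀ * b) = (n:ℚ) := by
        intro b hb
        obtain ⟨n, hn⟩ := hx (φ b) (hφB b hb)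
        refine ⟨n, ?_⟩
        rw [← hn, htrQ]
        congr 1
        apply hinj
        rw [htr, map_mul, hv₀]
        have h3 : conj (x * φ b) = conj x * φ b := by rw [map_mul, hconjφ]
        rw [h3]; ring
      have hu₀B : ∀ b ∈ B, ∃ n : ℤ, Algebra.trace ℚ Kp (u₀ * b) = (n:ℚ) := by
        intro b hb
        have hcπR : conj π ∈ R := by
          rw [hconjπ]; exact Subring.sub_mem _ (hφB t₀ ht₀B) hπR
        have hrR : -(conj π * φ b) ∈ R :=
          Subring.neg_mem _ (Subring.mul_mem _ hcπR (hφB b hb))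
        obtain ⟨n, hn⟩ := hx _ hrR
        refine ⟨n, ?_⟩
        rw [← hn, htrQ]
        congr 1
        apply hinj
        rw [htr, map_mul, hu₀]
        simp only [map_neg, map_mul, hconjφ, hconj_inv]
        ring
      obtain ⟨hu1, hu2⟩ := hpure u₀ hu₀B
      obtain ⟨hv1, hv2⟩ := hpure v₀ hv₀B
      have hxeq : x = φ u₀ * (π - conj π)⁻¹ + π * (φ v₀ * (π - conj π)⁻¹) := by
        have hkey : (π - conj π) * x = φ u₀ + φ v₀ * π := by
          rw [hu₀, hv₀]; ring
        field_simp [hδ]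
        linear_combination hkey
      rw [hxeq]
      refine Submodule.add_mem _ (Submodule.subset_span ⟨hu1, hu2⟩) ?_
      have hsmul : π * (φ v₀ * (π - conj π)⁻¹)
          = (⟨π, hπR⟩ : R) • (φ v₀ * (π - conj π)⁻¹) := by
        rw [Subring.smul_def, smul_eq_mul]
      rw [hsmul]
      exact Submodule.smul_mem _ _ (Submodule.subset_span ⟨hv1, hv2⟩)
  exact ⟨⟨hfinR, hspanQ⟩, hconjstab, hcomap, hdual⟩



end
end

section
/- Let K be a CM field of degree 2n over ℚ, let q be a positive integer, and let π be an algebraic integer with K = ℚ(π) and π·π̄ = q. Then the 2n elements 1, π, π̄, π², π̄², …, π^{n−1}, π̄^{n−1}, π^n form a basis of the ring ℤ[π, π̄] as a ℤ-module, and ℤ[π, π̄] ∩ K⁺ = ℤ[π + π̄]. -/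
open NumberField Polynomial

noncomputable section

open Finset

lemma aux_minpoly_natDegree {F K : Type*} [Field F] [Field K] [Algebra F K] [FiniteDimensional F K]
    (π : K) (hgen : Algebra.adjoin F ({π} : Set K) = ⊤) :
    (minpoly F π).natDegree = Module.finrank F K := by
  have hint : IsIntegral F π := IsIntegral.of_finite F π
  have h1 : (IntermediateField.adjoin F ({π} : Set K)) = ⊤ := by
    apply IntermediateField.toSubalgebra_injective
    rw [IntermediateField.adjoin_simple_toSubalgebra_of_isAlgebraic hint.isAlgebraic, hgen]
    rfl
  rw [← IntermediateField.adjoin.finrank hint, h1]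
  exact IntermediateField.topEquiv.toLinearEquiv.finrank_eq

lemma aux_funceq {K : Type*} [Field K] [CharZero K] (n : ℕ) (q : ℕ) (hq : 0 < q)
    (π πb : K) (hπint : IsIntegral ℤ π) (hπq : π * πb = (q : K))
    (hdeg : (minpoly ℚ π).natDegree = 2 * n)
    (hroot : Polynomial.aeval πb (minpoly ℚ π) = 0) :
    ∃ e : ℤ, e * e = 1 ∧ ∀ i ≤ n,
      (minpoly ℤ π).coeff i = e * (minpoly ℤ π).coeff (2 * n - i) * (q : ℤ) ^ (n - i) := by
  set p : ℤ[X] := minpoly ℤ π with hp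
  set c : ℕ → ℤ := fun i => p.coeff i with hc
  have hqK : (q : K) ≠ 0 := Nat.cast_ne_zero.mpr hq.ne'
  have hqQ : (q : ℚ) ≠ 0 := Nat.cast_ne_zero.mpr hq.ne'
  have hmonic : p.Monic := minpoly.monic hπint
  have hPmap : minpoly ℚ π = p.map (algebraMap ℤ ℚ) :=
    minpoly.isIntegrallyClosed_eq_field_fractions' ℚ hπint
  have hpdeg : p.natDegree = 2 * n := by
    rw [hPmap, hmonic.natDegree_map] at hdeg; exact hdeg
  have hcN : c (2 * n) = 1 := by rw [hc]; simpa [hpdeg] using hmonic.coeff_natDegree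
  have hrootZ : Polynomial.aeval πb p = 0 := by
    rw [← aeval_map_algebraMap ℚ, ← hPmap]; exact hroot
  have hsum : (∑ i ∈ range (2 * n + 1), ((c i : K) * πb ^ i)) = 0 := by
    have h := aeval_eq_sum_range (p := p) πb
    rw [hrootZ, hpdeg] at h
    calc ∑ i ∈ range (2 * n + 1), ((c i : K) * πb ^ i)
        = ∑ i ∈ range (2 * n + 1), p.coeff i • πb ^ i :=
          Finset.sum_congr rfl fun i _ => (zsmul_eq_mul _ _).symm
      _ = 0 := h.symm
  set Q : ℚ[X] := ∑ j ∈ range (2 * n + 1),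
      C ((c (2 * n - j) : ℚ) * (q : ℚ) ^ n / (q : ℚ) ^ j) * X ^ j with hQ
  have hQcoeff : ∀ j ≤ 2 * n, Q.coeff j = (c (2 * n - j) : ℚ) * (q : ℚ) ^ n / (q : ℚ) ^ j := by
    intro j hj
    rw [hQ, finset_sum_coeff]
    rw [Finset.sum_eq_single j]
    · simp
    · intro b _ hbj
      rw [coeff_C_mul, coeff_X_pow, if_neg (Ne.symm hbj), mul_zero]
    · intro h; exact absurd (Finset.mem_range.mpr (by omega)) h
  have haevalQ : Polynomial.aeval π Q = 0 := by
    have key : Polynomial.aeval π Q * (q : K) ^ n = 0 := by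
      have h1 : Polynomial.aeval π Q * (q : K) ^ n
          = ∑ j ∈ range (2 * n + 1), ((c (2 * n - j) : K) * ((q : K) ^ (2 * n - j) * π ^ j)) := by
        rw [hQ, map_sum, Finset.sum_mul]
        refine Finset.sum_congr rfl fun j hj => ?_
        have hj' : j ≤ 2 * n := by rw [Finset.mem_range] at hj; omega
        rw [map_mul, aeval_C, map_pow, aeval_X]
        rw [eq_ratCast (algebraMap ℚ K)]
        push_cast
        have hqq : (q : K) ^ n * (q : K) ^ n = (q : K) ^ (2 * n - j) * (q : K) ^ j := by
          rw [← pow_add, ← pow_add]; congr 1; omega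
        rw [div_mul_eq_mul_div, div_mul_eq_mul_div, div_eq_iff (pow_ne_zero j hqK)]
        linear_combination ((c (2 * n - j) : K)) * π ^ j * hqq
      have h2 : (∑ i ∈ range (2 * n + 1), ((c i : K) * πb ^ i)) * π ^ (2 * n)
          = ∑ j ∈ range (2 * n + 1), ((c (2 * n - j) : K) * ((q : K) ^ (2 * n - j) * π ^ j)) := by
        rw [Finset.sum_mul]
        rw [← Finset.sum_range_reflect (fun j => (c (2 * n - j) : K) * ((q : K) ^ (2 * n - j) * π ^ j)) (2 * n + 1)]
        refine Finset.sum_congr rfl fun i hi => ?_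
        have hi' : i ≤ 2 * n := by rw [Finset.mem_range] at hi; omega
        have e1 : 2 * n - (2 * n + 1 - 1 - i) = i := by omega
        have e2 : 2 * n + 1 - 1 - i = 2 * n - i := by omega
        rw [e1, e2]
        have e3 : π ^ (2 * n) = π ^ i * π ^ (2 * n - i) := by rw [← pow_add]; congr 1; omega
        rw [e3, ← mul_assoc, mul_assoc (c i : K), ← mul_pow, mul_comm πb π, hπq]
        ring
      rw [h1, ← h2, hsum, zero_mul]
    rcases mul_eq_zero.mp key with h | h
    · exact h
    · exact absurd h (pow_ne_zero n hqK)
  have hQc0 : Q.coeff 0 = (q : ℚ) ^ n := by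
    rw [hQcoeff 0 (by omega)]
    simp [hcN]
  have hQne : Q ≠ 0 := by
    intro h; rw [h, coeff_zero] at hQc0
    exact (pow_ne_zero n hqQ) hQc0.symm
  obtain ⟨d, hd⟩ := minpoly.dvd ℚ π haevalQ
  have hdne : d ≠ 0 := by rintro rfl; rw [mul_zero] at hd; exact hQne hd
  have hQdeg : Q.natDegree ≤ 2 * n := by
    rw [hQ]
    refine natDegree_sum_le_of_forall_le _ _ fun j hj => ?_
    exact (natDegree_C_mul_X_pow_le _ j).trans (by rw [Finset.mem_range] at hj; omega)
  have hPne : minpoly ℚ π ≠ 0 := minpoly.ne_zero hπint.tower_top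
  have hddeg : d.natDegree = 0 := by
    have h := natDegree_mul hPne hdne
    rw [← hd, hdeg] at h
    omega
  set r : ℚ := d.coeff 0 with hr
  have hdC : d = C r := eq_C_of_natDegree_eq_zero hddeg
  have hQPr : ∀ j, Q.coeff j = (minpoly ℚ π).coeff j * r := by
    intro j; rw [hd, hdC, coeff_mul_C]
  have hPcoeff : ∀ j, (minpoly ℚ π).coeff j = (c j : ℚ) := by
    intro j; rw [hPmap, coeff_map]; rfl
  have hpow : (q : ℚ) ^ (2 * n) = (q : ℚ) ^ n * (q : ℚ) ^ n := by
    rw [← pow_add]; congr 1; omega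
  -- j = 2n : leading coefficient gives c 0 * q^n = r * q^(2n)
  have hj2n : (c 0 : ℚ) * (q : ℚ) ^ n = r * ((q : ℚ) ^ n * (q : ℚ) ^ n) := by
    have h := hQPr (2 * n)
    rw [hQcoeff (2 * n) le_rfl, hPcoeff] at h
    rw [hcN] at h
    simp only [Nat.sub_self] at h
    rw [div_eq_iff (pow_ne_zero _ hqQ), hpow] at h
    push_cast at h
    linarith [h]
  -- j = 0 : constant coefficient gives q^n = c 0 * r
  have hj0 : (q : ℚ) ^ n = (c 0 : ℚ) * r := by
    have h := hQPr 0
    rw [hQc0, hPcoeff] at h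
    exact h
  have hA : (c 0 : ℚ) = r * (q : ℚ) ^ n :=
    mul_right_cancel₀ (pow_ne_zero n hqQ) (by linear_combination hj2n)
  have hr2 : r * r = 1 := by
    have h := hj0
    rw [hA] at h
    exact mul_right_cancel₀ (pow_ne_zero n hqQ)
      (show (r * r) * (q : ℚ) ^ n = 1 * (q : ℚ) ^ n by linear_combination -h)
  have hc0sq : c 0 * c 0 = ((q : ℤ) ^ n) * ((q : ℤ) ^ n) := by
    have h : (c 0 : ℚ) * (c 0 : ℚ) = ((q : ℚ) ^ n) * ((q : ℚ) ^ n) := by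
      rw [hA]
      linear_combination ((q : ℚ) ^ n * (q : ℚ) ^ n) * hr2
    exact_mod_cast h
  have hc0 : c 0 = (q : ℤ) ^ n ∨ c 0 = -((q : ℤ) ^ n) := mul_self_eq_mul_self_iff.mp hc0sq
  have main : ∀ e : ℤ, c 0 = e * (q : ℤ) ^ n → e * e = 1 → ∀ i ≤ n,
      c i = e * c (2 * n - i) * (q : ℤ) ^ (n - i) := by
    intro e hce hee i hi
    have heQ : (e : ℚ) * (e : ℚ) = 1 := by exact_mod_cast hee
    have hc0Q : (c 0 : ℚ) = (e : ℚ) * (q : ℚ) ^ n := by exact_mod_cast hce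
    have hre : r = (e : ℚ) := by
      have h := hj0
      rw [hc0Q] at h
      refine mul_left_cancel₀ (pow_ne_zero n hqQ) ?_
      linear_combination (-(e : ℚ)) * h - ((q : ℚ) ^ n * r) * heQ
    have h := hQPr i
    rw [hQcoeff i (by omega), hPcoeff, hre, div_eq_iff (pow_ne_zero _ hqQ)] at h
    -- h : c (2n - i) * q^n = c i * e * q^i
    have hpow2 : (q : ℚ) ^ (n - i) * (q : ℚ) ^ i = (q : ℚ) ^ n := by
      rw [← pow_add]; congr 1; omega
    have hgoalQ : (c i : ℚ) * (q : ℚ) ^ i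
        = ((e : ℚ) * (c (2 * n - i) : ℚ) * (q : ℚ) ^ (n - i)) * (q : ℚ) ^ i := by
      rw [mul_assoc, hpow2]
      linear_combination (-(e : ℚ)) * h - ((c i : ℚ) * (q : ℚ) ^ i) * heQ
    have hQQ : (c i : ℚ) = (e : ℚ) * (c (2 * n - i) : ℚ) * (q : ℚ) ^ (n - i) :=
      mul_right_cancel₀ (pow_ne_zero i hqQ) hgoalQ
    exact_mod_cast hQQ
  rcases hc0 with h | h
  · exact ⟨1, by ring, main 1 (by linarith) (by ring)⟩
  · exact ⟨-1, by ring, main (-1) (by linarith) (by ring)⟩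

set_option maxHeartbeats 2000000 in
/-- Let `K` be a CM field of degree `2n` over `ℚ`, let `q` be a positive
integer, and let `π` be an algebraic integer with `K = ℚ(π)` and `π·π̄ = q`. Then the `2n`
elements `1, π, π̄, π², π̄², …, π^(n-1), π̄^(n-1), π^n` form a `ℤ`-basis of `ℤ[π, π̄]`,
and `ℤ[π, π̄] ∩ Kp = ℤ[π + π̄]`. -/
theorem minimal_order_basis
    (n : ℕ) (hn : 0 < n)
    (Kp K : Type*) [Field Kp] [NumberField Kp] [Field K] [NumberField K] [Algebra Kp K]
    (htotreal : ∀ (phi : Kp →+* ℂ) (x : Kp), (phi x).im = 0)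
    (htotimag : ∀ phi : K →+* ℂ, ∃ x : K, (phi x).im ≠ 0)
    (hdeg : Module.finrank Kp K = 2)
    (hdegQ : Module.finrank ℚ K = 2 * n)
    (conj : K ≃ₐ[Kp] K)
    (hconj_ne : conj ≠ AlgEquiv.refl)
    (hconj_inv : ∀ x, conj (conj x) = x)
    (hfix : ∀ x : K, conj x = x ↔ x ∈ (algebraMap Kp K).range)
    (q : ℕ) (hq : 0 < q)
    (π : K) (hπint : IsIntegral ℤ π)
    (hgen : Algebra.adjoin ℚ ({π} : Set K) = ⊤)
    (hπq : π * conj π = (q : K)) :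
    LinearIndependent ℤ
      (fun j : Fin (2 * n) =>
        if (j : ℕ) % 2 = 1 then π ^ (((j : ℕ) + 1) / 2) else (conj π) ^ ((j : ℕ) / 2)) ∧
    (Submodule.span ℤ
        (Set.range (fun j : Fin (2 * n) =>
          if (j : ℕ) % 2 = 1 then π ^ (((j : ℕ) + 1) / 2) else (conj π) ^ ((j : ℕ) / 2)))
        : Set K)
      = (Subring.closure {π, conj π} : Set K) ∧
    (∀ a : Kp, algebraMap Kp K a = π + conj π →
      (Subring.closure {π, conj π}).comap (algebraMap Kp K) = Subring.closure {a}) := by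
  have hqK : (q : K) ≠ 0 := Nat.cast_ne_zero.mpr hq.ne'
  have hπne : π ≠ 0 := by
    intro h; rw [h, zero_mul] at hπq; exact hqK hπq.symm
  have hππb : π ≠ conj π := by
    intro h
    apply hconj_ne
    apply AlgEquiv.ext
    intro y
    have hy : y ∈ Algebra.adjoin ℚ ({π} : Set K) := by rw [hgen]; exact Algebra.mem_top
    have : conj y = y := by
      induction hy using Algebra.adjoin_induction with
      | mem x hx =>
          rcases Set.mem_singleton_iff.mp hx with rfl
          exact h.symm
      | algebraMap r =>
          rw [eq_ratCast (algebraMap ℚ K) r]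
          exact map_ratCast conj r
      | add x y _ _ hx hy => rw [map_add, hx, hy]
      | mul x y _ _ hx hy => rw [map_mul, hx, hy]
    simpa using this
  have hdegP : (minpoly ℚ π).natDegree = 2 * n := by
    rw [aux_minpoly_natDegree π hgen, hdegQ]
  have hPne : minpoly ℚ π ≠ 0 := minpoly.ne_zero hπint.tower_top
  have hroot : Polynomial.aeval (conj π) (minpoly ℚ π) = 0 := by
    have h := Polynomial.aeval_algHom_apply
      ((conj : K ≃ₐ[Kp] K).toAlgHom.toRingHom.toRatAlgHom) π (minpoly ℚ π)
    rw [minpoly.aeval, map_zero] at h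
    exact h
  obtain ⟨e, hee, hrel⟩ := aux_funceq n q hq π (conj π) hπint hπq hdegP hroot
  have heK : ((e : ℤ) : K) * ((e : ℤ) : K) = 1 := by exact_mod_cast hee
  have heKne : ((e : ℤ) : K) ≠ 0 := by
    intro h; rw [h, zero_mul] at heK; exact zero_ne_one heK
  set πb := conj π with hπbdef
  set p : ℤ[X] := minpoly ℤ π with hp
  set c : ℕ → ℤ := fun i => p.coeff i with hc
  have hmonic : p.Monic := minpoly.monic hπint
  have hPmap : minpoly ℚ π = p.map (algebraMap ℤ ℚ) :=
    minpoly.isIntegrallyClosed_eq_field_fractions' ℚ hπint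
  have hpdeg : p.natDegree = 2 * n := by
    rw [hPmap, hmonic.natDegree_map] at hdegP; exact hdegP
  have hcN : c (2 * n) = 1 := by rw [hc]; simpa [hpdeg] using hmonic.coeff_natDegree
  have hsum : (∑ i ∈ range (2 * n + 1), ((c i : K) * π ^ i)) = 0 := by
    have h := aeval_eq_sum_range (p := p) π
    rw [minpoly.aeval, hpdeg] at h
    calc ∑ i ∈ range (2 * n + 1), ((c i : K) * π ^ i)
        = ∑ i ∈ range (2 * n + 1), p.coeff i • π ^ i :=
          Finset.sum_congr rfl fun i _ => (zsmul_eq_mul _ _).symm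
      _ = 0 := h.symm
  set F : Fin (2 * n) → K := fun j : Fin (2 * n) =>
    if (j : ℕ) % 2 = 1 then π ^ (((j : ℕ) + 1) / 2) else (conj π) ^ ((j : ℕ) / 2) with hF
  set M : Submodule ℤ K := Submodule.span ℤ (Set.range F) with hM
  have hfmem : ∀ j : Fin (2 * n), F j ∈ M := fun j => Submodule.subset_span ⟨j, rfl⟩
  have hzmul : ∀ (m : ℤ) (x : K), x ∈ M → (m : K) * x ∈ M := fun m x hx => by
    rw [← zsmul_eq_mul]; exact M.smul_mem m hx
  have mem1 : ∀ k, k ≤ n → π ^ k ∈ M := by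
    intro k hk
    rcases Nat.eq_zero_or_pos k with rfl | hk1
    · have h := hfmem ⟨0, by omega⟩
      simpa [hF] using h
    · have h := hfmem ⟨2 * k - 1, by omega⟩
      have h1 : (2 * k - 1) % 2 = 1 := by omega
      have h2 : ((2 * k - 1) + 1) / 2 = k := by omega
      simpa [hF, h1, h2] using h
  have mem2 : ∀ k, k < n → πb ^ k ∈ M := by
    intro k hk
    have h := hfmem ⟨2 * k, by omega⟩
    have h1 : ¬((2 * k) % 2 = 1) := by omega
    have h2 : (2 * k) / 2 = k := by omega
    simpa [hF, h1, h2] using h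
  have hpowmix : ∀ (a b : ℕ), b ≤ a → π ^ a * πb ^ b = (q : K) ^ b * π ^ (a - b) := by
    intro a b hba
    have h1 : π ^ a = π ^ b * π ^ (a - b) := by rw [← pow_add]; congr 1; omega
    rw [h1, mul_comm (π ^ b), mul_assoc, ← mul_pow, hπq]
    ring
  have hpowmix' : ∀ (a b : ℕ), a ≤ b → π ^ a * πb ^ b = (q : K) ^ a * πb ^ (b - a) := by
    intro a b hab
    have h1 : πb ^ b = πb ^ a * πb ^ (b - a) := by rw [← pow_add]; congr 1; omega
    rw [h1, ← mul_assoc, ← mul_pow, hπq]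
  have mem3 : πb ^ n ∈ M := by
    set w : ℕ → K := fun i =>
      if i < n then (c (2 * n - i) : K) * πb ^ (n - i) else ((e : K) * (c i : K)) * π ^ (i - n)
      with hw
    have hwkey : ∀ i ∈ range (2 * n + 1),
        (c i : K) * π ^ i * πb ^ n = ((e : K) * (q : K) ^ n) * w i := by
      intro i hi
      rw [Finset.mem_range] at hi
      simp only [hw]
      by_cases hin : i < n
      · rw [if_pos hin]
        rw [mul_assoc, hpowmix' i n (by omega)]
        have hci : ((c i : ℤ) : K) = (e : K) * (c (2 * n - i) : K) * ((q : K)) ^ (n - i) := by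
          exact_mod_cast congrArg (fun z : ℤ => (z : K)) (hrel i (by omega))
        rw [hci]
        have hqq : ((q : K)) ^ (n - i) * (q : K) ^ i = (q : K) ^ n := by
          rw [← pow_add]; congr 1; omega
        linear_combination ((e : K) * (c (2 * n - i) : K) * πb ^ (n - i)) * hqq
      · rw [if_neg hin]
        rw [mul_assoc, hpowmix i n (by omega)]
        have h2 : ((e : K) * (q : K) ^ n) * (((e : K) * (c i : K)) * π ^ (i - n))
            = ((e : K) * (e : K)) * ((q : K) ^ n * (c i : K) * π ^ (i - n)) := by ring
        rw [h2, heK]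
        ring
    have hwsum : ∑ i ∈ range (2 * n + 1), w i = 0 := by
      have h1 : ((e : K) * (q : K) ^ n) * (∑ i ∈ range (2 * n + 1), w i)
          = (∑ i ∈ range (2 * n + 1), ((c i : K) * π ^ i)) * πb ^ n := by
        rw [Finset.mul_sum, Finset.sum_mul]
        exact Finset.sum_congr rfl fun i hi => (hwkey i hi).symm
      rw [hsum, zero_mul] at h1
      rcases mul_eq_zero.mp h1 with h | h
      · exact absurd h (mul_ne_zero heKne (pow_ne_zero _ hqK))
      · exact h
    have hw0 : w 0 = πb ^ n := by
      simp only [hw]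
      simp only [if_pos hn]
      rw [Nat.sub_zero, Nat.sub_zero, hcN]
      push_cast
      ring
    have herase : πb ^ n = - ∑ i ∈ (range (2 * n + 1)).erase 0, w i := by
      have h := Finset.add_sum_erase (range (2 * n + 1)) w
        (show 0 ∈ range (2 * n + 1) by simp)
      rw [hwsum, hw0] at h
      exact eq_neg_of_add_eq_zero_left h
    rw [herase]
    refine M.neg_mem (Submodule.sum_mem M fun i hi => ?_)
    rw [Finset.mem_erase, Finset.mem_range] at hi
    simp only [hw]
    by_cases hin : i < n
    · rw [if_pos hin]
      exact hzmul _ _ (mem2 (n - i) (by omega))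
    · rw [if_neg hin]
      have h3 : ((e : K) * (c i : K)) = ((e * c i : ℤ) : K) := by push_cast; ring
      rw [h3]
      exact hzmul _ _ (mem1 (i - n) (by omega))
  have mem2' : ∀ k, k ≤ n → πb ^ k ∈ M := by
    intro k hk
    rcases lt_or_eq_of_le hk with h | rfl
    · exact mem2 k h
    · exact mem3
  have mem4 : π ^ (n + 1) ∈ M := by
    set w : ℕ → K := fun i =>
      if i < n - 1 then ((q : K) * (c (2 * n - i) : K)) * πb ^ (n - 1 - i)
      else ((e : K) * (c i : K)) * π ^ (i - (n - 1))
      with hw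
    have hwkey : ∀ i ∈ range (2 * n + 1),
        (c i : K) * π ^ i * πb ^ (n - 1) = ((e : K) * (q : K) ^ (n - 1)) * w i := by
      intro i hi
      rw [Finset.mem_range] at hi
      simp only [hw]
      by_cases hin : i < n - 1
      · rw [if_pos hin]
        rw [mul_assoc, hpowmix' i (n - 1) (by omega)]
        have hci : ((c i : ℤ) : K) = (e : K) * (c (2 * n - i) : K) * ((q : K)) ^ (n - i) := by
          exact_mod_cast congrArg (fun z : ℤ => (z : K)) (hrel i (by omega))
        rw [hci]
        have hqq : ((q : K)) ^ (n - i) * (q : K) ^ i = (q : K) * (q : K) ^ (n - 1) := by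
          rw [← pow_add, ← pow_succ']; congr 1; omega
        linear_combination ((e : K) * (c (2 * n - i) : K) * πb ^ (n - 1 - i)) * hqq
      · rw [if_neg hin]
        rw [mul_assoc, hpowmix i (n - 1) (by omega)]
        have h2 : ((e : K) * (q : K) ^ (n - 1)) * (((e : K) * (c i : K)) * π ^ (i - (n - 1)))
            = ((e : K) * (e : K)) * ((q : K) ^ (n - 1) * (c i : K) * π ^ (i - (n - 1))) := by ring
        rw [h2, heK]
        ring
    have hwsum : ∑ i ∈ range (2 * n + 1), w i = 0 := by
      have h1 : ((e : K) * (q : K) ^ (n - 1)) * (∑ i ∈ range (2 * n + 1), w i)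
          = (∑ i ∈ range (2 * n + 1), ((c i : K) * π ^ i)) * πb ^ (n - 1) := by
        rw [Finset.mul_sum, Finset.sum_mul]
        exact Finset.sum_congr rfl fun i hi => (hwkey i hi).symm
      rw [hsum, zero_mul] at h1
      rcases mul_eq_zero.mp h1 with h | h
      · exact absurd h (mul_ne_zero heKne (pow_ne_zero _ hqK))
      · exact h
    have hw2n : w (2 * n) = (e : K) * π ^ (n + 1) := by
      simp only [hw]
      have h1 : ¬(2 * n < n - 1) := by omega
      rw [if_neg h1, hcN]
      have h2 : 2 * n - (n - 1) = n + 1 := by omega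
      rw [h2]
      push_cast
      ring
    have herase : (e : K) * π ^ (n + 1) = - ∑ i ∈ (range (2 * n + 1)).erase (2 * n), w i := by
      have h := Finset.add_sum_erase (range (2 * n + 1)) w
        (show 2 * n ∈ range (2 * n + 1) by simp)
      rw [hwsum, hw2n] at h
      exact eq_neg_of_add_eq_zero_left h
    have hcalc : π ^ (n + 1)
        = ((-e : ℤ) : K) * ∑ i ∈ (range (2 * n + 1)).erase (2 * n), w i := by
      have h := congrArg (fun z => (e : K) * z) herase
      rw [← mul_assoc, heK, one_mul] at h
      rw [h]
      push_cast
      ring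
    rw [hcalc]
    refine hzmul _ _ (Submodule.sum_mem M fun i hi => ?_)
    rw [Finset.mem_erase, Finset.mem_range] at hi
    simp only [hw]
    by_cases hin : i < n - 1
    · rw [if_pos hin]
      have h3 : ((q : K) * (c (2 * n - i) : K)) = (((q : ℤ) * c (2 * n - i) : ℤ) : K) := by
        push_cast; ring
      rw [h3]
      exact hzmul _ _ (mem2 (n - 1 - i) (by omega))
    · rw [if_neg hin]
      have h3 : ((e : K) * (c i : K)) = ((e * c i : ℤ) : K) := by push_cast; ring
      rw [h3]
      exact hzmul _ _ (mem1 (i - (n - 1)) (by omega))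
  -- closure properties of M
  have hgenform : ∀ j : Fin (2 * n), ∃ k, k ≤ n ∧ (F j = π ^ k ∨ F j = πb ^ k) := by
    intro j
    by_cases hj : (j : ℕ) % 2 = 1
    · exact ⟨((j : ℕ) + 1) / 2, by have := j.isLt; omega, Or.inl (by rw [hF]; simp [hj])⟩
    · exact ⟨(j : ℕ) / 2, by have := j.isLt; omega, Or.inr (by rw [hF]; simp [hj, hπbdef])⟩
  have hπmul : ∀ x ∈ M, π * x ∈ M := by
    intro x hx
    induction hx using Submodule.span_induction with
    | mem y hy =>
        obtain ⟨j, rfl⟩ := hy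
        obtain ⟨k, hk, hFj | hFj⟩ := hgenform j <;> rw [hFj]
        · rcases lt_or_eq_of_le hk with h | rfl
          · rw [← pow_succ']
            exact mem1 (k + 1) (by omega)
          · rw [← pow_succ']
            exact mem4
        · rcases Nat.eq_zero_or_pos k with rfl | hk1
          · rw [pow_zero, mul_one, ← pow_one π]
            exact mem1 1 hn
          · have h1 : πb ^ k = πb * πb ^ (k - 1) := by
              rw [← pow_succ']; congr 1; omega
            rw [h1, ← mul_assoc, hπq]
            have h3 : (q : K) = ((q : ℤ) : K) := by push_cast; ring
            rw [h3]
            exact hzmul _ _ (mem2' (k - 1) (by omega))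
    | zero => rw [mul_zero]; exact M.zero_mem
    | add y z _ _ hy hz => rw [mul_add]; exact M.add_mem hy hz
    | smul a y _ hy => rw [mul_smul_comm]; exact M.smul_mem a hy
  have hconjM : ∀ x ∈ M, conj x ∈ M := by
    intro x hx
    induction hx using Submodule.span_induction with
    | mem y hy =>
        obtain ⟨j, rfl⟩ := hy
        obtain ⟨k, hk, hFj | hFj⟩ := hgenform j <;> rw [hFj]
        · rw [map_pow]
          exact mem2' k hk
        · rw [map_pow, hπbdef, hconj_inv]
          exact mem1 k hk
    | zero => rw [map_zero]; exact M.zero_mem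
    | add y z _ _ hy hz => rw [map_add]; exact M.add_mem hy hz
    | smul a y _ hy => rw [map_zsmul]; exact M.smul_mem a hy
  have hπbmul : ∀ x ∈ M, πb * x ∈ M := by
    intro x hx
    have h := hconjM _ (hπmul _ (hconjM x hx))
    rwa [map_mul, hconj_inv, ← hπbdef] at h
  have hπpow : ∀ (a : ℕ), ∀ x ∈ M, π ^ a * x ∈ M := by
    intro a
    induction a with
    | zero => intro x hx; rw [pow_zero, one_mul]; exact hx
    | succ b ih =>
        intro x hx
        rw [pow_succ, mul_assoc]
        exact ih _ (hπmul x hx)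
  have hπbpow : ∀ (a : ℕ), ∀ x ∈ M, πb ^ a * x ∈ M := by
    intro a
    induction a with
    | zero => intro x hx; rw [pow_zero, one_mul]; exact hx
    | succ b ih =>
        intro x hx
        rw [pow_succ, mul_assoc]
        exact ih _ (hπbmul x hx)
  have hmulM : ∀ x ∈ M, ∀ y ∈ M, x * y ∈ M := by
    intro x hx
    induction hx using Submodule.span_induction with
    | mem z hz =>
        obtain ⟨j, rfl⟩ := hz
        obtain ⟨k, hk, hFj | hFj⟩ := hgenform j <;> rw [hFj]
        · exact hπpow k
        · exact hπbpow k
    | zero => intro y hy; rw [zero_mul]; exact M.zero_mem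
    | add a b _ _ ha hb => intro y hy; rw [add_mul]; exact M.add_mem (ha y hy) (hb y hy)
    | smul a z _ hz => intro y hy; rw [smul_mul_assoc]; exact M.smul_mem a (hz y hy)
  -- Part 2 : the span equals the subring closure
  have hπcl : π ∈ Subring.closure ({π, conj π} : Set K) :=
    Subring.subset_closure (Set.mem_insert_iff.mpr (Or.inl rfl))
  have hπbcl : πb ∈ Subring.closure ({π, conj π} : Set K) :=
    Subring.subset_closure (Set.mem_insert_iff.mpr (Or.inr hπbdef))
  have part2 : (M : Set K) = (Subring.closure {π, conj π} : Set K) := by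
    apply Set.Subset.antisymm
    · intro x hx
      have hx' : x ∈ M := hx
      clear hx
      show x ∈ Subring.closure {π, conj π}
      induction hx' using Submodule.span_induction with
      | mem y hy =>
          obtain ⟨j, rfl⟩ := hy
          obtain ⟨k, hk, hFj | hFj⟩ := hgenform j <;> rw [hFj]
          · exact pow_mem hπcl k
          · exact pow_mem hπbcl k
      | zero => exact zero_mem _
      | add y z _ _ hy hz => exact add_mem hy hz
      | smul a y _ hy => exact zsmul_mem hy a
    · intro x hx
      have hx' : x ∈ Subring.closure {π, conj π} := hx
      clear hx
      show x ∈ M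
      induction hx' using Subring.closure_induction with
      | mem y hy =>
          rcases hy with rfl | hy
          · have h := mem1 1 hn
            rwa [pow_one] at h
          · rcases Set.mem_singleton_iff.mp hy with rfl
            have h := mem2' 1 hn
            rwa [pow_one] at h
      | zero => exact M.zero_mem
      | one =>
          have h := mem1 0 (by omega)
          rwa [pow_zero] at h
      | add a b _ _ ha hb => exact M.add_mem ha hb
      | neg a _ ha => exact M.neg_mem ha
      | mul a b ha' hb' ha hb => exact hmulM a ha b hb
  -- Part 3
  have part3 : ∀ a : Kp, algebraMap Kp K a = π + conj π →
      (Subring.closure {π, conj π}).comap (algebraMap Kp K) = Subring.closure {a} := by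
    intro a ha
    set β : K := π + πb with hβ
    set C : Subring K := Subring.closure {β} with hC
    have hβC : β ∈ C := Subring.subset_closure rfl
    have hsq : π * π = β * π - (q : K) := by
      rw [hβ]
      linear_combination -hπq
    have hdecomp : ∀ x ∈ Subring.closure ({π, conj π} : Set K),
        ∃ u v, u ∈ C ∧ v ∈ C ∧ x = u + v * π := by
      intro x hx
      have hx' : x ∈ Subring.closure ({π, conj π} : Set K) := hx
      clear hx
      induction hx' using Subring.closure_induction with
      | mem y hy =>
          rcases hy with rfl | hy
          · exact ⟨0, 1, C.zero_mem, C.one_mem, by ring⟩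
          · rcases Set.mem_singleton_iff.mp hy with rfl
            exact ⟨β, -1, hβC, C.neg_mem C.one_mem, by rw [hβ]; ring⟩
      | zero => exact ⟨0, 0, C.zero_mem, C.zero_mem, by ring⟩
      | one => exact ⟨1, 0, C.one_mem, C.zero_mem, by ring⟩
      | add y z _ _ hy hz =>
          obtain ⟨u, v, hu, hv, rfl⟩ := hy
          obtain ⟨u', v', hu', hv', rfl⟩ := hz
          exact ⟨u + u', v + v', C.add_mem hu hu', C.add_mem hv hv', by ring⟩
      | neg y _ hy =>
          obtain ⟨u, v, hu, hv, rfl⟩ := hy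
          exact ⟨-u, -v, C.neg_mem hu, C.neg_mem hv, by ring⟩
      | mul y z _ _ hy hz =>
          obtain ⟨u, v, hu, hv, rfl⟩ := hy
          obtain ⟨u', v', hu', hv', rfl⟩ := hz
          refine ⟨u * u' - (q : K) * (v * v'),
            u * v' + u' * v + v * v' * β, ?_, ?_, ?_⟩
          · exact C.sub_mem (C.mul_mem hu hu')
              (C.mul_mem (natCast_mem C q) (C.mul_mem hv hv'))
          · exact C.add_mem (C.add_mem (C.mul_mem hu hv') (C.mul_mem hu' hv))
              (C.mul_mem (C.mul_mem hv hv') hβC)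
          · linear_combination (v * v') * hsq
    have hfixC : ∀ z ∈ C, conj z = z := by
      intro z hz
      have hz' : z ∈ Subring.closure ({β} : Set K) := hz
      clear hz
      induction hz' using Subring.closure_induction with
      | mem y hy =>
          rcases Set.mem_singleton_iff.mp hy with rfl
          rw [hβ, map_add, hπbdef, hconj_inv]
          ring
      | zero => exact map_zero conj
      | one => exact map_one conj
      | add y z _ _ hy hz => rw [map_add, hy, hz]
      | neg y _ hy => rw [map_neg, hy]
      | mul y z _ _ hy hz => rw [map_mul, hy, hz]
    apply le_antisymm
    · intro x hx
      rw [Subring.mem_comap] at hx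
      obtain ⟨u, v, hu, hv, hxe⟩ := hdecomp _ hx
      have hfixx : conj (algebraMap Kp K x) = algebraMap Kp K x :=
        (hfix _).mpr ⟨x, rfl⟩
      have hv0 : v = 0 := by
        rw [hxe, map_add, map_mul, hfixC u hu, hfixC v hv] at hfixx
        have h2 : v * (conj π - π) = 0 := by linear_combination hfixx
        rcases mul_eq_zero.mp h2 with h | h
        · exact h
        · exact absurd (by linear_combination -h : π = conj π) hππb
      have hxu : algebraMap Kp K x = u := by rw [hxe, hv0]; ring
      have hβa : ({β} : Set K) = (algebraMap Kp K) '' {a} := by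
        rw [Set.image_singleton, ha, hβ]
      have hmapC : C = (Subring.closure {a}).map (algebraMap Kp K) := by
        rw [hC, hβa, ← RingHom.map_closure]
      have hmem : algebraMap Kp K x ∈ C := hxu ▸ hu
      rw [hmapC] at hmem
      obtain ⟨y, hy, hyx⟩ := hmem
      have : y = x := (algebraMap Kp K).injective hyx
      rwa [← this]
    · rw [Subring.closure_le]
      intro z hz
      rcases Set.mem_singleton_iff.mp hz with rfl
      rw [SetLike.mem_coe, Subring.mem_comap, ha]
      exact Subring.add_mem _ hπcl (hπbdef ▸ hπbcl)
  -- Part 1 : linear independence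
  have part1 : LinearIndependent ℤ F := by
    rw [Fintype.linearIndependent_iff]
    intro g hg j₀
    set σ : Fin (2 * n) → ℕ := fun j =>
      if (j : ℕ) % 2 = 1 then n - 1 + ((j : ℕ) + 1) / 2 else n - 1 - (j : ℕ) / 2 with hσ
    set b : Fin (2 * n) → ℤ := fun j =>
      if (j : ℕ) % 2 = 1 then 1 else (q : ℤ) ^ ((j : ℕ) / 2) with hb
    have hσlt : ∀ j : Fin (2 * n), σ j ≤ 2 * n - 1 := by
      intro j
      have := j.isLt
      simp only [hσ]
      split_ifs <;> omega
    have hσinj : Function.Injective σ := by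
      intro j j' h
      have h1 := j.isLt
      have h2 := j'.isLt
      simp only [hσ] at h
      apply Fin.ext
      split_ifs at h <;> omega
    set r : ℚ[X] := ∑ j : Fin (2 * n), C ((g j * b j : ℤ) : ℚ) * X ^ (σ j) with hr
    have haeval : Polynomial.aeval π r = 0 := by
      have hkey : ∀ j : Fin (2 * n), (g j : K) * F j * π ^ (n - 1)
          = ((g j * b j : ℤ) : K) * π ^ (σ j) := by
        intro j
        have hjlt := j.isLt
        simp only [hF, hσ, hb]
        by_cases hj : (j : ℕ) % 2 = 1
        · simp only [if_pos hj]
          rw [mul_assoc, ← pow_add]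
          push_cast
          rw [mul_one]
          congr 2
          omega
        · simp only [if_neg hj]
          rw [mul_assoc, mul_comm ((conj π) ^ ((j : ℕ) / 2)), hpowmix (n-1) ((j : ℕ)/2) (by omega)]
          push_cast
          ring
      have hsum0 : ∑ j : Fin (2 * n), (g j : K) * F j = 0 := by
        rw [← hg]
        exact Finset.sum_congr rfl fun j _ => (zsmul_eq_mul _ _).symm
      have h1 : Polynomial.aeval π r = ∑ j : Fin (2 * n), ((g j * b j : ℤ) : K) * π ^ (σ j) := by
        rw [hr, map_sum]
        refine Finset.sum_congr rfl fun j _ => ?_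
        rw [map_mul, aeval_C, map_pow, aeval_X, eq_ratCast (algebraMap ℚ K)]
        push_cast
        ring
      rw [h1, ← Finset.sum_congr rfl fun j (_ : j ∈ Finset.univ) => hkey j, ← Finset.sum_mul,
        hsum0, zero_mul]
    have hr0 : r = 0 := by
      by_contra hrne
      have hdle := minpoly.degree_le_of_ne_zero ℚ π hrne haeval
      have hrdeg : r.natDegree ≤ 2 * n - 1 := by
        rw [hr]
        exact natDegree_sum_le_of_forall_le _ _ fun j _ =>
          (natDegree_C_mul_X_pow_le _ _).trans (hσlt j)
      have h2 : (minpoly ℚ π).degree = ((2 * n : ℕ) : WithBot ℕ) := by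
        rw [degree_eq_natDegree hPne, hdegP]
      rw [h2] at hdle
      have h3 : r.degree ≤ ((2 * n - 1 : ℕ) : WithBot ℕ) :=
        (degree_le_natDegree).trans (by exact_mod_cast hrdeg)
      have h4 : ((2 * n : ℕ) : WithBot ℕ) ≤ ((2 * n - 1 : ℕ) : WithBot ℕ) := hdle.trans h3
      rw [Nat.cast_le] at h4
      omega
    have hcoeff : r.coeff (σ j₀) = ((g j₀ * b j₀ : ℤ) : ℚ) := by
      rw [hr, finset_sum_coeff]
      rw [Finset.sum_eq_single j₀]
      · rw [coeff_C_mul, coeff_X_pow, if_pos rfl, mul_one]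
      · intro j _ hjj
        rw [coeff_C_mul, coeff_X_pow, if_neg (fun h => hjj (hσinj h.symm)), mul_zero]
      · intro h; exact absurd (Finset.mem_univ j₀) h
    rw [hr0, coeff_zero] at hcoeff
    have hgb : g j₀ * b j₀ = 0 := by exact_mod_cast hcoeff.symm
    have hbne : b j₀ ≠ 0 := by
      simp only [hb]
      split_ifs
      · exact one_ne_zero
      · exact pow_ne_zero _ (by exact_mod_cast hq.ne')
    rcases mul_eq_zero.mp hgb with h | h
    · exact h
    · exact absurd h hbne
  exact ⟨part1, part2, part3⟩


end
end

section
/- Let K be a CM field with maximal totally real subfield K⁺. Suppose there is a unit u of 𝓞_K such that u·ū is not the square of a unit of 𝓞_{K⁺}. Then K is obtained from K⁺ by adjoining the square root of a unit: there exist a unit ε of 𝓞_{K⁺} and an element x ∈ K with x² = ε and K = K⁺(x). -/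
open NumberField

noncomputable section

lemma eq_of_card_two {α : Type*} [Fintype α] (hc : Fintype.card α = 2) {a b c : α}
    (hb : b ≠ a) (hcc : c ≠ a) : b = c := by
  classical
  by_contra h
  have h3 : ({a, b, c} : Finset α).card = 3 := by
    rw [Finset.card_insert_of_notMem (by simp [hb.symm, hcc.symm]),
      Finset.card_insert_of_notMem (by simp [h]), Finset.card_singleton]
  have h4 := Finset.card_le_univ ({a, b, c} : Finset α)
  rw [h3, hc] at h4
  omega

lemma coe_inv_unit {K : Type*} [Field K] [NumberField K] (t : (𝓞 K)ˣ) :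
    (algebraMap (𝓞 K) K ((t⁻¹ : (𝓞 K)ˣ) : 𝓞 K)) = (algebraMap (𝓞 K) K (t : 𝓞 K))⁻¹ := by
  have h1 : algebraMap (𝓞 K) K ((t⁻¹ : (𝓞 K)ˣ) : 𝓞 K) * algebraMap (𝓞 K) K (t : 𝓞 K) = 1 := by
    rw [← map_mul]; simp
  exact eq_inv_of_mul_eq_one_left h1

lemma unit_of_fixed {Kp K : Type*} [Field Kp] [NumberField Kp] [Field K] [NumberField K]
    [Algebra Kp K] (p : Kp) (t : (𝓞 K)ˣ)
    (hp : algebraMap Kp K p = algebraMap (𝓞 K) K (t : 𝓞 K)) :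
    ∃ v : (𝓞 Kp)ˣ, algebraMap (𝓞 Kp) Kp (v : 𝓞 Kp) = p := by
  have hinj : Function.Injective (algebraMap Kp K) := (algebraMap Kp K).injective
  have hpi : IsIntegral ℤ p := by
    rw [← isIntegral_algebraMap_iff hinj, hp]
    exact RingOfIntegers.isIntegral_coe _
  have hpne : p ≠ 0 := by
    intro h0
    rw [h0, map_zero] at hp
    exact RingOfIntegers.coe_ne_zero_iff.mpr t.ne_zero hp.symm
  have hpinv : IsIntegral ℤ p⁻¹ := by
    rw [← isIntegral_algebraMap_iff hinj, map_inv₀, hp, ← coe_inv_unit]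
    exact RingOfIntegers.isIntegral_coe _
  refine ⟨Units.mk ⟨p, hpi⟩ ⟨p⁻¹, hpinv⟩ ?_ ?_, rfl⟩
  · apply RingOfIntegers.coe_injective
    exact mul_inv_cancel₀ hpne
  · apply RingOfIntegers.coe_injective
    exact inv_mul_cancel₀ hpne

/-- Let `K` be a CM field with maximal totally real subfield `Kp`. If there
is a unit `u` of `𝓞 K` such that `u·ū` is not the square of a unit of `𝓞 Kp`, then `K` is
obtained from `Kp` by adjoining the square root of a unit: there are a unit `ε` of `𝓞 Kp`
and an `x ∈ K` with `x² = ε` and `K = Kp(x)`. -/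
theorem cm_field_from_unit_square_root
    (Kp K : Type*) [Field Kp] [NumberField Kp] [Field K] [NumberField K] [Algebra Kp K]
    (htotreal : ∀ (phi : Kp →+* ℂ) (x : Kp), (phi x).im = 0)
    (htotimag : ∀ phi : K →+* ℂ, ∃ x : K, (phi x).im ≠ 0)
    (hdeg : Module.finrank Kp K = 2)
    (conj : K ≃ₐ[Kp] K)
    (hconj_ne : conj ≠ AlgEquiv.refl)
    (hconj_inv : ∀ x, conj (conj x) = x)
    (hfix : ∀ x : K, conj x = x ↔ x ∈ (algebraMap Kp K).range)
    (u : (𝓞 K)ˣ)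
    (hu : ¬ ∃ v : (𝓞 Kp)ˣ,
      algebraMap (𝓞 K) K (u : 𝓞 K) * conj (algebraMap (𝓞 K) K (u : 𝓞 K))
        = algebraMap Kp K ((algebraMap (𝓞 Kp) Kp (v : 𝓞 Kp)) ^ 2)) :
    ∃ (ε : (𝓞 Kp)ˣ) (x : K),
      x ^ 2 = algebraMap Kp K (algebraMap (𝓞 Kp) Kp (ε : 𝓞 Kp)) ∧
      Algebra.adjoin Kp ({x} : Set K) = ⊤ := by
  classical
  have hfd : FiniteDimensional Kp K :=
    FiniteDimensional.of_finrank_pos (by rw [hdeg]; norm_num)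
  -- Step 1: every complex embedding intertwines conj with complex conjugation
  have hconj_embed : ∀ (φ : K →+* ℂ) (y : K), φ (conj y) = starRingEnd ℂ (φ y) := by
    intro φ y
    letI : Algebra Kp ℂ := (φ.comp (algebraMap Kp K)).toAlgebra
    let f : K →ₐ[Kp] ℂ := ⟨φ, fun p => rfl⟩
    let g : K →ₐ[Kp] ℂ := f.comp conj.toAlgHom
    let h : K →ₐ[Kp] ℂ := ⟨(starRingEnd ℂ).comp φ, fun p => ?_⟩
    case refine_2 =>
      have hcard : Fintype.card (K →ₐ[Kp] ℂ) = 2 := by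
        rw [AlgHom.card]; exact hdeg
      have hg : g ≠ f := by
        intro hgf
        apply hconj_ne
        ext x
        exact φ.injective (congrArg (fun (j : K →ₐ[Kp] ℂ) => j x) hgf)
      have hh : h ≠ f := by
        intro hhf
        obtain ⟨x, hx⟩ := htotimag φ
        have := congrArg (fun (j : K →ₐ[Kp] ℂ) => j x) hhf
        simp only [h, f, AlgHom.coe_mk, RingHom.coe_comp, Function.comp_apply] at this
        rw [Complex.conj_eq_iff_im] at this
        exact hx this
      have := eq_of_card_two hcard hg hh
      exact congrArg (fun (j : K →ₐ[Kp] ℂ) => j y) this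
    case refine_1 =>
      show starRingEnd ℂ (φ (algebraMap Kp K p)) = φ (algebraMap Kp K p)
      rw [Complex.conj_eq_iff_im]
      exact htotreal (φ.comp (algebraMap Kp K)) p
  -- Step 2: the root of unity z = u / conj u
  set uK : K := algebraMap (𝓞 K) K (u : 𝓞 K) with huK
  have hcne : ∀ t : (𝓞 K)ˣ, algebraMap (𝓞 K) K (t : 𝓞 K) ≠ 0 :=
    fun t => RingOfIntegers.coe_ne_zero_iff.mpr t.ne_zero
  have huKne : uK ≠ 0 := hcne u
  let C : (𝓞 K)ˣ →* (𝓞 K)ˣ :=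
    Units.map (RingOfIntegers.mapRingEquiv conj.toRingEquiv).toRingHom.toMonoidHom
  have hC : ∀ t : (𝓞 K)ˣ,
      algebraMap (𝓞 K) K ((C t : (𝓞 K)ˣ) : 𝓞 K) = conj (algebraMap (𝓞 K) K (t : 𝓞 K)) :=
    fun t => rfl
  set w : (𝓞 K)ˣ := u * (C u)⁻¹ with hw
  set z : K := algebraMap (𝓞 K) K (w : 𝓞 K) with hz
  have hzval : z = uK * (conj uK)⁻¹ := by
    rw [hz, hw, Units.val_mul, map_mul, coe_inv_unit, hC, huK]
  have hzne : z ≠ 0 := hcne w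
  have hcuKne : conj uK ≠ 0 := by
    intro h0
    apply huKne
    rw [← hconj_inv uK, h0, map_zero]
  have hznorm : ∀ φ : K →+* ℂ, ‖φ z‖ = 1 := by
    intro φ
    have h1 : φ z = φ uK * (φ (conj uK))⁻¹ := by rw [hzval, map_mul, map_inv₀]
    have hne : φ uK ≠ 0 := fun h0 => huKne (by rwa [map_eq_zero] at h0)
    rw [h1, hconj_embed φ uK, norm_mul, norm_inv, RCLike.norm_conj,
      mul_inv_cancel₀ (norm_ne_zero_iff.mpr hne)]
  obtain ⟨m, hm, hzm⟩ :=
    NumberField.Embeddings.pow_eq_one_of_norm_eq_one K ℂ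
      (RingOfIntegers.isIntegral_coe (w : 𝓞 K)) hznorm
  have hpow : ∀ k : ℕ, z ^ k = algebraMap (𝓞 K) K ((w ^ k : (𝓞 K)ˣ) : 𝓞 K) := by
    intro k
    rw [hz, Units.val_pow_eq_pow_val, map_pow]
  have hwm : w ^ m = 1 := by
    apply Units.ext
    apply RingOfIntegers.coe_injective
    rw [← hpow, hzm]
    simp
  set n := orderOf w with hn
  have hnpos : 0 < n := (isOfFinOrder_iff_pow_eq_one.mpr ⟨m, hm, hwm⟩).orderOf_pos
  have hwn : w ^ n = 1 := pow_orderOf_eq_one w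
  have hzn : z ^ n = 1 := by rw [hpow, hwn]; simp
  have hconj_z : conj z = z⁻¹ := by
    rw [hzval, map_mul, map_inv₀, hconj_inv, mul_inv, inv_inv, mul_comm]
  have hcuK : conj uK = uK * z⁻¹ := by
    rw [hzval, mul_inv, inv_inv, ← mul_assoc, mul_inv_cancel₀ huKne, one_mul]
  -- Step 3: final common construction from a unit anti-fixed by conj
  have main : ∀ t : (𝓞 K)ˣ,
      conj (algebraMap (𝓞 K) K (t : 𝓞 K)) = -(algebraMap (𝓞 K) K (t : 𝓞 K)) →
      ∃ (ε : (𝓞 Kp)ˣ) (x : K),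
        x ^ 2 = algebraMap Kp K (algebraMap (𝓞 Kp) Kp (ε : 𝓞 Kp)) ∧
        Algebra.adjoin Kp ({x} : Set K) = ⊤ := by
    intro t ht
    set xK : K := algebraMap (𝓞 K) K (t : 𝓞 K) with hxK
    have hxne : xK ≠ 0 := hcne t
    have hxnotin : xK ∉ (algebraMap Kp K).range := by
      intro hmem
      have hfx := (hfix xK).mpr hmem
      rw [ht] at hfx
      have h2 : (2 : K) * xK = 0 := by linear_combination -hfx
      rcases mul_eq_zero.mp h2 with h0 | h0
      · exact two_ne_zero h0
      · exact hxne h0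
    have hsq : conj (xK ^ 2) = xK ^ 2 := by rw [map_pow, ht]; ring
    obtain ⟨p, hp⟩ := (hfix _).mp hsq
    have hp' : algebraMap Kp K p = algebraMap (𝓞 K) K ((t ^ 2 : (𝓞 K)ˣ) : 𝓞 K) := by
      rw [hp, Units.val_pow_eq_pow_val, map_pow, ← hxK]
    obtain ⟨v, hv⟩ := unit_of_fixed p (t ^ 2) hp'
    refine ⟨v, xK, ?_, ?_⟩
    · rw [hv]; exact hp.symm
    · have hmem1 : xK ∈ Algebra.adjoin Kp ({xK} : Set K) := Algebra.subset_adjoin rfl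
      have hli : LinearIndependent Kp ![1, xK] := by
        rw [LinearIndependent.pair_iff]
        intro s r hsr
        have hsr' : algebraMap Kp K s + algebraMap Kp K r * xK = 0 := by
          rw [Algebra.algebraMap_eq_smul_one, ← Algebra.smul_def]
          exact hsr
        by_cases hr : r = 0
        · subst hr
          refine ⟨?_, rfl⟩
          apply (algebraMap Kp K).injective
          rw [map_zero]
          simpa using hsr'
        · exfalso
          apply hxnotin
          refine ⟨-(s / r), ?_⟩
          have hrK : algebraMap Kp K r ≠ 0 := fun h0 => hr ((algebraMap Kp K).injective (by rw [h0, map_zero]))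
          rw [map_neg, map_div₀]
          field_simp
          linear_combination -hsr'
      rw [← Algebra.toSubmodule_eq_top]
      apply Submodule.eq_top_of_finrank_eq
      rw [hdeg]
      apply le_antisymm
      · exact hdeg ▸ Submodule.finrank_le _
      · have hspan : Submodule.span Kp (Set.range ![1, xK]) ≤
            Subalgebra.toSubmodule (Algebra.adjoin Kp ({xK} : Set K)) := by
          rw [Submodule.span_le]
          rintro y ⟨i, rfl⟩
          fin_cases i
          · exact Subalgebra.one_mem _
          · exact hmem1
        have h2 : Module.finrank Kp (Submodule.span Kp (Set.range ![1, xK])) = 2 := by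
          rw [finrank_span_eq_card hli]; simp
        calc (2 : ℕ) = Module.finrank Kp (Submodule.span Kp (Set.range ![1, xK])) := h2.symm
          _ ≤ _ := Submodule.finrank_mono hspan
  -- Step 4: case analysis on the order of z
  rcases Nat.even_or_odd n with hev | hodd
  · -- n even: z ^ (n/2) = -1
    obtain ⟨l, hl⟩ := hev
    have hlpos : 0 < l := by omega
    have hwl : w ^ l ≠ 1 := by
      intro h1
      have hdvd := orderOf_dvd_of_pow_eq_one h1
      have := Nat.le_of_dvd hlpos hdvd
      omega
    have hzl : z ^ l = -1 := by
      have hsq2 : z ^ l * z ^ l = 1 := by rw [← pow_add, ← hl, hzn]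
      rcases mul_self_eq_one_iff.mp hsq2 with h0 | h0
      · exfalso
        apply hwl
        apply Units.ext
        apply RingOfIntegers.coe_injective
        rw [← hpow, h0]
        simp
      · exact h0
    rcases Nat.even_or_odd l with hev2 | hodd2
    · -- 4 ∣ n : use w ^ (l/2)
      obtain ⟨q, hq⟩ := hev2
      apply main (w ^ q)
      rw [← hpow, map_pow, hconj_z, inv_pow]
      have hkey : z ^ (q * 2) = -1 := by
        rw [pow_mul, pow_two, ← pow_add, ← hq, hzl]
      have hzqne : z ^ q ≠ 0 := pow_ne_zero _ hzne
      field_simp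
      linear_combination hkey
    · -- n ≡ 2 mod 4 : use u * (w ^ k)⁻¹ with 2k = l + 1
      obtain ⟨q, hq⟩ := hodd2
      set k : ℕ := q + 1 with hk
      have h2k : k + k = l + 1 := by omega
      apply main (u * (w ^ k)⁻¹)
      have hx : algebraMap (𝓞 K) K ((u * (w ^ k)⁻¹ : (𝓞 K)ˣ) : 𝓞 K) = uK * (z ^ k)⁻¹ := by
        rw [Units.val_mul, map_mul, coe_inv_unit, Units.val_pow_eq_pow_val, map_pow, ← hz, ← huK]
      rw [hx, map_mul, map_inv₀, map_pow, hconj_z, hcuK, inv_pow, inv_inv]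
      have hkey : z ^ k * z ^ k = -z := by
        rw [← pow_add, h2k, pow_succ, hzl]; ring
      have hzkne : z ^ k ≠ 0 := pow_ne_zero _ hzne
      field_simp
      rw [hk] at hkey
      linear_combination hkey
  · -- n odd: contradiction with hu
    exfalso
    obtain ⟨q, hq⟩ := hodd
    set k : ℕ := q + 1 with hk
    have h2k : k + k = n + 1 := by omega
    set e : (𝓞 K)ˣ := u * (w ^ k)⁻¹ with he
    have hex : algebraMap (𝓞 K) K (e : 𝓞 K) = uK * (z ^ k)⁻¹ := by
      rw [he, Units.val_mul, map_mul, coe_inv_unit, Units.val_pow_eq_pow_val, map_pow, ← hz, ← huK]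
    have hkey : z ^ k * z ^ k = z := by
      rw [← pow_add, h2k, pow_succ, hzn, one_mul]
    have hzkne : z ^ k ≠ 0 := pow_ne_zero _ hzne
    have hefix : conj (algebraMap (𝓞 K) K (e : 𝓞 K)) = algebraMap (𝓞 K) K (e : 𝓞 K) := by
      rw [hex, map_mul, map_inv₀, map_pow, hconj_z, hcuK, inv_pow, inv_inv]
      field_simp
      rw [hk] at hkey
      linear_combination hkey
    obtain ⟨p, hp⟩ := (hfix _).mp hefix
    obtain ⟨v, hv⟩ := unit_of_fixed p e hp
    apply hu
    refine ⟨v, ?_⟩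
    rw [hv, map_pow, hp, hex, hcuK]
    field_simp
    rw [hk] at hkey
    linear_combination hkey

end
end

section
/- Let K be a CM field of degree 2n over ℚ, let q be a positive integer, and let π be an algebraic integer with K = ℚ(π) and π·π̄ = q. Let Δ_R be the discriminant of the order R = ℤ[π, π̄] and Δ_{R⁺} the discriminant of R⁺ = ℤ[π + π̄]. Then |Δ_R| = |N_{K/ℚ}(π − π̄)| · Δ_{R⁺}². -/
open Polynomial IntermediateField

noncomputable section

lemma det_aux {R : Type*} [CommRing R] {n : ℕ} (N : Matrix (Fin n) (Fin n) R)
    (P : Fin n → Bool → R) :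
    (Matrix.of fun (iu : Fin n × Bool) (jv : Fin n × Bool) =>
        N iu.1 jv.1 * (cond iu.2 (P jv.1 jv.2) 1)).det
      = N.det ^ 2 * ∏ j, (P j true - P j false) := by
  classical
  have hfac : (Matrix.of fun (iu : Fin n × Bool) (jv : Fin n × Bool) =>
        N iu.1 jv.1 * (cond iu.2 (P jv.1 jv.2) 1))
      = (Matrix.kroneckerMap (· * ·) N (1 : Matrix Bool Bool R)) *
        (Matrix.of fun (kw : Fin n × Bool) (jv : Fin n × Bool) =>
          if kw.1 = jv.1 then (cond kw.2 (P jv.1 jv.2) 1) else 0) := by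
    ext ⟨i, u⟩ ⟨j, v⟩
    simp only [Matrix.mul_apply, Matrix.of_apply, Matrix.kroneckerMap, Fintype.sum_prod_type]
    rw [Finset.sum_eq_single j]
    · simp [Matrix.one_apply]
    · intro k _ hk
      simp [hk, Ne.symm]
    · simp
  rw [hfac, Matrix.det_mul, Matrix.det_kronecker, Matrix.det_one, one_pow, mul_one,
    Fintype.card_bool]
  congr 1
  have hre : (Matrix.of fun (kw : Fin n × Bool) (jv : Fin n × Bool) =>
          if kw.1 = jv.1 then (cond kw.2 (P jv.1 jv.2) 1) else 0)
      = Matrix.reindex (Equiv.prodComm Bool (Fin n)) (Equiv.prodComm Bool (Fin n))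
        (Matrix.blockDiagonal fun j => Matrix.of fun w v : Bool => cond w (P j v) 1) := by
    ext ⟨k, w⟩ ⟨j, v⟩
    simp only [Matrix.reindex_apply, Matrix.submatrix_apply, Equiv.prodComm_symm,
      Equiv.prodComm_apply, Prod.swap, Matrix.blockDiagonal_apply, Matrix.of_apply]
    by_cases h : k = j <;> simp [h, eq_comm]
  rw [hre, Matrix.det_reindex_self, Matrix.det_blockDiagonal]
  refine Finset.prod_congr rfl fun j _ => ?_
  have : (Matrix.of fun w v : Bool => cond w (P j v) 1)
      = Matrix.reindex finTwoEquiv finTwoEquiv !![(1:R), 1; P j false, P j true] := by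
    ext w v
    fin_cases w <;> fin_cases v <;> simp [finTwoEquiv]
  rw [this, Matrix.det_reindex_self, Matrix.det_fin_two_of]
  ring

set_option synthInstance.maxHeartbeats 1000000 in
set_option maxHeartbeats 4000000 in

lemma repr_int {V : Type*} [AddCommGroup V] [Module ℚ V] {ι : Type*} [Fintype ι]
    (B : Module.Basis ι ℚ V) (x : V) (hx : x ∈ Submodule.span ℤ (Set.range ⇑B)) (i : ι) :
    IsIntegral ℤ (B.repr x i) := by
  classical
  obtain ⟨m, hm⟩ := (Submodule.mem_span_range_iff_exists_fun ℤ).mp hx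
  have hrepr : B.repr x i = (m i : ℚ) := by
    rw [← hm, map_sum]
    simp only [map_zsmul, Module.Basis.repr_self, Finsupp.coe_finset_sum, Finset.sum_apply,
      Finsupp.coe_smul, Pi.smul_apply, Finsupp.single_apply]
    rw [Finset.sum_eq_single i]
    · simp
    · intro j _ hj; simp [hj]
    · simp
  rw [hrepr]
  exact isIntegral_algebraMap

set_option synthInstance.maxHeartbeats 1000000 in
set_option maxHeartbeats 4000000 in
/-- Let `K` be a CM field of degree `2n` over `ℚ`, let `q` be a positive
integer, and let `π` be an algebraic integer with `K = ℚ(π)` and `π·π̄ = q`.  Let `Δ_R` be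
the discriminant of the order `R = ℤ[π, π̄]` (the discriminant of any `ℤ`-basis `b` of `R`
with respect to the trace form of `K/ℚ`) and `Δ_{R⁺}` that of `R⁺ = ℤ[π + π̄]` (computed in
`K⁺ = ℚ(π + π̄)`).  Then `|Δ_R| = |N_{K/ℚ}(π − π̄)|·Δ_{R⁺}²`. -/
theorem discriminant_of_minimal_order
    (n : ℕ) (hn : 0 < n)
    (K : Type*) [Field K] [NumberField K]
    (hdegQ : Module.finrank ℚ K = 2 * n)
    (conj : K ≃ₐ[ℚ] K)
    (hconj_ne : conj ≠ AlgEquiv.refl)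
    (hconj_inv : ∀ x, conj (conj x) = x)
    (hstar : ∀ (phi : K →+* ℂ) (x : K), phi (conj x) = (starRingEnd ℂ) (phi x))
    (q : ℕ) (hq : 0 < q)
    (π : K) (hπint : IsIntegral ℤ π)
    (hgen : Algebra.adjoin ℚ ({π} : Set K) = ⊤)
    (hπq : π * conj π = (q : K))
    -- `b` is a `ℤ`-basis of `R = ℤ[π, π̄]`
    (b : Fin (2 * n) → K)
    (hbmem : ∀ i, b i ∈ Subring.closure {π, conj π})
    (hbli : LinearIndependent ℤ b)
    (hbspan : ∀ x ∈ Subring.closure {π, conj π}, x ∈ Submodule.span ℤ (Set.range b))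
    -- `c` is a `ℤ`-basis of `R⁺ = ℤ[π + π̄]`, viewed inside `K⁺ = ℚ⟮π + π̄⟯`
    (c : Fin n → ℚ⟮π + conj π⟯)
    (hcmem : ∀ i, (c i : K) ∈ Subring.closure {π + conj π})
    (hcli : LinearIndependent ℤ c)
    (hcspan : ∀ x : ℚ⟮π + conj π⟯,
      (x : K) ∈ Subring.closure {π + conj π} → x ∈ Submodule.span ℤ (Set.range c)) :
    |Algebra.discr ℚ b|
      = |Algebra.norm ℚ (π - conj π)| * (Algebra.discr ℚ c) ^ 2 := by
  classical
  have hnK : Nonempty (Fin (2 * n)) := ⟨⟨0, by positivity⟩⟩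
  revert hcmem hcli hcspan
  revert c
  set s : K := π + conj π with hs_def
  set Kp := ℚ⟮π + conj π⟯ with hKp_def
  intro c hcmem hcli hcspan
  -- conj fixes s
  have hconj_s : conj s = s := by
    simp only [hs_def, map_add, hconj_inv, add_comm]
  -- conj π is integral
  have hconjπint : IsIntegral ℤ (conj π) :=
    hπint.map conj.toAlgHom.toRingHom.toIntAlgHom
  have hsint : IsIntegral ℤ s := hπint.add hconjπint
  have hsalg : IsIntegral ℚ s := hsint.tower_top
  -- π ≠ conj π
  have hπne : π ≠ conj π := by
    intro h
    apply hconj_ne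
    have hle : Algebra.adjoin ℚ ({π} : Set K) ≤ AlgHom.equalizer conj.toAlgHom (AlgHom.id ℚ K) := by
      rw [Algebra.adjoin_le_iff]
      rintro x rfl
      exact h.symm
    rw [hgen, top_le_iff] at hle
    ext x
    have : x ∈ AlgHom.equalizer conj.toAlgHom (AlgHom.id ℚ K) := hle ▸ trivial
    exact this
  -- conj fixes Kp pointwise
  have hfix : ∀ x : Kp, conj (x : K) = (x : K) := by
    have hle : Algebra.adjoin ℚ ({s} : Set K) ≤ AlgHom.equalizer conj.toAlgHom (AlgHom.id ℚ K) := by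
      rw [Algebra.adjoin_le_iff]
      rintro x rfl
      exact hconj_s
    intro x
    have hx : (x : K) ∈ Algebra.adjoin ℚ ({s} : Set K) := by
      rw [← IntermediateField.adjoin_simple_toSubalgebra_of_isAlgebraic hsalg.isAlgebraic]
      exact x.2
    exact hle hx
  -- π ∉ Kp
  have hπKp : π ∉ Kp := fun h => hπne ((hfix ⟨π, h⟩).symm ▸ rfl)
  have hs_mem : s ∈ Kp := IntermediateField.mem_adjoin_simple_self ℚ s
  have hπintKp : IsIntegral Kp π := hπint.tower_top
  -- Kp⟮π⟯ = ⊤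
  have hKtop : Kp⟮π⟯ = (⊤ : IntermediateField Kp K) := by
    rw [eq_top_iff]
    intro x _
    have hx : x ∈ Algebra.adjoin ℚ ({π} : Set K) := by rw [hgen]; trivial
    have hle : Algebra.adjoin ℚ ({π} : Set K)
        ≤ (IntermediateField.restrictScalars ℚ Kp⟮π⟯).toSubalgebra := by
      rw [Algebra.adjoin_le_iff]
      simp only [Set.singleton_subset_iff]
      exact IntermediateField.mem_adjoin_simple_self Kp π
    exact hle hx
  -- the quadratic polynomial of π over Kp
  set p : Polynomial Kp := X ^ 2 + (C (-(⟨s, hs_mem⟩ : Kp)) * X + C ((q : Kp))) with hp_def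
  have hpmon : p.Monic := by
    apply Polynomial.monic_X_pow_add
    exact lt_of_le_of_lt Polynomial.degree_linear_le (by norm_num)
  have hproot : (Polynomial.aeval π) p = 0 := by
    have h1 : algebraMap Kp K (⟨s, hs_mem⟩ : Kp) = s := rfl
    have h2 : algebraMap Kp K ((q : Kp)) = (q : K) := by
      rw [map_natCast]
    simp only [hp_def, map_add, map_pow, map_mul, aeval_X, aeval_C, map_neg, h1, h2]
    rw [← hπq, hs_def]
    ring
  have hpdeg : p.degree = 2 := by
    rw [hp_def]
    rw [Polynomial.degree_add_eq_left_of_degree_lt]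
    · exact Polynomial.degree_X_pow 2
    · rw [Polynomial.degree_X_pow]
      exact lt_of_le_of_lt Polynomial.degree_linear_le (by norm_num)
  have hmindeg : (minpoly Kp π).natDegree = 2 := by
    have hle2 : (minpoly Kp π).degree ≤ 2 := by
      have := minpoly.min Kp π hpmon hproot
      rwa [hpdeg] at this
    have hne0 : minpoly Kp π ≠ 0 := minpoly.ne_zero hπintKp
    have hd1 : (minpoly Kp π).degree ≠ 1 := by
      intro h
      rw [minpoly.degree_eq_one_iff] at h
      obtain ⟨y, hy⟩ := h
      exact hπKp (hy ▸ y.2)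
    have hpos : 0 < (minpoly Kp π).natDegree := minpoly.natDegree_pos hπintKp
    have hle2' : (minpoly Kp π).natDegree ≤ 2 :=
      Polynomial.natDegree_le_iff_degree_le.mpr hle2
    have hne1 : (minpoly Kp π).natDegree ≠ 1 := by
      intro h
      apply hd1
      rw [Polynomial.degree_eq_natDegree hne0, h]
      rfl
    omega
  have hrankKpK : Module.finrank Kp K = 2 := by
    have h1 := IntermediateField.adjoin.finrank hπintKp
    rw [hKtop, hmindeg] at h1
    rwa [IntermediateField.finrank_top'] at h1
  have hrankKp : Module.finrank ℚ Kp = n := by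
    have h := Module.finrank_mul_finrank ℚ (↥Kp) K
    rw [hrankKpK, hdegQ] at h
    omega
  -- ℚ-linear independence
  haveI : Nonempty (Fin n) := ⟨⟨0, hn⟩⟩
  have hcQ : LinearIndependent ℚ c := (LinearIndependent.iff_fractionRing ℤ ℚ).mp hcli
  have hbQ : LinearIndependent ℚ b := (LinearIndependent.iff_fractionRing ℤ ℚ).mp hbli
  set Cbasis : Module.Basis (Fin n) ℚ Kp :=
    basisOfLinearIndependentOfCardEqFinrank hcQ (by simp [hrankKp]) with hCbasis_def
  have hCcoe : ⇑Cbasis = c := coe_basisOfLinearIndependentOfCardEqFinrank hcQ _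
  set Bbasis : Module.Basis (Fin (2 * n)) ℚ K :=
    basisOfLinearIndependentOfCardEqFinrank hbQ (by simp [hdegQ]) with hBbasis_def
  have hBcoe : ⇑Bbasis = b := coe_basisOfLinearIndependentOfCardEqFinrank hbQ _
  -- the Kp-basis {1, π} of K
  have halg : ∀ y : Kp, algebraMap Kp K y = (y : K) := fun _ => rfl
  have hmem1 : ∀ y : Kp, (y : K) ∈ Kp := fun y => y.2
  have hliKp : LinearIndependent Kp (fun u : Bool => cond u π 1) := by
    rw [Fintype.linearIndependent_iff]
    intro g hg
    rw [Fintype.sum_bool] at hg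
    by_cases hgt : g true = 0
    · rw [hgt, zero_smul, zero_add] at hg
      rcases smul_eq_zero.mp hg with h | h
      · intro i; cases i
        · exact h
        · exact hgt
      · exact absurd h one_ne_zero
    · exfalso
      apply hπKp
      have hπeq : π = (-(g true)⁻¹ * g false) • (1 : K) := by
        have h1 : g true • π = -(g false • (1 : K)) := by
          rw [eq_neg_iff_add_eq_zero]; simpa using hg
        calc π = (g true)⁻¹ • (g true • π) := (inv_smul_smul₀ hgt π).symm
        _ = (g true)⁻¹ • (-(g false • (1 : K))) := by rw [h1]
        _ = (-(g true)⁻¹ * g false) • (1 : K) := by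
            rw [smul_neg, smul_smul, neg_mul, neg_smul]
      rw [hπeq, Algebra.smul_def, mul_one, halg]
      exact hmem1 _
  set pb2 : Module.Basis Bool Kp K :=
    basisOfLinearIndependentOfCardEqFinrank hliKp (by simp [hrankKpK]) with hpb2_def
  have hpb2coe : ⇑pb2 = (fun u : Bool => cond u π 1) :=
    coe_basisOfLinearIndependentOfCardEqFinrank hliKp _
  -- the product basis
  set B' : Module.Basis (Fin n × Bool) ℚ K := Cbasis.smulTower pb2 with hB'_def
  have hB'app : ∀ iu : Fin n × Bool, B' iu = (c iu.1 : K) * cond iu.2 π 1 := by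
    rintro ⟨i, u⟩
    rw [hB'_def, Module.Basis.smulTower_apply, Algebra.smul_def, hCcoe, hpb2coe]

    rfl
  -- the ℤ-span of the product basis
  set S : Submodule ℤ K := Submodule.span ℤ (Set.range ⇑B') with hS_def
  set ℓ0 : Kp →ₗ[ℤ] K := (algebraMap Kp K).toIntAlgHom.toLinearMap with hℓ0_def
  have hℓ0app : ∀ y : Kp, ℓ0 y = (y : K) := fun _ => rfl
  set ℓπ : Kp →ₗ[ℤ] K := (LinearMap.mulRight ℤ π).comp ℓ0 with hℓπ_def
  have hℓπapp : ∀ y : Kp, ℓπ y = (y : K) * π := fun _ => rfl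
  have hspan_map : ∀ (ℓ : Kp →ₗ[ℤ] K), (∀ i, ℓ (c i) ∈ S) →
      ∀ x : Kp, x ∈ Submodule.span ℤ (Set.range c) → ℓ x ∈ S := by
    intro ℓ hgen x hx
    have h1 : ℓ x ∈ Submodule.map ℓ (Submodule.span ℤ (Set.range c)) :=
      Submodule.mem_map_of_mem hx
    rw [Submodule.map_span] at h1
    refine Submodule.span_le.mpr ?_ h1
    rintro _ ⟨_, ⟨i, rfl⟩, rfl⟩
    exact hgen i
  have hS1 : ∀ x : Kp, (x : K) ∈ Subring.closure ({s} : Set K) → (x : K) ∈ S := by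
    intro x hx
    rw [← hℓ0app]
    refine hspan_map ℓ0 (fun i => ?_) x (hcspan x hx)
    rw [hℓ0app]
    have : ((c i : K)) = B' (i, false) := by rw [hB'app]; simp
    rw [this]
    exact Submodule.subset_span ⟨(i, false), rfl⟩
  have hS2 : ∀ x : Kp, (x : K) ∈ Subring.closure ({s} : Set K) → (x : K) * π ∈ S := by
    intro x hx
    rw [← hℓπapp]
    refine hspan_map ℓπ (fun i => ?_) x (hcspan x hx)
    rw [hℓπapp]
    have : ((c i : K)) * π = B' (i, true) := by
      rw [hB'app]; simp
    rw [this]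
    exact Submodule.subset_span ⟨(i, true), rfl⟩
  have hs_cl : s ∈ Subring.closure ({s} : Set K) := Subring.subset_closure rfl
  have hππ : π * π = s * π - (q : K) := by
    rw [hs_def, ← hπq]; ring
  have hmulS : ∀ x ∈ S, ∀ y ∈ S, x * y ∈ S := by
    intro x hx y hy
    induction hx, hy using Submodule.span_induction₂ with
    | mem_mem u v hu hv =>
      obtain ⟨⟨i, w⟩, rfl⟩ := hu
      obtain ⟨⟨j, w'⟩, rfl⟩ := hv
      have hmcl : ((c i * c j : Kp) : K) ∈ Subring.closure ({s} : Set K) := by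
        push_cast
        exact mul_mem (hcmem i) (hcmem j)
      cases w <;> cases w'
      · have he : B' (i, false) * B' (j, false) = ((c i * c j : Kp) : K) := by
          rw [hB'app, hB'app]; simp only [Bool.cond_true, Bool.cond_false]; push_cast; ring
        rw [he]; exact hS1 _ hmcl
      · have he : B' (i, false) * B' (j, true) = ((c i * c j : Kp) : K) * π := by
          rw [hB'app, hB'app]; simp only [Bool.cond_true, Bool.cond_false]; push_cast; ring
        rw [he]; exact hS2 _ hmcl
      · have he : B' (i, true) * B' (j, false) = ((c i * c j : Kp) : K) * π := by
          rw [hB'app, hB'app]; simp only [Bool.cond_true, Bool.cond_false]; push_cast; ring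
        rw [he]; exact hS2 _ hmcl
      · have he : B' (i, true) * B' (j, true)
            = ((c i * c j * ⟨s, hs_mem⟩ : Kp) : K) * π - (q : ℤ) • ((c i * c j : Kp) : K) := by
          rw [hB'app, hB'app]
          simp only [Bool.cond_true, Bool.cond_false]
          push_cast [zsmul_eq_mul]
          linear_combination ((c i : K) * (c j : K)) * hππ
        rw [he]
        refine Submodule.sub_mem _ ?_ (Submodule.smul_mem _ _ (hS1 _ hmcl))
        refine hS2 _ ?_
        push_cast
        exact mul_mem hmcl hs_cl
    | zero_left y hy => rw [zero_mul]; exact Submodule.zero_mem S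
    | zero_right x hx => rw [mul_zero]; exact Submodule.zero_mem S
    | add_left x z y hx hz hy h1 h2 => rw [add_mul]; exact Submodule.add_mem S h1 h2
    | add_right x y z hx hy hz h1 h2 => rw [mul_add]; exact Submodule.add_mem S h1 h2
    | smul_left r x y hx hy h => rw [smul_mul_assoc]; exact Submodule.smul_mem S r h
    | smul_right r x y hx hy h => rw [mul_smul_comm]; exact Submodule.smul_mem S r h
  have hone_cl : ((1 : Kp) : K) ∈ Subring.closure ({s} : Set K) := by
    push_cast; exact one_mem _
  have hπS : π ∈ S := by
    have : π = ((1 : Kp) : K) * π := by push_cast; ring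
    rw [this]
    exact hS2 1 hone_cl
  have hRS : ∀ x ∈ Subring.closure ({π, conj π} : Set K), x ∈ S := by
    intro x hx
    induction hx using Subring.closure_induction with
    | mem y hy =>
      rcases hy with rfl | rfl
      · exact hπS
      · have hcs : conj π = s - π := by rw [hs_def]; ring
        rw [hcs]
        refine Submodule.sub_mem _ ?_ hπS
        have : s = ((⟨s, hs_mem⟩ : Kp) : K) := rfl
        rw [this]
        exact hS1 _ hs_cl
    | zero => exact Submodule.zero_mem S
    | one =>
      have : (1 : K) = ((1 : Kp) : K) := by push_cast; ring
      rw [this]; exact hS1 1 hone_cl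
    | add x y hx hy h1 h2 => exact Submodule.add_mem S h1 h2
    | neg x hx h => exact Submodule.neg_mem S h
    | mul x y hx hy h1 h2 => exact hmulS x h1 y h2
  -- S is also the span of b
  have hclmono : Subring.closure ({s} : Set K) ≤ Subring.closure ({π, conj π} : Set K) := by
    rw [Subring.closure_le]
    intro y hy
    rw [Set.mem_singleton_iff] at hy
    subst hy
    rw [hs_def]
    exact add_mem (Subring.subset_closure (by simp)) (Subring.subset_closure (by simp))
  have hB'R : ∀ iu : Fin n × Bool, B' iu ∈ Subring.closure ({π, conj π} : Set K) := by
    rintro ⟨i, u⟩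
    rw [hB'app]
    refine mul_mem (hclmono (hcmem i)) ?_
    cases u
    · exact one_mem _
    · exact Subring.subset_closure (by simp)
  have hSb : S ≤ Submodule.span ℤ (Set.range b) := by
    rw [hS_def, Submodule.span_le]
    rintro _ ⟨iu, rfl⟩
    exact hbspan _ (hB'R iu)
  have hbS : Submodule.span ℤ (Set.range b) ≤ S := by
    rw [Submodule.span_le]
    rintro _ ⟨i, rfl⟩
    exact hRS _ (hbmem i)
  -- equality of discriminants
  have hdiscBB' : Algebra.discr ℚ ⇑Bbasis = Algebra.discr ℚ ⇑B' := by
    refine Algebra.discr_eq_discr_of_toMatrix_coeff_isIntegral K ?_ ?_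
    · intro i j
      refine repr_int Bbasis (B' j) ?_ i
      rw [hBcoe]
      exact hSb (Submodule.subset_span ⟨j, rfl⟩)
    · intro i j
      refine repr_int B' (Bbasis j) ?_ i
      rw [hBcoe]
      exact hbS (Submodule.subset_span ⟨j, rfl⟩)
  -- embeddings into ℂ
  haveI : FiniteDimensional ℚ Kp := inferInstance
  have hcardEm : Fintype.card (K →ₐ[ℚ] ℂ) = 2 * n := by
    rw [AlgHom.card]; exact hdegQ
  have hcardEmp : Fintype.card (Kp →ₐ[ℚ] ℂ) = n := by
    rw [AlgHom.card]; exact hrankKp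
  -- every embedding of Kp extends to K
  have hext : ∀ τ : Kp →ₐ[ℚ] ℂ, ∃ σ : K →ₐ[ℚ] ℂ,
      σ.comp (IsScalarTower.toAlgHom ℚ Kp K) = τ := by
    intro τ
    letI : Algebra Kp ℂ := τ.toRingHom.toAlgebra
    haveI : IsScalarTower ℚ Kp ℂ := IsScalarTower.of_algebraMap_eq fun r => (τ.commutes r).symm
    haveI : Algebra.IsAlgebraic Kp K := Algebra.IsAlgebraic.of_finite Kp K
    let φ : K →ₐ[Kp] ℂ := IsAlgClosed.lift
    refine ⟨φ.restrictScalars ℚ, ?_⟩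
    ext x
    exact φ.commutes x
  choose sec hsec using hext
  have hsecval : ∀ (τ : Kp →ₐ[ℚ] ℂ) (x : Kp), sec τ (x : K) = τ x := by
    intro τ x
    have := AlgHom.congr_fun (hsec τ) x
    exact this
  set ep : Fin n ≃ (Kp →ₐ[ℚ] ℂ) := (Fintype.equivFinOfCardEq hcardEmp).symm with hep_def
  set esf : Fin n × Bool → (K →ₐ[ℚ] ℂ) :=
    fun jv => if jv.2 then (sec (ep jv.1)).comp conj.toAlgHom else sec (ep jv.1) with hesf_def
  have hesftrue : ∀ (j : Fin n) (x : K), esf (j, true) x = sec (ep j) (conj x) := by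
    intro j x; simp [hesf_def]
  have hesffalse : ∀ (j : Fin n) (x : K), esf (j, false) x = sec (ep j) x := by
    intro j x; simp [hesf_def]
  have hres : ∀ (j : Fin n) (v : Bool) (x : Kp), esf (j, v) (x : K) = ep j x := by
    intro j v x
    cases v
    · rw [hesffalse]; exact hsecval _ x
    · rw [hesftrue, hfix]; exact hsecval _ x
  have hsecinj : ∀ τ : Kp →ₐ[ℚ] ℂ, Function.Injective (sec τ) :=
    fun τ => (sec τ).toRingHom.injective
  have hinj : Function.Injective esf := by
    rintro ⟨j, v⟩ ⟨j', v'⟩ h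
    have hjj : j = j' := by
      apply ep.injective
      ext x
      rw [← hres j v x, ← hres j' v' x, h]
    subst hjj
    have hvv : v = v' := by
      by_contra hne'
      have hππ' : π = conj π := by
        cases v <;> cases v'
        · exact absurd rfl hne'
        · have := AlgHom.congr_fun h π
          rw [hesffalse, hesftrue] at this
          exact hsecinj _ this
        · have := AlgHom.congr_fun h π
          rw [hesftrue, hesffalse] at this
          exact (hsecinj _ this).symm
        · exact absurd rfl hne'
      exact hπne hππ'
    rw [hvv]
  have hbij : Function.Bijective esf := by
    rw [Fintype.bijective_iff_injective_and_card]
    refine ⟨hinj, ?_⟩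
    simp [hcardEm, Nat.mul_comm]
  set es : (Fin n × Bool) ≃ (K →ₐ[ℚ] ℂ) := Equiv.ofBijective esf hbij with hes_def
  have hesapp : ∀ jv, es jv = esf jv := fun _ => rfl
  -- embeddings matrices
  set N : Matrix (Fin n) (Fin n) ℂ := Algebra.embeddingsMatrixReindex ℚ ℂ (⇑Cbasis) ep
    with hN_def
  have hdiscC : algebraMap ℚ ℂ (Algebra.discr ℚ ⇑Cbasis) = N.det ^ 2 :=
    Algebra.discr_eq_det_embeddingsMatrixReindex_pow_two ℚ ℂ (⇑Cbasis) ep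
  set M : Matrix (Fin n × Bool) (Fin n × Bool) ℂ :=
    Algebra.embeddingsMatrixReindex ℚ ℂ (⇑B') es with hM_def
  have hdiscB : algebraMap ℚ ℂ (Algebra.discr ℚ ⇑B') = M.det ^ 2 :=
    Algebra.discr_eq_det_embeddingsMatrixReindex_pow_two ℚ ℂ (⇑B') es
  set Pf : Fin n → Bool → ℂ := fun j v => esf (j, v) π with hPf_def
  have hMeq : M = Matrix.of fun (iu : Fin n × Bool) (jv : Fin n × Bool) =>
      N iu.1 jv.1 * (cond iu.2 (Pf jv.1 jv.2) 1) := by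
    ext ⟨i, u⟩ ⟨j, v⟩
    have hM1 : M (i, u) (j, v) = esf (j, v) (B' (i, u)) := rfl
    have hN1 : N i j = ep j (Cbasis i) := rfl
    rw [hM1, Matrix.of_apply, hN1, hCcoe, hB'app, map_mul, hres j v (c i)]
    congr 1
    cases u
    · simp
    · simp [hPf_def]
  have hMdet : M.det = N.det ^ 2 * ∏ j, (Pf j true - Pf j false) := by
    rw [hMeq]; exact det_aux N Pf
  -- the norm as a product over embeddings
  have hnorm : algebraMap ℚ ℂ (Algebra.norm ℚ (π - conj π))
      = ∏ σ : K →ₐ[ℚ] ℂ, σ (π - conj π) :=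
    Algebra.norm_eq_prod_embeddings ℚ ℂ (π - conj π)
  have hswap1 : ∀ j : Fin n, esf (j, false) (conj π) = Pf j true := by
    intro j; rw [hesffalse]; exact (hesftrue j π).symm
  have hswap2 : ∀ j : Fin n, esf (j, true) (conj π) = Pf j false := by
    intro j; rw [hesftrue, hconj_inv]; exact (hesffalse j π).symm
  have hprod : (∏ σ : K →ₐ[ℚ] ℂ, σ (π - conj π))
      = (-1 : ℂ) ^ n * ∏ j, (Pf j true - Pf j false) ^ 2 := by
    rw [← Equiv.prod_comp es (fun σ => σ (π - conj π))]
    rw [Fintype.prod_prod_type]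
    have hcongr : ∀ j : Fin n, (∏ v : Bool, es (j, v) (π - conj π))
        = (-1 : ℂ) * (Pf j true - Pf j false) ^ 2 := by
      intro j
      rw [Fintype.prod_bool, hesapp, hesapp, map_sub, map_sub, hswap1 j, hswap2 j]
      have h1 : esf (j, true) π = Pf j true := rfl
      have h2 : esf (j, false) π = Pf j false := rfl
      rw [h1, h2]
      ring
    rw [Finset.prod_congr rfl fun j _ => hcongr j, Finset.prod_mul_distrib,
      Finset.prod_const, Finset.card_univ, Fintype.card_fin]
  -- the key identity over ℚ
  have hmain : Algebra.discr ℚ ⇑B'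
      = (-1 : ℚ) ^ n * Algebra.norm ℚ (π - conj π) * (Algebra.discr ℚ ⇑Cbasis) ^ 2 := by
    apply (algebraMap ℚ ℂ).injective
    rw [map_mul, map_mul, map_pow, map_pow, hdiscB, hdiscC, hnorm, hprod, hMdet, map_neg,
      map_one]
    have h1 : ((-1 : ℂ) ^ n) * ((-1 : ℂ) ^ n) = 1 := by
      rw [← mul_pow]; norm_num
    rw [mul_pow, ← Finset.prod_pow]
    linear_combination (-(∏ j, (Pf j true - Pf j false) ^ 2) * N.det ^ 4) * h1
  -- final assembly
  have hgoal1 : Algebra.discr ℚ b = Algebra.discr ℚ ⇑Bbasis := by rw [hBcoe]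
  have hgoal2 : Algebra.discr ℚ (fun i => c i) = Algebra.discr ℚ ⇑Cbasis := by
    rw [hCcoe]
  rw [hgoal1, hdiscBB', hmain, ← hgoal2]
  rw [abs_mul, abs_mul, abs_pow, abs_neg, abs_one, one_pow, one_mul, abs_pow, sq_abs]

end
end

section
/- Let F be a positive integer and let χ be a function assigning to each prime p dividing F a value χ(p) ∈ {−1, 0, 1}. Then, as rational numbers, (F·∏_{p ∣ F} (1 − χ(p)/p)) / (∑_{f ∣ F} f·∏_{p ∣ f} (1 − χ(p)/p)) ≤ ∏_{p ∣ F} (p+1)/(p+2), where the sum is over the positive divisors f of F and the products are over the primes dividing f (respectively F). (Via the class number formula for imaginary quadratic orders, this says that the ratio h(Δ)/H(Δ) of the class number of the order of discriminant Δ = F²Δ₀ to the Kronecker class number H(Δ) = ∑_{f ∣ F} h(f²Δ₀) is at most ∏_{p ∣ F} (p+1)/(p+2).) -/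
open Finset Nat ArithmeticFunction
open scoped ArithmeticFunction.zeta

private lemma key' (q E S c : ℚ) (hq : 2 ≤ q) (hc1 : q * c ≤ q + 1) (hc2 : q - 1 ≤ q * c)
    (hE : q ≤ E) (hS : (q - 1) * S = q * E - q) :
    E * c * (q + 2) ≤ (q + 1) * (1 + c * S) := by
  have hid : (q-1)*q*((q+1)*(1+c*S) - E*c*(q+2))
      = q*(q-1)*((q+1) - q*c) + 2*(q*c)*(E-q) := by
    linear_combination q*c*(q+1)*hS
  have h1 : 0 ≤ q*(q-1)*((q+1) - q*c) := by
    apply mul_nonneg (by nlinarith) (by linarith)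
  have h2 : 0 ≤ 2*(q*c)*(E-q) := by
    apply mul_nonneg (by linarith) (by linarith)
  nlinarith [hid, h1, h2, mul_pos (by linarith : (0:ℚ) < q - 1) (by linarith : (0:ℚ) < q)]

/-- auxiliary multiplicative arithmetic function -/
private noncomputable def gfun (χ : ℕ → ℚ) : ArithmeticFunction ℚ :=
  ⟨fun n => (n : ℚ) * ∏ p ∈ n.primeFactors, (1 - χ p / (p : ℚ)), by simp⟩

private lemma gfun_apply (χ : ℕ → ℚ) (n : ℕ) :
    gfun χ n = (n : ℚ) * ∏ p ∈ n.primeFactors, (1 - χ p / (p : ℚ)) := rfl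

private lemma gfun_mult (χ : ℕ → ℚ) : (gfun χ).IsMultiplicative := by
  rw [ArithmeticFunction.IsMultiplicative.iff_ne_zero]
  constructor
  · simp [gfun_apply]
  · intro m n hm hn hmn
    simp only [gfun_apply]
    rw [hmn.primeFactors_mul, Finset.prod_union hmn.disjoint_primeFactors, Nat.cast_mul]
    ring

/-- Let `F` be a positive integer and let `χ` assign to each prime `p`
dividing `F` a value in `{−1, 0, 1}`.  Then
`(F·∏_{p∣F}(1 − χ(p)/p)) / (∑_{f∣F} f·∏_{p∣f}(1 − χ(p)/p)) ≤ ∏_{p∣F} (p+1)/(p+2)`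
as rational numbers.  (Via the class number formula for imaginary quadratic orders, this is
the bound `h(Δ)/H(Δ) ≤ ∏_{p∣F} (p+1)/(p+2)` on the ratio of the class number of the order
of discriminant `Δ = F²Δ₀` to the Kronecker class number.) -/
theorem class_number_ratio_bound
    (F : ℕ) (hF : 0 < F)
    (χ : ℕ → ℚ)
    (hχ : ∀ p ∈ F.primeFactors, χ p = -1 ∨ χ p = 0 ∨ χ p = 1) :
    ((F : ℚ) * ∏ p ∈ F.primeFactors, (1 - χ p / (p : ℚ)))
        / (∑ f ∈ F.divisors, (f : ℚ) * ∏ p ∈ f.primeFactors, (1 - χ p / (p : ℚ)))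
      ≤ ∏ p ∈ F.primeFactors, (((p : ℚ) + 1) / ((p : ℚ) + 2)) := by
  -- rewrite the denominator as a product of local factors
  have hmul : ((↑ζ : ArithmeticFunction ℚ) * gfun χ).IsMultiplicative :=
    (ArithmeticFunction.isMultiplicative_zeta.natCast).mul (gfun_mult χ)
  have hden : (∑ f ∈ F.divisors, (f : ℚ) * ∏ p ∈ f.primeFactors, (1 - χ p / (p : ℚ)))
      = ∏ p ∈ F.primeFactors,
          ∑ k ∈ Finset.range (F.factorization p + 1), gfun χ (p ^ k) := by
    have h1 : (∑ f ∈ F.divisors, (f : ℚ) * ∏ p ∈ f.primeFactors, (1 - χ p / (p : ℚ)))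
        = ((↑ζ : ArithmeticFunction ℚ) * gfun χ) F := by
      rw [ArithmeticFunction.coe_zeta_mul_apply]
      exact Finset.sum_congr rfl fun f _ => (gfun_apply χ f).symm
    rw [h1, (ArithmeticFunction.IsMultiplicative.multiplicative_factorization _ hmul hF.ne')]
    rw [Nat.factorization, Finsupp.prod]
    refine Finset.prod_congr rfl fun p hp => ?_
    have hpp : p.Prime := Nat.prime_of_mem_primeFactors (by simpa using hp)
    rw [ArithmeticFunction.coe_zeta_mul_apply, Nat.sum_divisors_prime_pow hpp]
  -- rewrite the numerator as a product of local factors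
  have hnum : ((F : ℚ) * ∏ p ∈ F.primeFactors, (1 - χ p / (p : ℚ)))
      = ∏ p ∈ F.primeFactors,
          ((p : ℚ) ^ (F.factorization p) * (1 - χ p / (p : ℚ))) := by
    rw [Finset.prod_mul_distrib]
    congr 1
    conv_lhs => rw [← Nat.factorization_prod_pow_eq_self hF.ne']
    rw [Finsupp.prod, Nat.support_factorization]
    push_cast
    rfl
  rw [hnum, hden, ← Finset.prod_div_distrib]
  apply Finset.prod_le_prod
  · intro p hp
    have hpp : p.Prime := Nat.prime_of_mem_primeFactors hp
    have hq : (2:ℚ) ≤ p := by exact_mod_cast hpp.two_le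
    have ht : -1 ≤ χ p ∧ χ p ≤ 1 := by rcases hχ p hp with h | h | h <;> simp [h]
    have hc : 0 ≤ 1 - χ p / (p:ℚ) := by
      rw [sub_nonneg, div_le_one (by linarith)]; linarith [ht.2]
    apply div_nonneg (mul_nonneg (by positivity) hc)
    rw [Finset.sum_range_succ']
    have : ∀ i ∈ Finset.range (F.factorization p), (0:ℚ) ≤ gfun χ (p ^ (i+1)) := by
      intro i _
      rw [gfun_apply, Nat.primeFactors_prime_pow (Nat.succ_ne_zero i) hpp,
        Finset.prod_singleton]
      exact mul_nonneg (by positivity) hc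
    have h0 : gfun χ (p ^ 0) = 1 := by simp [gfun_apply]
    have := Finset.sum_nonneg this
    rw [h0]; linarith
  · intro p hp
    have hpp : p.Prime := Nat.prime_of_mem_primeFactors hp
    set q : ℚ := (p : ℚ) with hqdef
    set e : ℕ := F.factorization p with hedef
    have he : 1 ≤ e := (Nat.Prime.factorization_pos_of_dvd hpp hF.ne'
      (Nat.dvd_of_mem_primeFactors hp))
    have hq : (2:ℚ) ≤ q := by
      rw [hqdef]; exact_mod_cast hpp.two_le
    have ht : -1 ≤ χ p ∧ χ p ≤ 1 := by rcases hχ p hp with h | h | h <;> simp [h]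
    set c : ℚ := 1 - χ p / q with hcdef
    have hq0 : (0:ℚ) < q := by linarith
    have hqc : q * c = q - χ p := by rw [hcdef, mul_sub, mul_one, mul_div_assoc', mul_comm q (χ p), mul_div_assoc, div_self hq0.ne', mul_one]
    have hc0 : 0 ≤ c := by nlinarith [ht.2]
    -- the local sum
    set S : ℚ := ∑ i ∈ Finset.range e, q ^ (i + 1) with hSdef
    have hsum : (∑ k ∈ Finset.range (e + 1), gfun χ (p ^ k)) = 1 + c * S := by
      rw [Finset.sum_range_succ']
      have h0 : gfun χ (p ^ 0) = 1 := by simp [gfun_apply]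
      rw [h0, hSdef, Finset.mul_sum]
      rw [add_comm]
      congr 1
      refine Finset.sum_congr rfl fun i _ => ?_
      rw [gfun_apply, Nat.primeFactors_prime_pow (Nat.succ_ne_zero i) hpp,
        Finset.prod_singleton, Nat.cast_pow]
      ring
    have hS0 : 0 ≤ S := Finset.sum_nonneg fun i _ => by positivity
    have hgeo : (q - 1) * S = q * q ^ e - q := by
      have h := geom_sum_mul q e
      have h2 : S = (∑ i ∈ Finset.range e, q ^ i) * q := by
        rw [hSdef, Finset.sum_mul]
        exact Finset.sum_congr rfl fun i _ => by ring
      rw [h2]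
      linear_combination q * h
    have hE : q ≤ q ^ e := by
      calc q = q ^ 1 := (pow_one q).symm
        _ ≤ q ^ e := pow_le_pow_right₀ (by linarith) he
    have hkey := key' q (q ^ e) S c hq (by rw [hqc]; linarith [ht.1])
      (by rw [hqc]; linarith [ht.2]) hE hgeo
    rw [hsum]
    have hden0 : (0:ℚ) < 1 + c * S := by positivity
    rw [div_le_div_iff₀ hden0 (by linarith)]
    linarith
end
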